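/- arXiv:1606.02541 — 10 statements merged into one kernel-verified Lean document; each statement's English description precedes it below -/
import Mathlib

section
/- Let C be a maximum rank distance (MRD) code in the space of m×n matrices over F_q with minimum distance d, where m ≤ n. Then for every nonzero row vector x in F_q^m and every row vector y in F_q^n, there exists at least one matrix M in C such that xM = y. -/
/-- A nonzero matrix over a field has positive rank. -/
lemma rank_pos_of_ne_zero {m n : ℕ} {F : Type*} [Field F]
    {Z : Matrix (Fin m) (Fin n) F} (hZ : Z ≠ 0) : 0 < Z.rank := by
  rw [pos_iff_ne_zero]
  intro h0
  obtain ⟨i, j, hij⟩ : ∃ i j, Z i j ≠ 0 := by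
    by_contra h
    push_neg at h
    exact hZ (by ext i j; simp [h i j])
  have hmem : Z.mulVec (Pi.single j 1) ∈ LinearMap.range Z.mulVecLin :=
    ⟨Pi.single j 1, rfl⟩
  have hne : Z.mulVec (Pi.single j 1) ≠ 0 := by
    intro h
    apply hij
    have := congrFun h i
    simpa [Matrix.mulVec, dotProduct, Pi.single_apply] using this
  have hbot : LinearMap.range Z.mulVecLin ≠ ⊥ := by
    intro hb
    rw [hb] at hmem
    exact hne (by simpa using hmem)
  rw [Matrix.rank] at h0
  exact hbot (Submodule.finrank_eq_zero.mp h0)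

/-- Let `C` be an MRD code in `F_q^{m×n}` (`m ≤ n`) with minimum distance `d`.
Then for every nonzero row vector `x ∈ F_q^m` and every `y ∈ F_q^n` there is `M ∈ C`
with `x M = y`. -/
theorem mrd_covering {q m n d : ℕ} {F : Type*} [Field F] [Fintype F]
    (hq : Fintype.card F = q)
    (C : Set (Matrix (Fin m) (Fin n) F)) (hmn : m ≤ n)
    (hdist : ∀ A ∈ C, ∀ B ∈ C, A ≠ B → d ≤ (A - B).rank)
    (hattain : ∃ A ∈ C, ∃ B ∈ C, A ≠ B ∧ (A - B).rank = d)
    (hMRD : C.ncard = q ^ (n * (m - d + 1))) :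
    ∀ x : Fin m → F, x ≠ 0 → ∀ y : Fin n → F, ∃ M ∈ C, Matrix.vecMul x M = y := by
  classical
  intro x hx y
  -- basic facts about d
  obtain ⟨A₀, hA₀, B₀, hB₀, hAB₀, hrank₀⟩ := hattain
  have hd1 : 1 ≤ d := by
    rw [← hrank₀]
    exact rank_pos_of_ne_zero (sub_ne_zero_of_ne hAB₀)
  have hdm : d ≤ m := by
    rw [← hrank₀]
    simpa using (A₀ - B₀).rank_le_card_height
  set k : ℕ := m - d + 1 with hk
  have hkm : k ≤ m := by omega
  have hm : 0 < m := by omega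
  -- construct a k × m matrix U with linearly independent rows and first row x
  have hxli : LinearIndepOn F id ({x} : Set (Fin m → F)) :=
    (linearIndepOn_singleton_iff F).mpr hx
  let T : Set (Fin m → F) := hxli.extend (Set.subset_univ _)
  let b : Module.Basis T F (Fin m → F) := Module.Basis.extend hxli
  have hxT : x ∈ T := hxli.subset_extend _ rfl
  haveI : Fintype T := FiniteDimensional.fintypeBasisIndex b
  have hcardT : Fintype.card (Fin m) = Fintype.card T := by
    rw [Fintype.card_fin]
    have := Module.finrank_eq_card_basis b
    rw [Module.finrank_fintype_fun_eq_card, Fintype.card_fin] at this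
    exact this
  let e : Fin m ≃ T := Fintype.equivOfCardEq hcardT
  let z : Fin m := ⟨0, hm⟩
  let t : Fin m := e.symm ⟨x, hxT⟩
  let g : Fin k → T := fun i => e (Equiv.swap z t (Fin.castLE hkm i))
  have hg : Function.Injective g :=
    e.injective.comp ((Equiv.swap z t).injective.comp (Fin.castLE_injective hkm))
  let U : Matrix (Fin k) (Fin m) F := Matrix.of fun i => (b (g i) : Fin m → F)
  have hUli : LinearIndependent F U := b.linearIndependent.comp g hg
  have hUrank : U.rank = k := by
    rw [hUli.rank_matrix, Fintype.card_fin]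
  have hU0 : U ⟨0, by omega⟩ = x := by
    show (b (g ⟨0, by omega⟩) : Fin m → F) = x
    have : g ⟨0, by omega⟩ = ⟨x, hxT⟩ := by
      show e (Equiv.swap z t (Fin.castLE hkm ⟨0, by omega⟩)) = ⟨x, hxT⟩
      have hz : Fin.castLE hkm ⟨0, by omega⟩ = z := rfl
      rw [hz, Equiv.swap_apply_left]
      exact e.apply_symm_apply _
    rw [this]
    exact Module.Basis.extend_apply_self hxli ⟨x, hxT⟩
  -- the map M ↦ U * M is injective on C
  let φ : C → Matrix (Fin k) (Fin n) F := fun M => U * (M : Matrix (Fin m) (Fin n) F)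
  have hφinj : Function.Injective φ := by
    rintro ⟨A, hA⟩ ⟨B, hB⟩ hAB
    ext1
    by_contra hne
    have hzero : U * (A - B) = 0 := by
      rw [Matrix.mul_sub, sub_eq_zero]
      exact hAB
    have hle := Matrix.rank_add_rank_le_card_of_mul_eq_zero hzero
    rw [hUrank, Fintype.card_fin] at hle
    have := hdist A hA B hB hne
    omega
  -- cardinality argument: φ is bijective
  haveI : Fintype C := Fintype.ofFinite _
  have hcardC : Fintype.card C = q ^ (n * k) := by
    rw [← Nat.card_eq_fintype_card, Nat.card_coe_set_eq, hMRD]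
  have hcardMat : Fintype.card (Matrix (Fin k) (Fin n) F) = q ^ (n * k) := by
    have : Fintype.card (Matrix (Fin k) (Fin n) F)
        = Fintype.card F ^ (k * n) := by
      rw [Fintype.card_eq_nat_card]
      show Nat.card (Fin k → Fin n → F) = _
      rw [Nat.card_fun, Nat.card_fun, Nat.card_eq_fintype_card (α := F), Nat.card_fin, Nat.card_fin, ← pow_mul, Nat.mul_comm]
    rw [this, hq, Nat.mul_comm k n]
  have hφbij : Function.Bijective φ :=
    (Fintype.bijective_iff_injective_and_card φ).mpr ⟨hφinj, by rw [hcardC, hcardMat]⟩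
  -- target matrix with first row y
  let Y : Matrix (Fin k) (Fin n) F := Matrix.of fun i j => if i = ⟨0, by omega⟩ then y j else 0
  obtain ⟨⟨M, hM⟩, hMY⟩ := hφbij.surjective Y
  refine ⟨M, hM, ?_⟩
  funext j
  have h1 : (U * M) ⟨0, by omega⟩ j = Y ⟨0, by omega⟩ j :=
    congrFun (congrFun hMY ⟨0, by omega⟩) j
  have h2 : (U * M) ⟨0, by omega⟩ j = Matrix.vecMul x M j := by
    rw [Matrix.mul_apply, Matrix.vecMul, dotProduct, hU0]
  rw [← h2, h1]
  simp [Y]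
end

section
/- Let C be an MRD code in F_q^{m×n} containing the zero matrix, such that gcd(m,n) = 1 or the minimum distance d < min{m,n}. Then the kernel of the translation structure T(C) is isomorphic to F_q. -/
set_option linter.unusedSectionVars false

open Matrix LinearMap Submodule Module

namespace MRDAux

variable {K : Type*} [Field K] [Finite K]

lemma finite_findim {V : Type*} [AddCommGroup V] [Module K V] [Finite V] :
    FiniteDimensional K V := Module.Finite.of_finite

lemma rank_le_of_le_ker {V W : Type*} [AddCommGroup V] [Module K V] [AddCommGroup W] [Module K W]
    [FiniteDimensional K V] (δ : V →ₗ[K] W) (Y : Submodule K V) (h : Y ≤ LinearMap.ker δ) :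
    finrank K (LinearMap.range δ) + finrank K Y ≤ finrank K V := by
  have h1 := LinearMap.finrank_range_add_finrank_ker δ
  have h2 : finrank K Y ≤ finrank K (LinearMap.ker δ) := Submodule.finrank_mono h
  omega

lemma singleton_bound {V W : Type*} [AddCommGroup V] [Module K V] [AddCommGroup W] [Module K W]
    [Finite V] [Finite W]
    (S : Set (V →ₗ[K] W)) (Z : Submodule K V) (e : ℕ) (he : 1 ≤ e)
    (hS : ∀ φ ∈ S, ∀ ψ ∈ S, φ ≠ ψ →
      Z ≤ LinearMap.ker (φ - ψ) ∧ e ≤ finrank K (LinearMap.range (φ - ψ))) :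
    S.ncard ≤ Nat.card K ^ ((finrank K V - finrank K Z - (e - 1)) * finrank K W) := by
  classical
  haveI : FiniteDimensional K V := finite_findim
  haveI : FiniteDimensional K W := finite_findim
  haveI : Finite (V →ₗ[K] W) :=
    Finite.of_injective (fun f => (f : V → W)) DFunLike.coe_injective
  have hKpos : 0 < Nat.card K := Nat.card_pos
  have hzle : finrank K Z ≤ finrank K V := Submodule.finrank_le Z
  by_cases hcase : finrank K V - finrank K Z < e
  · have hsub : S.Subsingleton := by
      intro φ hφ ψ hψ
      by_contra hne
      obtain ⟨hker, hrk⟩ := hS φ hφ ψ hψ hne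
      have := rank_le_of_le_ker (φ - ψ) Z hker
      omega
    have h1 : S.ncard ≤ 1 := (Set.ncard_le_one (Set.toFinite S)).mpr hsub
    exact h1.trans (Nat.one_le_pow _ _ hKpos)
  · push_neg at hcase
    set k := finrank K V - finrank K Z - (e - 1) with hk
    obtain ⟨U', hcompl⟩ := Submodule.exists_isCompl Z
    have hU' : finrank K Z + finrank K U' = finrank K V :=
      Submodule.finrank_add_eq_of_isCompl hcompl
    have hkU' : k ≤ finrank K U' := by omega
    let b := Module.finBasis K U'
    let fam : Fin k → V := fun i => (b (Fin.castLE hkU' i) : V)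
    have hli : LinearIndependent K fam := by
      have h1 : LinearIndependent K fun i : Fin k => b (Fin.castLE hkU' i) :=
        b.linearIndependent.comp _ (Fin.castLE_injective _)
      exact h1.map' U'.subtype (Submodule.ker_subtype U')
    set U : Submodule K V := span K (Set.range fam) with hU
    have hUle : U ≤ U' := by
      rw [hU, Submodule.span_le]; rintro _ ⟨i, rfl⟩; exact (b _).2
    have hUrank : finrank K U = k := by
      rw [hU, finrank_span_eq_card hli, Fintype.card_fin]
    have hdisj : U ⊓ Z = ⊥ := le_bot_iff.mp (by
      calc U ⊓ Z ≤ U' ⊓ Z := inf_le_inf_right Z hUle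
      _ = ⊥ := by rw [inf_comm]; exact hcompl.disjoint.eq_bot)
    have hsup : finrank K ↥(U ⊔ Z) = k + finrank K Z := by
      have h2 := Submodule.finrank_sup_add_finrank_inf_eq U Z
      rw [hdisj] at h2
      simp only [finrank_bot] at h2
      omega
    have hinj : Set.InjOn (fun φ : V →ₗ[K] W => φ.domRestrict U) S := by
      intro φ hφ ψ hψ hres
      by_contra hne
      obtain ⟨hker, hrk⟩ := hS φ hφ ψ hψ hne
      have hUker : U ≤ LinearMap.ker (φ - ψ) := by
        intro u hu
        have h3 : φ.domRestrict U ⟨u, hu⟩ = ψ.domRestrict U ⟨u, hu⟩ := by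
          simp only at hres; rw [hres]
        simp only [LinearMap.domRestrict_apply] at h3
        simp [LinearMap.mem_ker, LinearMap.sub_apply, h3]
      have hY : U ⊔ Z ≤ LinearMap.ker (φ - ψ) := sup_le hUker hker
      have h4 := rank_le_of_le_ker (φ - ψ) (U ⊔ Z) hY
      rw [hsup] at h4
      omega
    haveI : Finite (U →ₗ[K] W) :=
      Finite.of_injective (fun f => (f : U → W)) DFunLike.coe_injective
    have hcard : S.ncard ≤ Nat.card (U →ₗ[K] W) := by
      rw [← Nat.card_coe_set_eq]
      exact Nat.card_le_card_of_injective
        (fun x : S => (x : V →ₗ[K] W).domRestrict U)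
        (fun a b hab => Subtype.ext (hinj a.2 b.2 hab))
    have hcount : Nat.card (U →ₗ[K] W) = Nat.card K ^ (k * finrank K W) := by
      haveI := Fintype.ofFinite K
      have e1 := (LinearMap.toMatrix (Module.finBasis K U) (Module.finBasis K W)).toEquiv
      rw [Nat.card_congr e1]
      have : Nat.card (Matrix (Fin (finrank K W)) (Fin (finrank K U)) K)
          = Nat.card K ^ (finrank K U * finrank K W) := by
        show Nat.card (Fin (finrank K W) → Fin (finrank K U) → K) = _
        rw [Nat.card_fun, Nat.card_fun]
        simp [Nat.card_eq_fintype_card, ← pow_mul]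
      rw [this, hUrank]
    calc S.ncard ≤ Nat.card (U →ₗ[K] W) := hcard
    _ = Nat.card K ^ (k * finrank K W) := hcount

lemma natCard_module (K V : Type*) [DivisionRing K] [Finite K] [AddCommGroup V] [Module K V]
    [Finite V] : Nat.card V = Nat.card K ^ finrank K V := by
  haveI := Fintype.ofFinite K
  haveI := Fintype.ofFinite V
  rw [Nat.card_eq_fintype_card, Nat.card_eq_fintype_card (α := K),
    card_eq_pow_finrank (K := K) (V := V)]

end MRDAux
namespace MRDAux2
open MRDAux

variable {F : Type*} [Field F] [Fintype F] {q m n d : ℕ}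

lemma vml_sub (A B : Matrix (Fin m) (Fin n) F) :
    A.vecMulLinear - B.vecMulLinear = (A - B).vecMulLinear := by
  refine LinearMap.ext fun x => ?_
  simp only [LinearMap.sub_apply, Matrix.vecMulLinear_apply, Matrix.vecMul_sub]

lemma finrank_range_vml (A : Matrix (Fin m) (Fin n) F) :
    finrank F (LinearMap.range A.vecMulLinear) = A.rank := by
  rw [← Matrix.mulVecLin_transpose]
  exact Matrix.rank_transpose A

lemma matrix_eq_of_vecMul_eq {A B : Matrix (Fin m) (Fin n) F}
    (h : ∀ x, x ᵥ* A = x ᵥ* B) : A = B := by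
  ext i j
  have h1 := congrFun (h (Pi.single i 1)) j
  simpa [Matrix.single_one_vecMul] using h1

lemma code_fiber_bound (C : Set (Matrix (Fin m) (Fin n) F))
    (hdist : ∀ A ∈ C, ∀ B ∈ C, A ≠ B → d ≤ (A - B).rank) (hd : 1 ≤ d)
    (x : Fin m → F) (hx : x ≠ 0) (y : Fin n → F) :
    {M ∈ C | x ᵥ* M = y}.ncard ≤ Fintype.card F ^ ((m - d) * n) := by
  classical
  set T := {M ∈ C | x ᵥ* M = y} with hT
  set S : Set ((Fin m → F) →ₗ[F] (Fin n → F)) := Matrix.vecMulLinear '' T with hS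
  have hinj : Set.InjOn Matrix.vecMulLinear T := by
    intro A _ B _ h
    exact matrix_eq_of_vecMul_eq (fun v => by
      rw [← Matrix.vecMulLinear_apply, h, Matrix.vecMulLinear_apply])
  have hncard : S.ncard = T.ncard := Set.ncard_image_of_injOn hinj
  have hb := singleton_bound (K := F) S (span F {x}) d hd ?_
  · rw [hncard] at hb
    rw [finrank_span_singleton hx] at hb
    rw [Module.finrank_fin_fun, Module.finrank_fin_fun, Nat.card_eq_fintype_card] at hb
    have harith : (m - 1 - (d - 1)) * n = (m - d) * n := by
      congr 1; omega
    rwa [harith] at hb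
  · rintro φ ⟨A, hA, rfl⟩ ψ ⟨B, hB, rfl⟩ hne
    have hAB : A ≠ B := fun h => hne (by rw [h])
    rw [vml_sub]
    constructor
    · rw [Submodule.span_le, Set.singleton_subset_iff]
      simp only [SetLike.mem_coe, LinearMap.mem_ker, Matrix.vecMulLinear_apply]
      rw [Matrix.vecMul_sub, hA.2, hB.2, sub_self]
    · rw [finrank_range_vml]
      exact hdist A hA.1 B hB.1 hAB

lemma code_left_nondeg (hq : Fintype.card F = q) (hmn : m ≤ n)
    (C : Set (Matrix (Fin m) (Fin n) F))
    (hdist : ∀ A ∈ C, ∀ B ∈ C, A ≠ B → d ≤ (A - B).rank)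
    (hcard : C.ncard = q ^ (n * (m - d + 1)))
    (hd : 1 ≤ d) (hdm : d ≤ m) (hn : 1 ≤ n)
    (v : Fin m → F) (hv : ∀ M ∈ C, v ᵥ* M = 0) : v = 0 := by
  by_contra hv0
  have hsub : C ⊆ {M ∈ C | v ᵥ* M = 0} := fun M hM => ⟨hM, hv M hM⟩
  have h1 : C.ncard ≤ {M ∈ C | v ᵥ* M = 0}.ncard :=
    Set.ncard_le_ncard hsub (Set.toFinite _)
  have h2 := code_fiber_bound C hdist hd v hv0 0
  rw [hq] at h2
  rw [hcard] at h1
  have hq2 : 2 ≤ q := hq ▸ Fintype.one_lt_card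
  have h3 := (Nat.pow_le_pow_iff_right hq2).mp (le_trans h1 h2)
  have e1 : n * (m - d + 1) = (m - d) * n + n := by ring
  omega

lemma code_vecMul_surj (hq : Fintype.card F = q) (hmn : m ≤ n)
    (C : Set (Matrix (Fin m) (Fin n) F))
    (hdist : ∀ A ∈ C, ∀ B ∈ C, A ≠ B → d ≤ (A - B).rank)
    (hcard : C.ncard = q ^ (n * (m - d + 1)))
    (hd : 1 ≤ d) (hdm : d ≤ m) (hn : 1 ≤ n)
    (x : Fin m → F) (hx : x ≠ 0) (y : Fin n → F) :
    ∃ M ∈ C, x ᵥ* M = y := by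
  classical
  by_contra hcon
  push_neg at hcon
  have hCfin : C.Finite := Set.toFinite C
  set CF := hCfin.toFinset with hCF
  have hq2 : 2 ≤ q := hq ▸ Fintype.one_lt_card
  set B := Fintype.card F ^ ((m - d) * n) with hB
  have hfib : ∀ z ∈ CF.image (fun M => x ᵥ* M),
      (CF.filter (fun M => x ᵥ* M = z)).card ≤ B := by
    intro z _
    have h2 := code_fiber_bound C hdist hd x hx z
    have : (CF.filter (fun M => x ᵥ* M = z)).card = {M ∈ C | x ᵥ* M = z}.ncard := by
      rw [Set.ncard_eq_toFinset_card _ (Set.toFinite _)]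
      congr 1
      ext M
      simp only [hCF, Finset.mem_filter, Set.Finite.mem_toFinset, Set.mem_setOf_eq]
    rw [this]
    exact h2
  have h1 : CF.card ≤ B * (CF.image (fun M => x ᵥ* M)).card :=
    Finset.card_le_mul_card_image CF B hfib
  have himg : CF.image (fun M => x ᵥ* M) ⊆ Finset.univ.erase y := by
    intro z hz
    simp only [Finset.mem_image] at hz
    obtain ⟨M, hM, rfl⟩ := hz
    exact Finset.mem_erase.mpr
      ⟨fun h => hcon M (hCfin.mem_toFinset.mp hM) h, Finset.mem_univ _⟩
  have himgcard : (CF.image (fun M => x ᵥ* M)).card ≤ q ^ n - 1 := by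
    have := Finset.card_le_card himg
    rwa [Finset.card_erase_of_mem (Finset.mem_univ _), Finset.card_univ,
      Fintype.card_fun, Fintype.card_fin, hq] at this
  have hCFcard : CF.card = q ^ (n * (m - d + 1)) := by
    rw [hCF, ← Set.ncard_eq_toFinset_card _ hCfin, hcard]
  have hBq : B = q ^ ((m - d) * n) := by rw [hB, hq]
  -- combine: q^(n*(m-d+1)) ≤ q^((m-d)*n) * (q^n - 1) < q^((m-d)*n + n) = q^(n*(m-d+1))
  have hchain : q ^ (n * (m - d + 1)) ≤ q ^ ((m - d) * n) * (q ^ n - 1) := by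
    calc q ^ (n * (m - d + 1)) = CF.card := hCFcard.symm
    _ ≤ B * (CF.image (fun M => x ᵥ* M)).card := h1
    _ ≤ B * (q ^ n - 1) := Nat.mul_le_mul_left _ himgcard
    _ = q ^ ((m - d) * n) * (q ^ n - 1) := by rw [hBq]
  have hsplit : q ^ (n * (m - d + 1)) = q ^ ((m - d) * n) * q ^ n := by
    rw [← pow_add]; congr 1; ring
  rw [hsplit] at hchain
  have hpos : 0 < q ^ ((m - d) * n) := Nat.pow_pos (by omega)
  have h4 := Nat.le_of_mul_le_mul_left hchain hpos
  have h5 : 0 < q ^ n := Nat.pow_pos (by omega)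
  omega

end MRDAux2

namespace MRDAux3
open MRDAux MRDAux2

set_option maxHeartbeats 4000000
set_option synthInstance.maxHeartbeats 400000

variable {F : Type*} [Field F] [Fintype F] {q m n d : ℕ}

lemma core (hq : Fintype.card F = q) (hmn : m ≤ n)
    (C : Set (Matrix (Fin m) (Fin n) F))
    (h0 : (0 : Matrix (Fin m) (Fin n) F) ∈ C)
    (hdist : ∀ A ∈ C, ∀ B ∈ C, A ≠ B → d ≤ (A - B).rank)
    (hattain : ∃ A ∈ C, ∃ B ∈ C, A ≠ B ∧ (A - B).rank = d)
    (hcard : C.ncard = q ^ (n * (m - d + 1)))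
    (hcond : Nat.gcd m n = 1 ∨ d < m)
    (g : AddMonoid.End (Fin m → F)) (f : AddMonoid.End (Fin n → F))
    (hker : ∀ M ∈ C, ∀ x, f (x ᵥ* M) = (g x) ᵥ* M) :
    ∃ a : F, (∀ x, g x = a • x) ∧ (∀ y, f y = a • y) := by
  classical
  obtain ⟨A₀, hA₀, B₀, hB₀, hAB₀, hrk₀⟩ := hattain
  have hq2 : 2 ≤ q := hq ▸ Fintype.one_lt_card
  have hm1 : 1 ≤ m := by
    by_contra hm
    push_neg at hm
    apply hAB₀
    ext i j
    exact absurd i.2 (by omega)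
  have hn1 : 1 ≤ n := le_trans hm1 hmn
  have hd1 : 1 ≤ d := by
    rcases Nat.eq_zero_or_pos d with h | h
    · exfalso
      apply hAB₀
      have h1 : finrank F (LinearMap.range (A₀ - B₀).vecMulLinear) = 0 := by
        rw [finrank_range_vml, hrk₀, h]
      rw [Submodule.finrank_eq_zero] at h1
      have h2 : ∀ x, x ᵥ* (A₀ - B₀) = 0 := by
        intro x
        have h3 : (A₀ - B₀).vecMulLinear x ∈ LinearMap.range (A₀ - B₀).vecMulLinear :=
          LinearMap.mem_range_self _ x
        rw [h1] at h3
        simpa [Matrix.vecMul_sub] using h3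
      apply matrix_eq_of_vecMul_eq
      intro x
      have h3 := h2 x
      rw [Matrix.vecMul_sub] at h3
      exact sub_eq_zero.mp h3
    · exact h
  have hdm : d ≤ m := by
    rw [← hrk₀]
    have h1 := Matrix.rank_le_card_height (A₀ - B₀)
    rwa [Fintype.card_fin] at h1
  have hx0 : (Pi.single (⟨0, hm1⟩ : Fin m) (1:F) : Fin m → F) ≠ 0 := by
    intro h
    have h1 := congrFun h ⟨0, hm1⟩
    rw [Pi.single_eq_same] at h1
    exact one_ne_zero h1
  have hsurj : ∀ (x : Fin m → F), x ≠ 0 → ∀ y, ∃ M ∈ C, x ᵥ* M = y :=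
    fun x hx y => code_vecMul_surj hq hmn C hdist hcard hd1 hdm hn1 x hx y
  have hnondeg : ∀ v, (∀ M ∈ C, v ᵥ* M = 0) → v = 0 :=
    fun v hv => code_left_nondeg hq hmn C hdist hcard hd1 hdm hn1 v hv
  -- the kernel ring
  let Kset : Subring (AddMonoid.End (Fin m → F) × AddMonoid.End (Fin n → F)) :=
    { carrier := {p | ∀ M ∈ C, ∀ x, p.2 (x ᵥ* M) = (p.1 x) ᵥ* M}
      zero_mem' := by
        intro M hM x
        show (0 : AddMonoid.End _) _ = ((0 : AddMonoid.End _) x) ᵥ* M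
        simp [Matrix.zero_vecMul]
      one_mem' := by
        intro M hM x
        rfl
      add_mem' := by
        intro p p' hp hp' M hM x
        show (p.2 + p'.2) _ = ((p.1 + p'.1) x) ᵥ* M
        show p.2 (x ᵥ* M) + p'.2 (x ᵥ* M) = (p.1 x + p'.1 x) ᵥ* M
        rw [hp M hM x, hp' M hM x,
          Matrix.add_vecMul]
      neg_mem' := by
        intro p hp M hM x
        show (-p.2) _ = ((-p.1) x) ᵥ* M
        show -(p.2 (x ᵥ* M)) = (-(p.1 x)) ᵥ* M
        rw [hp M hM x, Matrix.neg_vecMul]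
      mul_mem' := by
        intro p p' hp hp' M hM x
        show p.2 (p'.2 (x ᵥ* M)) = (p.1 (p'.1 x)) ᵥ* M
        rw [hp' M hM x, hp M hM (p'.1 x)] }
  haveI : Finite (AddMonoid.End (Fin m → F)) :=
    Finite.of_injective (fun φ => (φ : (Fin m → F) → (Fin m → F))) DFunLike.coe_injective
  haveI : Finite (AddMonoid.End (Fin n → F)) :=
    Finite.of_injective (fun φ => (φ : (Fin n → F) → (Fin n → F))) DFunLike.coe_injective
  haveI : Finite ↥Kset := Subtype.finite
  -- zero divisor lemmas
  have hD2 : ∀ p : AddMonoid.End (Fin m → F) × AddMonoid.End (Fin n → F),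
      p ∈ Kset → p.2 = 0 → p = 0 := by
    intro p hp h2
    have hg1 : p.1 = 0 := by
      refine DFunLike.ext _ _ fun x => ?_
      show p.1 x = 0
      apply hnondeg
      intro M hM
      have h3 := hp M hM x
      rw [h2] at h3
      exact ((AddMonoidHom.zero_apply _).symm.trans h3).symm
    exact Prod.ext hg1 h2
  have hD1 : ∀ p : AddMonoid.End (Fin m → F) × AddMonoid.End (Fin n → F),
      p ∈ Kset → p.1 = 0 → p = 0 := by
    intro p hp h1
    have hf : p.2 = 0 := by
      refine DFunLike.ext _ _ fun y => ?_
      obtain ⟨M, hM, hMy⟩ := hsurj _ hx0 y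
      have h3 := hp M hM (Pi.single ⟨0, hm1⟩ 1)
      rw [hMy, h1] at h3
      rw [h3]
      show ((0 : AddMonoid.End _) _) ᵥ* M = (0 : AddMonoid.End _) y
      rw [AddMonoid.End.zero_apply, Matrix.zero_vecMul, AddMonoid.End.zero_apply]
    exact Prod.ext h1 hf
  have hD3 : ∀ p : AddMonoid.End (Fin m → F) × AddMonoid.End (Fin n → F),
      p ∈ Kset → p ≠ 0 → ∀ x, p.1 x = 0 → x = 0 := by
    intro p hp hne x hx
    by_contra hx'
    apply hne
    apply hD2 p hp
    refine DFunLike.ext _ _ fun y => ?_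
    obtain ⟨M, hM, hMy⟩ := hsurj x hx' y
    have h3 := hp M hM x
    rw [hMy, hx, Matrix.zero_vecMul] at h3
    rw [h3, AddMonoid.End.zero_apply]
  haveI hnontriv : Nontrivial ↥Kset := by
    refine ⟨⟨1, 0, fun h => ?_⟩⟩
    have h1 : (1 : AddMonoid.End (Fin m → F) × AddMonoid.End (Fin n → F)) = 0 :=
      congrArg Subtype.val h
    have h2 : (1 : AddMonoid.End (Fin m → F)) = 0 := congrArg Prod.fst h1
    have h3 : (Pi.single (⟨0, hm1⟩ : Fin m) (1:F) : Fin m → F) = 0 := by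
      have h4 := DFunLike.congr_fun h2 (Pi.single (⟨0, hm1⟩ : Fin m) (1:F))
      rwa [AddMonoid.End.one_apply, AddMonoid.End.zero_apply] at h4
    exact hx0 h3
  haveI : NoZeroDivisors ↥Kset := by
    refine ⟨fun {a b} hab => ?_⟩
    by_cases ha : a = 0
    · exact Or.inl ha
    · right
      have hane : (a : AddMonoid.End (Fin m → F) × AddMonoid.End (Fin n → F)) ≠ 0 :=
        fun h => ha (Subtype.ext h)
      have hb1 : (b : AddMonoid.End (Fin m → F) × AddMonoid.End (Fin n → F)).1 = 0 := by
        refine DFunLike.ext _ _ fun x => ?_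
        rw [AddMonoid.End.zero_apply]
        apply hD3 _ a.2 hane
        have h5 : ((a * b : ↥Kset) : AddMonoid.End (Fin m → F) × AddMonoid.End (Fin n → F)).1 x
            = ((0 : ↥Kset) : AddMonoid.End (Fin m → F) × AddMonoid.End (Fin n → F)).1 x := by
          rw [hab]
        exact h5
      exact Subtype.ext (hD1 _ b.2 hb1)
  haveI : IsDomain ↥Kset := NoZeroDivisors.to_isDomain _
  letI fieldK : Field ↥Kset := (Finite.isDomain_to_isField ↥Kset).toField
  -- scalar embedding
  have hsm_mem : ∀ a : F,
      ((AddMonoidHom.mk ⟨fun v => a • v, smul_zero a⟩ (smul_add a) : AddMonoid.End (Fin m → F)),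
       (AddMonoidHom.mk ⟨fun v => a • v, smul_zero a⟩ (smul_add a) : AddMonoid.End (Fin n → F))) ∈ Kset := by
    intro a M hM x
    show a • (x ᵥ* M) = (a • x) ᵥ* M
    rw [Matrix.smul_vecMul]
  let φ : F →+* ↥Kset :=
    { toFun := fun a => ⟨_, hsm_mem a⟩
      map_one' := by
        apply Subtype.ext
        refine Prod.ext ?_ ?_ <;>
          · refine DFunLike.ext _ _ fun v => ?_
            show (1:F) • v = _
            rw [one_smul]
            rfl
      map_mul' := by
        intro a b
        apply Subtype.ext
        refine Prod.ext ?_ ?_ <;>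
          · refine DFunLike.ext _ _ fun v => ?_
            show (a*b) • v = a • (b • v)
            rw [mul_smul]
      map_zero' := by
        apply Subtype.ext
        refine Prod.ext ?_ ?_ <;>
          · refine DFunLike.ext _ _ fun v => ?_
            show (0:F) • v = _
            rw [zero_smul]
            rfl
      map_add' := by
        intro a b
        apply Subtype.ext
        refine Prod.ext ?_ ?_ <;>
          · refine DFunLike.ext _ _ fun v => ?_
            show (a+b) • v = a • v + b • v
            rw [add_smul] }
  have hφinj : Function.Injective φ := φ.injective
  -- module structures
  letI modm : Module ↥Kset (Fin m → F) :=
    { smul := fun k x => (k : AddMonoid.End (Fin m → F) × AddMonoid.End (Fin n → F)).1 x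
      one_smul := fun x => rfl
      mul_smul := fun k k' x => rfl
      smul_zero := fun k => map_zero _
      smul_add := fun k x y => map_add _ x y
      add_smul := fun k k' x => rfl
      zero_smul := fun x => rfl }
  letI modn : Module ↥Kset (Fin n → F) :=
    { smul := fun k y => (k : AddMonoid.End (Fin m → F) × AddMonoid.End (Fin n → F)).2 y
      one_smul := fun y => rfl
      mul_smul := fun k k' y => rfl
      smul_zero := fun k => map_zero _
      smul_add := fun k x y => map_add _ x y
      add_smul := fun k k' y => rfl
      zero_smul := fun y => rfl }
  letI modF : Module F ↥Kset := Module.compHom ↥Kset φ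
  haveI : Module.Finite F ↥Kset := Module.Finite.of_finite
  haveI : Module.Finite ↥Kset (Fin m → F) := Module.Finite.of_finite
  haveI : Module.Finite ↥Kset (Fin n → F) := Module.Finite.of_finite
  haveI fintypeK : Fintype ↥Kset := Fintype.ofFinite ↥Kset
  set r := finrank F ↥Kset with hr
  set m₁ := finrank ↥Kset (Fin m → F) with hm₁
  set n₁ := finrank ↥Kset (Fin n → F) with hn₁
  have hrpos : 0 < r := Module.finrank_pos
  have hcardK : Nat.card ↥Kset = q ^ r := by
    rw [natCard_module F ↥Kset, Nat.card_eq_fintype_card (α := F), hq]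
  have hpowinj : ∀ a b : ℕ, q ^ a = q ^ b → a = b := by
    intro a b hab
    exact Nat.pow_right_injective hq2 hab
  have hcardm : m = r * m₁ := by
    apply hpowinj
    have h1 : Nat.card (Fin m → F) = q ^ m := by
      rw [Nat.card_fun, Nat.card_eq_fintype_card (α := F), hq,
        Nat.card_eq_fintype_card (α := Fin m), Fintype.card_fin]
    have h2 : Nat.card (Fin m → F) = (q ^ r) ^ m₁ := by
      rw [natCard_module ↥Kset (Fin m → F), hcardK]
    rw [h1, ← pow_mul] at h2
    exact h2
  have hcardn : n = r * n₁ := by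
    apply hpowinj
    have h1 : Nat.card (Fin n → F) = q ^ n := by
      rw [Nat.card_fun, Nat.card_eq_fintype_card (α := F), hq,
        Nat.card_eq_fintype_card (α := Fin n), Fintype.card_fin]
    have h2 : Nat.card (Fin n → F) = (q ^ r) ^ n₁ := by
      rw [natCard_module ↥Kset (Fin n → F), hcardK]
    rw [h1, ← pow_mul] at h2
    exact h2
  -- K-linearity of differences
  have hmem_apply : ∀ (k : ↥Kset) (M : Matrix (Fin m) (Fin n) F), M ∈ C → ∀ x,
      (k : AddMonoid.End (Fin m → F) × AddMonoid.End (Fin n → F)).2 (x ᵥ* M)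
        = ((k : AddMonoid.End (Fin m → F) × AddMonoid.End (Fin n → F)).1 x) ᵥ* M := by
    intro k M hM x
    exact k.2 M hM x
  have hKlinD : ∀ A ∈ C, ∀ B ∈ C, ∀ (k : ↥Kset) (x : Fin m → F),
      (k : AddMonoid.End (Fin m → F) × AddMonoid.End (Fin n → F)).2 (x ᵥ* (A - B))
        = ((k : AddMonoid.End (Fin m → F) × AddMonoid.End (Fin n → F)).1 x) ᵥ* (A - B) := by
    intro A hA B hB k x
    rw [Matrix.vecMul_sub, map_sub, hmem_apply k A hA x, hmem_apply k B hB x, Matrix.vecMul_sub]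
  let Psi : ∀ (D : Matrix (Fin m) (Fin n) F),
      (∀ (k : ↥Kset) x, (k : AddMonoid.End (Fin m → F) × AddMonoid.End (Fin n → F)).2 (x ᵥ* D)
        = ((k : AddMonoid.End (Fin m → F) × AddMonoid.End (Fin n → F)).1 x) ᵥ* D) →
      ((Fin m → F) →ₗ[↥Kset] (Fin n → F)) := fun D hD =>
    { toFun := fun x => x ᵥ* D
      map_add' := fun x y => Matrix.add_vecMul D x y
      map_smul' := fun k x => (hD k x).symm }
  have hrank_rel : ∀ (D : Matrix (Fin m) (Fin n) F) (hD : ∀ (k : ↥Kset) x,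
      (k : AddMonoid.End (Fin m → F) × AddMonoid.End (Fin n → F)).2 (x ᵥ* D)
        = ((k : AddMonoid.End (Fin m → F) × AddMonoid.End (Fin n → F)).1 x) ᵥ* D),
      D.rank = r * finrank ↥Kset (LinearMap.range (Psi D hD)) := by
    intro D hD
    apply hpowinj
    have h1 : Nat.card ↥(LinearMap.range (Psi D hD))
        = (q ^ r) ^ finrank ↥Kset (LinearMap.range (Psi D hD)) := by
      rw [natCard_module ↥Kset ↥(LinearMap.range (Psi D hD)), hcardK]
    have h2 : Nat.card ↥(LinearMap.range D.vecMulLinear)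
        = q ^ finrank F (LinearMap.range D.vecMulLinear) := by
      rw [natCard_module F ↥(LinearMap.range D.vecMulLinear),
        Nat.card_eq_fintype_card (α := F), hq]
    have h3 : (LinearMap.range (Psi D hD) : Set (Fin n → F))
        = (LinearMap.range D.vecMulLinear : Set (Fin n → F)) := by
      ext y
      constructor
      · rintro ⟨x, rfl⟩
        exact ⟨x, rfl⟩
      · rintro ⟨x, rfl⟩
        exact ⟨x, rfl⟩
    have h4 : Nat.card ↥(LinearMap.range (Psi D hD))
        = Nat.card ↥(LinearMap.range D.vecMulLinear) := by
      exact Nat.card_congr (Equiv.setCongr h3)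
    have h5 : q ^ finrank F (LinearMap.range D.vecMulLinear)
        = (q ^ r) ^ finrank ↥Kset (LinearMap.range (Psi D hD)) := by
      rw [← h2, ← h1, h4]
    rw [← pow_mul] at h5
    have h6 := hpowinj _ _ h5.symm
    rw [← finrank_range_vml D, h6]
  have hrd : r ∣ d :=
    ⟨finrank ↥Kset (LinearMap.range (Psi (A₀ - B₀) (hKlinD A₀ hA₀ B₀ hB₀))), by
      rw [← hrk₀, hrank_rel _ (hKlinD A₀ hA₀ B₀ hB₀)]⟩
  have hr1 : r = 1 := by
    rcases hcond with hgcd | hdlt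
    · have h1 : r ∣ Nat.gcd m n := Nat.dvd_gcd ⟨m₁, hcardm⟩ ⟨n₁, hcardn⟩
      rw [hgcd] at h1
      exact Nat.dvd_one.mp h1
    · set e := d / r with he
      have hde : d = r * e := (Nat.mul_div_cancel' hrd).symm
      have he1 : 1 ≤ e := by
        rcases Nat.eq_zero_or_pos e with h' | h'
        · rw [h', Nat.mul_zero] at hde
          omega
        · exact h'
      have hem : e < m₁ := by
        rw [hde, hcardm] at hdlt
        exact lt_of_mul_lt_mul_left hdlt (Nat.zero_le r)
      have hn₁1 : 1 ≤ n₁ := by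
        rcases Nat.eq_zero_or_pos n₁ with h' | h'
        · rw [h', Nat.mul_zero] at hcardn
          omega
        · exact h'
      let Q : Matrix (Fin m) (Fin n) F → ((Fin m → F) →ₗ[↥Kset] (Fin n → F)) := fun M =>
        if h : M ∈ C then Psi M (fun k x => hmem_apply k M h x) else 0
      have hQC : ∀ M (h : M ∈ C) (x : Fin m → F), Q M x = x ᵥ* M := by
        intro M h x
        simp only [Q, dif_pos h]
        rfl
      have hQinj : Set.InjOn Q C := by
        intro A hA B hB hQAB
        apply matrix_eq_of_vecMul_eq
        intro x
        have h7 := DFunLike.congr_fun hQAB x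
        rwa [hQC A hA, hQC B hB] at h7
      have hSncard : (Q '' C).ncard = C.ncard := Set.ncard_image_of_injOn hQinj
      have hb := singleton_bound (K := ↥Kset) (Q '' C) ⊥ e he1 ?_
      swap
      · rintro φ₁ ⟨A, hA, rfl⟩ φ₂ ⟨B, hB, rfl⟩ hne
        have hABne : A ≠ B := fun h => hne (by rw [h])
        refine ⟨bot_le, ?_⟩
        have hdiff : Q A - Q B = Psi (A - B) (hKlinD A hA B hB) := by
          refine LinearMap.ext fun x => ?_
          rw [LinearMap.sub_apply, hQC A hA, hQC B hB]
          show _ = x ᵥ* (A - B)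
          rw [Matrix.vecMul_sub]
        rw [hdiff]
        have h6 := hrank_rel (A - B) (hKlinD A hA B hB)
        have h7 := hdist A hA B hB hABne
        rw [h6, hde] at h7
        exact Nat.le_of_mul_le_mul_left h7 hrpos
      rw [hSncard, hcard, hcardK] at hb
      have hbot : finrank ↥Kset (⊥ : Submodule ↥Kset (Fin m → F)) = 0 := finrank_bot _ _
      rw [hbot] at hb
      have harith : m₁ - 0 - (e - 1) = (m₁ - e) + 1 := by omega
      rw [harith, ← pow_mul] at hb
      have hle := (Nat.pow_le_pow_iff_right hq2).mp hb
      have hmd : m - d = r * (m₁ - e) := by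
        rw [hcardm, hde, Nat.mul_sub]
      have h8 : n * (m - d + 1) = (r * (m₁ - e) * n₁) * r + r * n₁ := by
        rw [hmd, hcardn]
        ring
      have h9 : r * (((m₁ - e) + 1) * n₁) = (r * (m₁ - e) * n₁) * 1 + r * n₁ := by
        ring
      rw [h8, h9] at hle
      have h10 : (r * (m₁ - e) * n₁) * r ≤ (r * (m₁ - e) * n₁) * 1 := by omega
      have h11 : 0 < r * (m₁ - e) * n₁ := by
        have : 1 ≤ m₁ - e := by omega
        exact Nat.mul_pos (Nat.mul_pos hrpos this) hn₁1
      have h12 := Nat.le_of_mul_le_mul_left h10 h11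
      omega
  -- conclude: every kernel element is scalar
  have hcards : Nat.card F = Nat.card ↥Kset := by
    rw [hcardK, hr1, pow_one, Nat.card_eq_fintype_card, hq]
  have hφbij : Function.Bijective φ :=
    (Nat.bijective_iff_injective_and_card φ).mpr ⟨hφinj, hcards⟩
  have hgf_mem : ((g, f) : AddMonoid.End (Fin m → F) × AddMonoid.End (Fin n → F)) ∈ Kset := by
    intro M hM x
    exact hker M hM x
  obtain ⟨a, ha⟩ := hφbij.2 ⟨(g, f), hgf_mem⟩
  have ha' : (φ a : AddMonoid.End (Fin m → F) × AddMonoid.End (Fin n → F)) = (g, f) :=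
    congrArg Subtype.val ha
  refine ⟨a, fun x => ?_, fun y => ?_⟩
  · have h1 : (φ a : AddMonoid.End (Fin m → F) × AddMonoid.End (Fin n → F)).1 = g :=
      congrArg Prod.fst ha'
    have h2 := DFunLike.congr_fun h1 x
    rw [← h2]
    rfl
  · have h1 : (φ a : AddMonoid.End (Fin m → F) × AddMonoid.End (Fin n → F)).2 = f :=
      congrArg Prod.snd ha'
    have h2 := DFunLike.congr_fun h1 y
    rw [← h2]
    rfl

end MRDAux3

namespace MRDAux4
open MRDAux MRDAux2 MRDAux3

set_option maxHeartbeats 4000000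
set_option synthInstance.maxHeartbeats 400000

variable {F : Type*} [Field F] [Fintype F] {q m n d : ℕ}

lemma core_any (hq : Fintype.card F = q)
    (C : Set (Matrix (Fin m) (Fin n) F))
    (h0 : (0 : Matrix (Fin m) (Fin n) F) ∈ C)
    (hdist : ∀ A ∈ C, ∀ B ∈ C, A ≠ B → d ≤ (A - B).rank)
    (hattain : ∃ A ∈ C, ∃ B ∈ C, A ≠ B ∧ (A - B).rank = d)
    (hMRD : C.ncard = q ^ (max m n * (min m n - d + 1)))
    (hcond : Nat.gcd m n = 1 ∨ d < min m n)
    (g : AddMonoid.End (Fin m → F)) (f : AddMonoid.End (Fin n → F))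
    (hker : ∀ M ∈ C, ∀ x, f (x ᵥ* M) = (g x) ᵥ* M) :
    ∃ a : F, (∀ x, g x = a • x) ∧ (∀ y, f y = a • y) := by
  classical
  rcases le_or_gt m n with hmn | hnm
  · rw [max_eq_right hmn, min_eq_left hmn] at hMRD
    rw [min_eq_left hmn] at hcond
    exact core hq hmn C h0 hdist hattain hMRD hcond g f hker
  · -- m > n : pass to the transposed code via adjoints
    obtain ⟨p, hp⟩ := CharP.exists F
    haveI : CharP F p := hp
    have hpp : p.Prime := CharP.char_is_prime F p
    haveI : Fact p.Prime := ⟨hpp⟩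
    letI : Algebra (ZMod p) F := ZMod.algebra F p
    haveI : Module.Finite (ZMod p) F := Module.Finite.of_finite
    have hfr : 0 < finrank (ZMod p) F := Module.finrank_pos
    let b := Module.finBasis (ZMod p) F
    let t : F →+ ZMod p := (b.coord ⟨0, hfr⟩).toAddMonoidHom
    have ht : t (b ⟨0, hfr⟩) = 1 := by
      show b.coord ⟨0, hfr⟩ (b ⟨0, hfr⟩) = 1
      rw [Basis.coord_apply, Basis.repr_self, Finsupp.single_eq_same]
    -- the pairing
    let theta : ∀ k : ℕ, (Fin k → F) → ((Fin k → F) →+ ZMod p) := fun k x =>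
      { toFun := fun y => t (x ⬝ᵥ y)
        map_zero' := by
          show t (x ⬝ᵥ (0 : Fin k → F)) = 0
          rw [dotProduct_zero, map_zero]
        map_add' := fun y z => by
          show t (x ⬝ᵥ (y + z)) = t (x ⬝ᵥ y) + t (x ⬝ᵥ z)
          rw [dotProduct_add, map_add] }
    have hvanish : ∀ (k : ℕ) (v : Fin k → F), (∀ y, t (v ⬝ᵥ y) = 0) → v = 0 := by
      intro k v hv
      funext j
      by_contra hvj
      have h1 := hv (Pi.single j ((v j)⁻¹ * b ⟨0, hfr⟩))
      rw [dotProduct_single, ← mul_assoc, mul_inv_cancel₀ hvj, one_mul, ht] at h1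
      exact one_ne_zero h1
    have hvanish₂ : ∀ (k : ℕ) (v : Fin k → F), (∀ x, t (x ⬝ᵥ v) = 0) → v = 0 := by
      intro k v hv
      refine hvanish k v fun y => ?_
      rw [dotProduct_comm]
      exact hv y
    have hcancel₁ : ∀ (k : ℕ) (u w : Fin k → F), (∀ y, t (u ⬝ᵥ y) = t (w ⬝ᵥ y)) → u = w := by
      intro k u w h
      have h1 : u - w = 0 := by
        refine hvanish k _ fun y => ?_
        rw [sub_dotProduct, map_sub, h y, sub_self]
      exact sub_eq_zero.mp h1
    have hcancel₂ : ∀ (k : ℕ) (u w : Fin k → F), (∀ x, t (x ⬝ᵥ u) = t (x ⬝ᵥ w)) → u = w := by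
      intro k u w h
      refine hcancel₁ k u w fun y => ?_
      rw [dotProduct_comm, h y, dotProduct_comm]
    have htheta_inj : ∀ k : ℕ, Function.Injective (theta k) := by
      intro k x x' hxx
      refine hcancel₁ k x x' fun y => ?_
      exact DFunLike.congr_fun hxx y
    have hcardeq : ∀ k : ℕ, Nat.card (Fin k → F) = Nat.card ((Fin k → F) →+ ZMod p) := by
      intro k
      haveI : Finite ((Fin k → F) →+ ZMod p) :=
        Finite.of_injective (fun ψ => (ψ : (Fin k → F) → ZMod p)) DFunLike.coe_injective
      haveI : Finite ((Fin k → F) →ₗ[ZMod p] ZMod p) :=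
        Finite.of_injective (fun ψ => (ψ : (Fin k → F) → ZMod p)) DFunLike.coe_injective
      have e1 : ((Fin k → F) →+ ZMod p) ≃ ((Fin k → F) →ₗ[ZMod p] ZMod p) :=
        { toFun := fun φ => AddMonoidHom.toZModLinearMap p φ
          invFun := fun ψ => ψ.toAddMonoidHom
          left_inv := fun φ => rfl
          right_inv := fun ψ => rfl }
      rw [Nat.card_congr e1]
      rw [natCard_module (ZMod p) ((Fin k → F) →ₗ[ZMod p] ZMod p),
        natCard_module (ZMod p) (Fin k → F)]
      congr 1
      rw [Module.finrank_linearMap, finrank_self, mul_one]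
    have htheta_bij : ∀ k : ℕ, Function.Bijective (theta k) := by
      intro k
      haveI : Finite ((Fin k → F) →+ ZMod p) :=
        Finite.of_injective (fun ψ => (ψ : (Fin k → F) → ZMod p)) DFunLike.coe_injective
      exact (Nat.bijective_iff_injective_and_card (theta k)).mpr ⟨htheta_inj k, hcardeq k⟩
    let thE : ∀ k : ℕ, (Fin k → F) ≃ ((Fin k → F) →+ ZMod p) :=
      fun k => Equiv.ofBijective _ (htheta_bij k)
    have hretr : ∀ (k : ℕ) (A : (Fin k → F) →+ ZMod p), theta k ((thE k).symm A) = A :=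
      fun k A => (thE k).apply_symm_apply A
    have hadd : ∀ (k : ℕ) (u w : Fin k → F), theta k (u + w) = theta k u + theta k w := by
      intro k u w
      refine DFunLike.ext _ _ fun z' => ?_
      show t ((u + w) ⬝ᵥ z') = t (u ⬝ᵥ z') + t (w ⬝ᵥ z')
      rw [add_dotProduct, map_add]
    -- adjoint
    let sharp : ∀ k : ℕ, AddMonoid.End (Fin k → F) → AddMonoid.End (Fin k → F) := fun k h =>
      { toFun := fun y => (thE k).symm ((theta k y).comp h)
        map_zero' := by
          rw [Equiv.symm_apply_eq]
          show (theta k (0 : Fin k → F)).comp h = theta k (0 : Fin k → F)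
          refine DFunLike.ext _ _ fun z => ?_
          show t ((0 : Fin k → F) ⬝ᵥ h z) = t ((0 : Fin k → F) ⬝ᵥ z)
          rw [zero_dotProduct, zero_dotProduct]
        map_add' := fun y y' => by
          rw [Equiv.symm_apply_eq]
          show (theta k (y + y')).comp h
            = theta k ((thE k).symm ((theta k y).comp h) + (thE k).symm ((theta k y').comp h))
          rw [hadd k ((thE k).symm ((theta k y).comp h)) ((thE k).symm ((theta k y').comp h)),
            hretr k ((theta k y).comp h), hretr k ((theta k y').comp h)]
          refine DFunLike.ext _ _ fun z => ?_
          show t ((y + y') ⬝ᵥ h z) = t (y ⬝ᵥ h z) + t (y' ⬝ᵥ h z)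
          rw [add_dotProduct, map_add] }
    have hsharp : ∀ (k : ℕ) (h : AddMonoid.End (Fin k → F)) (x y : Fin k → F),
        t (h x ⬝ᵥ y) = t (x ⬝ᵥ (sharp k h) y) := by
      intro k h x y
      have h3 := DFunLike.congr_fun (hretr k ((theta k y).comp h)) x
      calc t (h x ⬝ᵥ y) = t (y ⬝ᵥ h x) := by rw [dotProduct_comm]
      _ = t ((sharp k h) y ⬝ᵥ x) := h3.symm
      _ = t (x ⬝ᵥ (sharp k h) y) := by rw [dotProduct_comm]
    -- transposed code
    set CT : Set (Matrix (Fin n) (Fin m) F) := Matrix.transpose '' C with hCT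
    have h0T : (0 : Matrix (Fin n) (Fin m) F) ∈ CT := ⟨0, h0, Matrix.transpose_zero⟩
    have hdistT : ∀ A ∈ CT, ∀ B ∈ CT, A ≠ B → d ≤ (A - B).rank := by
      rintro _ ⟨A, hA, rfl⟩ _ ⟨B, hB, rfl⟩ hne
      have hAB : A ≠ B := fun h => hne (by rw [h])
      rw [← Matrix.transpose_sub, Matrix.rank_transpose]
      exact hdist A hA B hB hAB
    have hattainT : ∃ A ∈ CT, ∃ B ∈ CT, A ≠ B ∧ (A - B).rank = d := by
      obtain ⟨A, hA, B, hB, hAB, hrk⟩ := hattain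
      refine ⟨Aᵀ, ⟨A, hA, rfl⟩, Bᵀ, ⟨B, hB, rfl⟩, ?_, ?_⟩
      · intro h
        exact hAB (Matrix.transpose_injective h)
      · rw [← Matrix.transpose_sub, Matrix.rank_transpose]
        exact hrk
    have hcardT : CT.ncard = q ^ (m * (n - d + 1)) := by
      rw [hCT, Set.ncard_image_of_injective C Matrix.transpose_injective]
      rw [max_eq_left hnm.le, min_eq_right hnm.le] at hMRD
      exact hMRD
    have hcondT : Nat.gcd n m = 1 ∨ d < n := by
      rw [min_eq_right hnm.le] at hcond
      rcases hcond with h | h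
      · left
        rwa [Nat.gcd_comm]
      · right
        exact h
    -- kernel condition for the transposed code
    have hkerT : ∀ N ∈ CT, ∀ y, (sharp m g) (y ᵥ* N) = ((sharp n f) y) ᵥ* N := by
      rintro _ ⟨M, hM, rfl⟩ y
      refine hcancel₂ m _ _ fun x => ?_
      rw [← hsharp m g x (y ᵥ* Mᵀ)]
      rw [Matrix.vecMul_transpose, Matrix.dotProduct_mulVec, ← hker M hM x,
        hsharp n f (x ᵥ* M) y, ← Matrix.dotProduct_mulVec, ← Matrix.vecMul_transpose]
    obtain ⟨a, hFa, hGa⟩ := core hq hnm.le CT h0T hdistT hattainT hcardT hcondT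
      (sharp n f) (sharp m g) hkerT
    refine ⟨a, fun x => ?_, fun y => ?_⟩
    · refine hcancel₁ m _ _ fun y => ?_
      rw [hsharp m g x y, hGa y, dotProduct_smul, smul_dotProduct]
    · refine hcancel₁ n _ _ fun y' => ?_
      rw [hsharp n f y y', hFa y', dotProduct_smul, smul_dotProduct]

end MRDAux4

open Matrix LinearMap Submodule Module MRDAux MRDAux2 MRDAux3 MRDAux4 in
/-- Let `C` be an MRD code in `F_q^{m×n}` containing the zero matrix,
with `gcd(m,n) = 1` or minimum distance `d < min m n`. Then the kernel of the translation
structure `T(C)` consists exactly of the scalar maps, i.e. it is isomorphic to `F_q`. -/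
theorem mrd_kernel_eq_Fq {q m n d : ℕ} {F : Type*} [Field F] [Fintype F]
    (hq : Fintype.card F = q)
    (C : Set (Matrix (Fin m) (Fin n) F))
    (h0 : (0 : Matrix (Fin m) (Fin n) F) ∈ C)
    (hdist : ∀ A ∈ C, ∀ B ∈ C, A ≠ B → d ≤ (A - B).rank)
    (hattain : ∃ A ∈ C, ∃ B ∈ C, A ≠ B ∧ (A - B).rank = d)
    (hMRD : C.ncard = q ^ (max m n * (min m n - d + 1)))
    (hcond : Nat.gcd m n = 1 ∨ d < min m n) :
    ∀ μ : ((Fin m → F) × (Fin n → F)) →+ ((Fin m → F) × (Fin n → F)),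
      ((∀ y : Fin n → F, ∃ y', μ (0, y) = (0, y')) ∧
       (∀ M ∈ C, ∀ x : Fin m → F,
          ∃ x', μ (x, Matrix.vecMul x M) = (x', Matrix.vecMul x' M)))
      ↔ ∃ a : F, ∀ v : (Fin m → F) × (Fin n → F), μ v = a • v := by
  intro μ
  constructor
  · rintro ⟨hSinf, hSM⟩
    -- decompose μ
    have hfst : ∀ y : Fin n → F, (μ (0, y)).1 = 0 := by
      intro y
      obtain ⟨y', hy'⟩ := hSinf y
      rw [hy']
    have hsnd : ∀ x : Fin m → F, (μ (x, 0)).2 = 0 := by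
      intro x
      obtain ⟨x', hx'⟩ := hSM 0 h0 x
      rw [Matrix.vecMul_zero] at hx'
      rw [hx', Matrix.vecMul_zero]
    let g : AddMonoid.End (Fin m → F) :=
      { toFun := fun x => (μ (x, 0)).1
        map_zero' := by
          show (μ ((0 : Fin m → F), (0 : Fin n → F))).1 = 0
          have h1 : ((0, 0) : (Fin m → F) × (Fin n → F)) = 0 := rfl
          rw [h1, map_zero]
          rfl
        map_add' := fun x y => by
          show (μ (x + y, (0 : Fin n → F))).1 = (μ (x, 0)).1 + (μ (y, 0)).1
          have h1 : ((x + y, 0) : (Fin m → F) × (Fin n → F)) = (x, 0) + (y, 0) := by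
            rw [Prod.mk_add_mk, add_zero]
          rw [h1, map_add]
          rfl }
    let f : AddMonoid.End (Fin n → F) :=
      { toFun := fun y => (μ (0, y)).2
        map_zero' := by
          show (μ ((0 : Fin m → F), (0 : Fin n → F))).2 = 0
          have h1 : ((0, 0) : (Fin m → F) × (Fin n → F)) = 0 := rfl
          rw [h1, map_zero]
          rfl
        map_add' := fun x y => by
          show (μ ((0 : Fin m → F), x + y)).2 = (μ (0, x)).2 + (μ (0, y)).2
          have h1 : ((0, x + y) : (Fin m → F) × (Fin n → F)) = (0, x) + (0, y) := by
            rw [Prod.mk_add_mk, add_zero]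
          rw [h1, map_add]
          rfl }
    have hdecomp : ∀ v : (Fin m → F) × (Fin n → F), μ v = (g v.1, f v.2) := by
      intro v
      have h1 : v = (v.1, 0) + (0, v.2) := by
        rw [Prod.mk_add_mk, add_zero, zero_add]
      have h2 : μ v = μ (v.1, 0) + μ (0, v.2) := by
        conv_lhs => rw [h1]
        rw [map_add]
      rw [h2]
      apply Prod.ext
      · show (μ (v.1, 0)).1 + (μ (0, v.2)).1 = g v.1
        rw [hfst v.2, add_zero]
        rfl
      · show (μ (v.1, 0)).2 + (μ (0, v.2)).2 = f v.2
        rw [hsnd v.1, zero_add]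
        rfl
    have hker : ∀ M ∈ C, ∀ x, f (x ᵥ* M) = (g x) ᵥ* M := by
      intro M hM x
      obtain ⟨x', hx'⟩ := hSM M hM x
      have h1 := hdecomp (x, x ᵥ* M)
      rw [hx'] at h1
      have h2 : x' = g x := congrArg Prod.fst h1
      have h3 : x' ᵥ* M = f (x ᵥ* M) := congrArg Prod.snd h1
      rw [← h3, h2]
    obtain ⟨a, hg, hf⟩ := core_any hq C h0 hdist hattain hMRD hcond g f hker
    refine ⟨a, fun v => ?_⟩
    rw [hdecomp v, hg v.1, hf v.2]
    rfl
  · rintro ⟨a, ha⟩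
    constructor
    · intro y
      refine ⟨a • y, ?_⟩
      rw [ha (0, y)]
      apply Prod.ext
      · show a • (0 : Fin m → F) = 0
        rw [smul_zero]
      · rfl
    · intro M hM x
      refine ⟨a • x, ?_⟩
      rw [ha (x, x ᵥ* M)]
      apply Prod.ext
      · rfl
      · show a • (x ᵥ* M) = (a • x) ᵥ* M
        rw [Matrix.smul_vecMul]
end

section
/- Let C be an MRD code in F_q^{m×n} (m ≤ n) with minimum distance d and containing the zero matrix. Then for every ℓ with 0 ≤ ℓ ≤ m − d there exists a matrix in C of rank exactly d + ℓ. -/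
set_option linter.unusedSectionVars false
set_option maxHeartbeats 1000000
set_option synthInstance.maxHeartbeats 400000
open Module Submodule Set

section auxx
variable {F : Type*} [Field F] [Fintype F]

private lemma aux_card_hom (V W : Type*) [AddCommGroup V] [Module F V]
    [AddCommGroup W] [Module F W] [Finite V] [Finite W] :
    Nat.card (V →ₗ[F] W) = Fintype.card F ^ (Module.finrank F V * Module.finrank F W) := by
  have : Finite (V →ₗ[F] W) := Finite.of_injective _ DFunLike.coe_injective
  cases nonempty_fintype (V →ₗ[F] W)
  rw [Nat.card_eq_fintype_card, card_eq_pow_finrank (K := F), Module.finrank_linearMap]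

private lemma aux_ncard_hom_range_le (V W : Type*) [AddCommGroup V] [Module F V]
    [AddCommGroup W] [Module F W] [Finite V] [Finite W] (P : Submodule F W) :
    ({g : V →ₗ[F] W | LinearMap.range g ≤ P} : Set (V →ₗ[F] W)).ncard
      = Fintype.card F ^ (Module.finrank F V * Module.finrank F P) := by
  rw [← Nat.card_coe_set_eq]
  have e : ({g : V →ₗ[F] W | LinearMap.range g ≤ P} : Set (V →ₗ[F] W)) ≃ (V →ₗ[F] P) :=
    { toFun := fun g => (g : V →ₗ[F] W).codRestrict P
        (fun x => g.2 (LinearMap.mem_range_self _ x))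
      invFun := fun h => ⟨P.subtype ∘ₗ h,
        (LinearMap.range_comp_le_range h P.subtype).trans_eq (Submodule.range_subtype P)⟩
      left_inv := fun g => Subtype.ext (LinearMap.ext fun x => rfl)
      right_inv := fun h => LinearMap.ext fun x => Subtype.ext rfl }
  rw [Nat.card_congr e, aux_card_hom]

private lemma aux_exists_le_finrank {E : Type*} [AddCommGroup E] [Module F E]
    [FiniteDimensional F E] (V : Submodule F E) (k : ℕ) (hk : k ≤ Module.finrank F V) :
    ∃ U : Submodule F E, U ≤ V ∧ Module.finrank F U = k := by
  let b := Module.finBasis F V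
  set v : Fin k → E := fun i => (b (Fin.castLE hk i) : E) with hv
  have hli : LinearIndependent F v :=
    ((b.linearIndependent.comp _ (Fin.castLE_injective hk)).map' V.subtype V.ker_subtype)
  refine ⟨span F (Set.range v), ?_, ?_⟩
  · rw [span_le]; rintro x ⟨i, rfl⟩; exact (b (Fin.castLE hk i)).2
  · rw [finrank_span_eq_card hli, Fintype.card_fin]





private lemma aux_injOn {m n d : ℕ} (C : Set (Matrix (Fin m) (Fin n) F))
    (hdist : ∀ A ∈ C, ∀ B ∈ C, A ≠ B → d ≤ (A - B).rank)
    (U : Submodule F (Fin m → F)) (hU : Module.finrank F U < d) :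
    Set.InjOn (fun M : Matrix (Fin m) (Fin n) F => U.mkQ ∘ₗ M.mulVecLin) C := by
  intro A hA B hB hAB
  by_contra hne
  have hd := hdist A hA B hB hne
  have hle : LinearMap.range (A - B).mulVecLin ≤ U := by
    rintro y ⟨x, rfl⟩
    have h1 : (A - B).mulVecLin x = A.mulVecLin x - B.mulVecLin x := by
      simp [Matrix.mulVecLin_apply, Matrix.sub_mulVec]
    have h2 := LinearMap.congr_fun hAB x
    simp only [LinearMap.comp_apply] at h2
    have h3 : U.mkQ ((A - B).mulVecLin x) = 0 := by rw [h1, map_sub, h2, sub_self]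
    rwa [Submodule.mkQ_apply, Submodule.Quotient.mk_eq_zero] at h3
  have : (A - B).rank ≤ Module.finrank F U := Submodule.finrank_mono hle
  omega

private lemma aux_count_upper {q m n d : ℕ} (hq : Fintype.card F = q)
    (C : Set (Matrix (Fin m) (Fin n) F))
    (hdist : ∀ A ∈ C, ∀ B ∈ C, A ≠ B → d ≤ (A - B).rank)
    (W U : Submodule F (Fin m → F)) (hUW : U ≤ W) (hU : Module.finrank F U + 1 = d) :
    {M | M ∈ C ∧ LinearMap.range M.mulVecLin ≤ W}.ncard
      ≤ q ^ (n * (Module.finrank F W - Module.finrank F U)) := by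
  classical
  set Φ := fun M : Matrix (Fin m) (Fin n) F => U.mkQ ∘ₗ M.mulVecLin with hΦ
  have hinj : Set.InjOn Φ C := aux_injOn C hdist U (by omega)
  set D := {M | M ∈ C ∧ LinearMap.range M.mulVecLin ≤ W} with hD
  have hDC : D ⊆ C := fun M hM => hM.1
  haveI : Finite ((Fin n → F) →ₗ[F] ((Fin m → F) ⧸ U)) :=
    Finite.of_injective _ DFunLike.coe_injective
  set S := {g : (Fin n → F) →ₗ[F] ((Fin m → F) ⧸ U) | LinearMap.range g ≤ W.map U.mkQ} with hSdef
  have himg : Φ '' D ⊆ S := by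
    rintro _ ⟨M, hM, rfl⟩
    show LinearMap.range (U.mkQ ∘ₗ M.mulVecLin) ≤ W.map U.mkQ
    rw [LinearMap.range_comp]
    exact Submodule.map_mono hM.2
  have h1 : D.ncard = (Φ '' D).ncard := (Set.ncard_image_of_injOn (hinj.mono hDC)).symm
  have h2 : (Φ '' D).ncard ≤ S.ncard := Set.ncard_le_ncard himg (Set.toFinite S)
  have hmap : Module.finrank F (W.map U.mkQ) + Module.finrank F U = Module.finrank F W := by
    have hr : LinearMap.range (U.mkQ ∘ₗ W.subtype) = W.map U.mkQ := by
      rw [LinearMap.range_comp, Submodule.range_subtype]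
    have hk : LinearMap.ker (U.mkQ ∘ₗ W.subtype) = U.comap W.subtype := by
      ext x
      simp [LinearMap.mem_ker, Submodule.Quotient.mk_eq_zero]
    have h3 := LinearMap.finrank_range_add_finrank_ker (U.mkQ ∘ₗ W.subtype)
    rw [hr, hk] at h3
    have h4 : Module.finrank F ↥(U.comap W.subtype) = Module.finrank F ↥U :=
      (Submodule.comapSubtypeEquivOfLe hUW).finrank_eq
    omega
  have hS : S.ncard = q ^ (n * (Module.finrank F W - Module.finrank F U)) := by
    rw [hSdef, aux_ncard_hom_range_le, hq]
    congr 1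
    have h5 : Module.finrank F (Fin n → F) = n := by
      rw [Module.finrank_pi, Fintype.card_fin]
    have h6 : Module.finrank F (W.map U.mkQ)
        = Module.finrank F W - Module.finrank F U := by omega
    rw [h5, h6]
  omega

private lemma aux_ncard_biUnion_le {α β : Type*} [Finite β] (T : Finset α) (G : α → Set β) :
    (⋃ f ∈ T, G f).ncard ≤ ∑ f ∈ T, (G f).ncard := by
  classical
  induction T using Finset.induction with
  | empty => simp
  | insert _ _ hnot ih =>
      rename_i a s
      rw [Finset.sum_insert hnot]
      refine le_trans (le_of_eq (by rw [Finset.set_biUnion_insert])) ?_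
      exact le_trans (Set.ncard_union_le _ _) (by omega)

private lemma aux_count_lower {q m n d : ℕ} (hq : Fintype.card F = q)
    (C : Set (Matrix (Fin m) (Fin n) F))
    (hdist : ∀ A ∈ C, ∀ B ∈ C, A ≠ B → d ≤ (A - B).rank)
    (hMRD : C.ncard = q ^ (n * (m - d + 1))) (hdm : d ≤ m)
    (V U : Submodule F (Fin m → F)) (hUV : U ≤ V) (hU : Module.finrank F U + 1 = d) :
    q ^ (n * (Module.finrank F V - Module.finrank F U))
      ≤ {M | M ∈ C ∧ LinearMap.range M.mulVecLin ≤ V}.ncard := by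
  classical
  set Φ := fun M : Matrix (Fin m) (Fin n) F => U.mkQ ∘ₗ M.mulVecLin with hΦ
  have hinj : Set.InjOn Φ C := aux_injOn C hdist U (by omega)
  haveI : Finite ((Fin n → F) →ₗ[F] ((Fin m → F) ⧸ U)) :=
    Finite.of_injective _ DFunLike.coe_injective
  set S := {g : (Fin n → F) →ₗ[F] ((Fin m → F) ⧸ U) | LinearMap.range g ≤ V.map U.mkQ} with hSdef
  set C₁ := {M | M ∈ C ∧ Φ M ∈ S} with hC₁
  set C₂ := {M | M ∈ C ∧ Φ M ∉ S} with hC₂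
  -- split
  have hsplit : C₁ ∪ C₂ = C := by
    ext M; by_cases h : Φ M ∈ S <;> simp [hC₁, hC₂, h]
  have hdisj : Disjoint C₁ C₂ := by
    rw [Set.disjoint_left]; rintro M ⟨-, h⟩ ⟨-, h'⟩; exact h' h
  have hcards : C₁.ncard + C₂.ncard = C.ncard := by
    rw [← hsplit, Set.ncard_union_eq hdisj (Set.toFinite _) (Set.toFinite _)]
  -- C₂ injects into Sᶜ
  have hC2 : C₂.ncard ≤ Sᶜ.ncard := by
    have himg : Φ '' C₂ ⊆ Sᶜ := by rintro _ ⟨M, hM, rfl⟩; exact hM.2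
    rw [← Set.ncard_image_of_injOn (hinj.mono (fun M hM => hM.1))]
    exact Set.ncard_le_ncard himg (Set.toFinite _)
  have hcompl : S.ncard + Sᶜ.ncard = Nat.card ((Fin n → F) →ₗ[F] ((Fin m → F) ⧸ U)) :=
    Set.ncard_add_ncard_compl S
  -- card of hom space
  have hfrE : Module.finrank F (Fin m → F) = m := by rw [Module.finrank_pi, Fintype.card_fin]
  have hfrn : Module.finrank F (Fin n → F) = n := by rw [Module.finrank_pi, Fintype.card_fin]
  have hfrQ : Module.finrank F ((Fin m → F) ⧸ U) + Module.finrank F U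
      = Module.finrank F (Fin m → F) := Submodule.finrank_quotient_add_finrank U
  have hHom : Nat.card ((Fin n → F) →ₗ[F] ((Fin m → F) ⧸ U)) = q ^ (n * (m - d + 1)) := by
    rw [aux_card_hom, hq, hfrn]
    congr 2
    omega
  -- card of S
  have hmap : Module.finrank F (V.map U.mkQ) + Module.finrank F U = Module.finrank F V := by
    have hr : LinearMap.range (U.mkQ ∘ₗ V.subtype) = V.map U.mkQ := by
      rw [LinearMap.range_comp, Submodule.range_subtype]
    have hk : LinearMap.ker (U.mkQ ∘ₗ V.subtype) = U.comap V.subtype := by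
      ext x
      simp [LinearMap.mem_ker, Submodule.Quotient.mk_eq_zero]
    have h3 := LinearMap.finrank_range_add_finrank_ker (U.mkQ ∘ₗ V.subtype)
    rw [hr, hk] at h3
    have h4 : Module.finrank F ↥(U.comap V.subtype) = Module.finrank F ↥U :=
      (Submodule.comapSubtypeEquivOfLe hUV).finrank_eq
    omega
  have hS : S.ncard = q ^ (n * (Module.finrank F V - Module.finrank F U)) := by
    rw [hSdef, aux_ncard_hom_range_le, hq, hfrn]
    congr 2
    omega
  -- C₁ is contained in the target set
  have hsub : C₁ ⊆ {M | M ∈ C ∧ LinearMap.range M.mulVecLin ≤ V} := by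
    rintro M ⟨hMC, hMS⟩
    refine ⟨hMC, ?_⟩
    have h5 : (LinearMap.range M.mulVecLin).map U.mkQ ≤ V.map U.mkQ := by
      rw [← LinearMap.range_comp]; exact hMS
    have h6 : LinearMap.range M.mulVecLin ≤ (V.map U.mkQ).comap U.mkQ :=
      le_trans (Submodule.le_comap_map _ _) (Submodule.comap_mono h5)
    rwa [Submodule.comap_map_mkQ, sup_eq_right.mpr hUV] at h6
  have hfinal : C₁.ncard ≤ {M | M ∈ C ∧ LinearMap.range M.mulVecLin ≤ V}.ncard :=
    Set.ncard_le_ncard hsub (Set.toFinite _)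
  rw [hMRD] at hcards
  omega

end auxx


/-- Let `C` be an MRD code in `F_q^{m×n}` (`m ≤ n`) with minimum distance
`d`, containing the zero matrix. For every `0 ≤ ℓ ≤ m − d` there exists a matrix in `C` of
rank exactly `d + ℓ`. -/
theorem mrd_all_weights {q m n d : ℕ} {F : Type*} [Field F] [Fintype F]
    (hq : Fintype.card F = q)
    (C : Set (Matrix (Fin m) (Fin n) F)) (hmn : m ≤ n)
    (h0 : (0 : Matrix (Fin m) (Fin n) F) ∈ C)
    (hdist : ∀ A ∈ C, ∀ B ∈ C, A ≠ B → d ≤ (A - B).rank)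
    (hattain : ∃ A ∈ C, ∃ B ∈ C, A ≠ B ∧ (A - B).rank = d)
    (hMRD : C.ncard = q ^ (n * (m - d + 1))) :
    ∀ ℓ : ℕ, ℓ ≤ m - d → ∃ M ∈ C, M.rank = d + ℓ := by
  classical
  intro ℓ hℓ
  obtain ⟨A, hA, B, hB, hne, hdAB⟩ := hattain
  have hrankdef : ∀ M : Matrix (Fin m) (Fin n) F,
      M.rank = Module.finrank F (LinearMap.range M.mulVecLin) := fun _ => rfl
  have hd1 : 1 ≤ d := by
    by_contra h
    have hd0 : (A - B).rank = 0 := by omega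
    rw [hrankdef, Submodule.finrank_eq_zero, LinearMap.range_eq_bot] at hd0
    apply hne
    have hAB : A - B = 0 := by
      ext i j
      have h2 : (A - B).mulVecLin (Pi.single j 1) = 0 := by rw [hd0]; rfl
      rw [Matrix.mulVecLin_apply, Matrix.mulVec_single_one] at h2
      have h3 := congrFun h2 i
      simpa [Matrix.transpose_apply] using h3
    exact sub_eq_zero.mp hAB
  have hdm : d ≤ m := by
    have := (A - B).rank_le_card_height
    rw [Fintype.card_fin] at this; omega
  have hq2 : 2 ≤ q := by rw [← hq]; exact Fintype.one_lt_card
  have hfrE : Module.finrank F (Fin m → F) = m := by rw [Module.finrank_pi, Fintype.card_fin]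
  obtain ⟨V, hVtop, hV⟩ := aux_exists_le_finrank (⊤ : Submodule F (Fin m → F)) (d + ℓ)
    (by rw [finrank_top, hfrE]; omega)
  obtain ⟨U, hUV, hU⟩ := aux_exists_le_finrank V (d - 1) (by rw [hV]; omega)
  have hU' : Module.finrank F U + 1 = d := by omega
  set G := {M | M ∈ C ∧ LinearMap.range M.mulVecLin ≤ V} with hG
  have hlow : q ^ (n * (ℓ + 1)) ≤ G.ncard := by
    have h1 := aux_count_lower hq C hdist hMRD hdm V U hUV hU'
    have he : Module.finrank F V - Module.finrank F U = ℓ + 1 := by omega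
    rwa [he] at h1
  set Bad := {M | M ∈ C ∧ LinearMap.range M.mulVecLin ≤ V ∧ M.rank ≠ d + ℓ} with hBad
  haveI : Finite (V →ₗ[F] F) := Finite.of_injective _ DFunLike.coe_injective
  haveI := Fintype.ofFinite (V →ₗ[F] F)
  set T : Finset (V →ₗ[F] F) := Finset.univ.filter (fun f => f ≠ 0) with hT
  set Gf : (V →ₗ[F] F) → Set (Matrix (Fin m) (Fin n) F) :=
    fun f => {M | M ∈ C ∧ LinearMap.range M.mulVecLin ≤ (LinearMap.ker f).map V.subtype}
    with hGf
  have hBadsub : Bad ⊆ ⋃ f ∈ T, Gf f := by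
    rintro M ⟨hMC, hMV, hMr⟩
    rw [hrankdef] at hMr
    have hle1 : Module.finrank F (LinearMap.range M.mulVecLin) ≤ Module.finrank F V :=
      Submodule.finrank_mono hMV
    have hlt : Module.finrank F (LinearMap.range M.mulVecLin) < d + ℓ := by omega
    set W' := (LinearMap.range M.mulVecLin).comap V.subtype with hW'
    have hW'top : W' ≠ ⊤ := by
      intro htop
      have h2 : V ≤ LinearMap.range M.mulVecLin := by
        intro x hx
        have hx' : (⟨x, hx⟩ : V) ∈ W' := by rw [htop]; exact Submodule.mem_top
        exact hx'
      have := Submodule.finrank_mono h2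
      omega
    obtain ⟨f, hf0, hfker⟩ := Submodule.exists_le_ker_of_lt_top W' (lt_top_iff_ne_top.mpr hW'top)
    have hfT : f ∈ T := by simp [hT, hf0]
    refine Set.mem_biUnion hfT ⟨hMC, ?_⟩
    intro x hx
    have hxV : x ∈ V := hMV hx
    exact ⟨⟨x, hxV⟩, hfker (show (⟨x, hxV⟩ : V) ∈ W' from hx), rfl⟩
  have hGfb : ∀ f ∈ T, (Gf f).ncard ≤ q ^ (n * ℓ) := by
    intro f hf
    have hf0 : f ≠ 0 := by simpa [hT] using hf
    have hrange1 : Module.finrank F (LinearMap.range f) = 1 := by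
      have hne' : LinearMap.range f ≠ ⊥ := by rwa [ne_eq, LinearMap.range_eq_bot]
      have hle1 : Module.finrank F (LinearMap.range f) ≤ 1 := by
        have := Submodule.finrank_mono (le_top : LinearMap.range f ≤ ⊤)
        rwa [finrank_top, Module.finrank_self] at this
      have hpos : Module.finrank F (LinearMap.range f) ≠ 0 := by
        rw [ne_eq, Submodule.finrank_eq_zero]; exact hne'
      omega
    have hker := LinearMap.finrank_range_add_finrank_ker f
    rw [hrange1, hV] at hker
    set Wf := (LinearMap.ker f).map V.subtype with hWf
    have hWfr : Module.finrank F Wf = d + ℓ - 1 := by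
      have he : Module.finrank F Wf = Module.finrank F (LinearMap.ker f) :=
        ((LinearMap.ker f).equivMapOfInjective V.subtype (Submodule.injective_subtype V)).symm.finrank_eq
      omega
    obtain ⟨Uf, hUfW, hUf⟩ := aux_exists_le_finrank Wf (d - 1) (by omega)
    have h8 := aux_count_upper hq C hdist Wf Uf hUfW (by omega)
    have he : Module.finrank F Wf - Module.finrank F Uf = ℓ := by omega
    rwa [he] at h8
  have hTcard : T.card = q ^ (d + ℓ) - 1 := by
    rw [hT, Finset.filter_ne', Finset.card_erase_of_mem (Finset.mem_univ 0)]
    have h9 := aux_card_hom (F := F) V F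
    rw [Nat.card_eq_fintype_card, hq, Module.finrank_self, mul_one, hV] at h9
    rw [Finset.card_univ, h9]
  have hsum : Bad.ncard ≤ (q ^ (d + ℓ) - 1) * q ^ (n * ℓ) := by
    refine le_trans (Set.ncard_le_ncard hBadsub (Set.toFinite _)) ?_
    refine le_trans (aux_ncard_biUnion_le T Gf) ?_
    calc ∑ f ∈ T, (Gf f).ncard ≤ ∑ _f ∈ T, q ^ (n * ℓ) := Finset.sum_le_sum hGfb
      _ = T.card * q ^ (n * ℓ) := by rw [Finset.sum_const, smul_eq_mul]
      _ = (q ^ (d + ℓ) - 1) * q ^ (n * ℓ) := by rw [hTcard]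
  have hlt2 : Bad.ncard < G.ncard := by
    have h7 : q ^ (d + ℓ) - 1 < q ^ n := by
      have hmono : q ^ (d + ℓ) ≤ q ^ n := Nat.pow_le_pow_right (by omega) (by omega)
      have hpos : 0 < q ^ (d + ℓ) := Nat.pow_pos (by omega)
      omega
    have h10 : (q ^ (d + ℓ) - 1) * q ^ (n * ℓ) < q ^ n * q ^ (n * ℓ) :=
      Nat.mul_lt_mul_of_lt_of_le h7 le_rfl (Nat.pow_pos (by omega))
    have h11 : q ^ n * q ^ (n * ℓ) = q ^ (n * (ℓ + 1)) := by
      rw [← pow_add]; congr 1; ring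
    omega
  have hnot : ¬ (G ⊆ Bad) := fun hsub =>
    absurd (Set.ncard_le_ncard hsub (Set.toFinite _)) (by omega)
  obtain ⟨M, hMG, hMB⟩ := Set.not_subset.mp hnot
  refine ⟨M, hMG.1, ?_⟩
  by_contra hne'
  exact hMB ⟨hMG.1, hMG.2, hne'⟩
end

section
/- Let C1 and C2 be K-linear rank metric codes in K^{m×n} that are equivalent, i.e., there exist A ∈ GL(m,K), B ∈ GL(n,K), and γ ∈ Aut(K) with C2 = {A M^γ B : M ∈ C1}. Then a matrix Z ∈ K^{m×m} belongs to the middle nucleus N_m(C1) if and only if A Z^γ A^{−1} belongs to N_m(C2); in particular N_m(C1) and N_m(C2) are isomorphic as rings. -/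
/-- The middle nucleus of a rank metric code `C ⊆ K^{m×n}`. -/
def middleNucleus {m n : ℕ} {K : Type*} [Field K]
    (C : Set (Matrix (Fin m) (Fin n) K)) : Set (Matrix (Fin m) (Fin m) K) :=
  {Z | ∀ M ∈ C, Z * M ∈ C}

/-- If `C1`, `C2` are equivalent `K`-linear rank metric codes via
`C2 = {A M^γ B : M ∈ C1}` with `A, B` invertible and `γ ∈ Aut(K)`, then
`Z ∈ N_m(C1)` iff `A Z^γ A⁻¹ ∈ N_m(C2)`. -/
theorem middleNucleus_equiv {m n : ℕ} {K : Type*} [Field K]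
    (C1 C2 : Set (Matrix (Fin m) (Fin n) K))
    (hadd1 : ∀ X ∈ C1, ∀ Y ∈ C1, X + Y ∈ C1)
    (hsmul1 : ∀ (c : K), ∀ X ∈ C1, c • X ∈ C1)
    (hadd2 : ∀ X ∈ C2, ∀ Y ∈ C2, X + Y ∈ C2)
    (hsmul2 : ∀ (c : K), ∀ X ∈ C2, c • X ∈ C2)
    (A : Matrix (Fin m) (Fin m) K) (B : Matrix (Fin n) (Fin n) K)
    (hA : IsUnit A) (hB : IsUnit B) (γ : K ≃+* K)
    (hC2 : C2 = (fun M : Matrix (Fin m) (Fin n) K => A * M.map γ * B) '' C1) :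
    ∀ Z : Matrix (Fin m) (Fin m) K,
      Z ∈ middleNucleus C1 ↔ A * Z.map γ * A⁻¹ ∈ middleNucleus C2 := by
  intro Z
  have hAdet : IsUnit A.det := (Matrix.isUnit_iff_isUnit_det A).mp hA
  have hBdet : IsUnit B.det := (Matrix.isUnit_iff_isUnit_det B).mp hB
  have hinvA : A⁻¹ * A = 1 := Matrix.nonsing_inv_mul A hAdet
  have hBinv : B * B⁻¹ = 1 := Matrix.mul_nonsing_inv B hBdet
  have hmap : ∀ (X : Matrix (Fin m) (Fin m) K) (Y : Matrix (Fin m) (Fin n) K),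
      (X * Y).map γ = X.map γ * Y.map γ := by
    intro X Y
    exact Matrix.map_mul (f := γ.toRingHom)
  have hinj : Function.Injective
      (fun M : Matrix (Fin m) (Fin n) K => M.map γ) := by
    intro X Y h
    ext i j
    have := congrArg (fun M : Matrix (Fin m) (Fin n) K => M i j) h
    simpa using γ.injective this
  -- key conjugation identity
  have key : ∀ (X : Matrix (Fin m) (Fin m) K) (W : Matrix (Fin m) (Fin n) K),
      A * X * A⁻¹ * (A * W * B) = A * (X * W) * B := by
    intro X W
    calc A * X * A⁻¹ * (A * W * B) = A * X * (A⁻¹ * A) * (W * B) := by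
          simp only [Matrix.mul_assoc]
      _ = A * X * (W * B) := by rw [hinvA, Matrix.mul_one]
      _ = A * (X * W) * B := by simp only [Matrix.mul_assoc]
  constructor
  · intro hZ N hN
    rw [hC2] at hN ⊢
    obtain ⟨M, hM, rfl⟩ := hN
    exact ⟨Z * M, hZ M hM, by simp only [hmap, key]⟩
  · intro h M hM
    have hN : A * M.map γ * B ∈ C2 := by
      rw [hC2]; exact ⟨M, hM, rfl⟩
    have h2 := h _ hN
    rw [hC2] at h2
    obtain ⟨M', hM', hEq⟩ := h2
    simp only at hEq
    rw [key] at hEq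
    have hEq2 : M'.map γ = (Z * M).map γ := by
      have h1 := congrArg (fun X => A⁻¹ * X * B⁻¹) hEq
      have norm : ∀ W : Matrix (Fin m) (Fin n) K,
          A⁻¹ * (A * W * B) * B⁻¹ = W := by
        intro W
        calc A⁻¹ * (A * W * B) * B⁻¹ = (A⁻¹ * A) * (W * (B * B⁻¹)) := by
              simp only [Matrix.mul_assoc]
          _ = W := by rw [hinvA, hBinv, Matrix.one_mul, Matrix.mul_one]
      rw [norm, norm] at h1
      rw [h1, hmap]
    have : M' = Z * M := hinj hEq2
    rw [← this]; exact hM'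
end

section
/- Let C be a K-linear rank metric code in K^{m×n} and let C^⊥ = {N ∈ K^{m×n} : Tr(M N^t) = 0 for all M ∈ C} be its Delsarte dual. Then N_m(C^⊥) = {Z^t : Z ∈ N_m(C)} and N_r(C^⊥) = {Y^t : Y ∈ N_r(C)}. -/
open Matrix

/-- The right nucleus of a rank metric code `C ⊆ K^{m×n}`. -/
def rightNucleus {m n : ℕ} {K : Type*} [Field K]
    (C : Set (Matrix (Fin m) (Fin n) K)) : Set (Matrix (Fin n) (Fin n) K) :=
  {Y | ∀ M ∈ C, M * Y ∈ C}

/-- The Delsarte dual of a rank metric code, w.r.t. the form `⟨M,N⟩ = Tr(M Nᵗ)`. -/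
def delsarteDual {m n : ℕ} {K : Type*} [Field K]
    (C : Set (Matrix (Fin m) (Fin n) K)) : Set (Matrix (Fin m) (Fin n) K) :=
  {N | ∀ M ∈ C, Matrix.trace (M * Nᵀ) = 0}

section aux

variable {m n : ℕ} {K : Type*} [Field K]

/-- The trace bilinear form on matrices. -/
noncomputable def traceBF (m n : ℕ) (K : Type*) [Field K] :
    LinearMap.BilinForm K (Matrix (Fin m) (Fin n) K) :=
  LinearMap.mk₂ K (fun M N => Matrix.trace (M * Nᵀ))
    (fun M M' N => by simp [Matrix.add_mul])
    (fun c M N => by simp)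
    (fun M N N' => by simp [Matrix.mul_add])
    (fun c M N => by simp)

lemma traceBF_apply (M N : Matrix (Fin m) (Fin n) K) :
    traceBF m n K M N = Matrix.trace (M * Nᵀ) := rfl

lemma trace_symm (M N : Matrix (Fin m) (Fin n) K) :
    Matrix.trace (M * Nᵀ) = Matrix.trace (N * Mᵀ) := by
  rw [← Matrix.trace_transpose (M * Nᵀ), Matrix.transpose_mul, Matrix.transpose_transpose,
    Matrix.trace_mul_comm]

lemma traceBF_refl : (traceBF m n K).IsRefl := by
  intro M N h
  rw [traceBF_apply, trace_symm] at h
  exact h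

lemma traceBF_nondegenerate : (traceBF m n K).Nondegenerate := by
  refine (LinearMap.IsRefl.nondegenerate_iff_separatingLeft
    (traceBF_refl : LinearMap.IsRefl (traceBF m n K))).mpr ?_
  intro M h
  ext i j
  have := h (Matrix.single i j 1)
  rw [traceBF_apply] at this
  simpa [Matrix.trace, Matrix.mul_apply, Matrix.single, Matrix.diag,
    ite_and, Finset.sum_ite_eq, eq_comm] using this

lemma delsarteDual_eq (C : Submodule K (Matrix (Fin m) (Fin n) K)) :
    delsarteDual (C : Set (Matrix (Fin m) (Fin n) K)) =
      ((traceBF m n K).orthogonal C : Set (Matrix (Fin m) (Fin n) K)) := rfl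

lemma mem_double_dual (C : Submodule K (Matrix (Fin m) (Fin n) K))
    (M : Matrix (Fin m) (Fin n) K) :
    M ∈ C ↔ ∀ N ∈ delsarteDual (C : Set (Matrix (Fin m) (Fin n) K)),
      Matrix.trace (N * Mᵀ) = 0 := by
  conv_lhs => rw [← LinearMap.BilinForm.orthogonal_orthogonal
    (traceBF_nondegenerate (m := m) (n := n) (K := K)) traceBF_refl C]
  rfl

end aux

/-- For a `K`-linear rank metric code `C ⊆ K^{m×n}` with Delsarte dual
`C^⊥`, one has `N_m(C^⊥) = N_m(C)^⊤` and `N_r(C^⊥) = N_r(C)^⊤`. -/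
theorem nuclei_delsarte_dual {m n : ℕ} {K : Type*} [Field K]
    (C : Submodule K (Matrix (Fin m) (Fin n) K)) :
    middleNucleus (delsarteDual (C : Set (Matrix (Fin m) (Fin n) K)))
        = (fun Z : Matrix (Fin m) (Fin m) K => Zᵀ) ''
            middleNucleus (C : Set (Matrix (Fin m) (Fin n) K)) ∧
    rightNucleus (delsarteDual (C : Set (Matrix (Fin m) (Fin n) K)))
        = (fun Y : Matrix (Fin n) (Fin n) K => Yᵀ) ''
            rightNucleus (C : Set (Matrix (Fin m) (Fin n) K)) := by
  constructor
  · ext Z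
    constructor
    · intro hZ
      refine ⟨Zᵀ, ?_, by simp⟩
      intro M hM
      rw [SetLike.mem_coe, mem_double_dual]
      intro N hN
      have h1 : Z * N ∈ delsarteDual (C : Set (Matrix (Fin m) (Fin n) K)) := hZ N hN
      have h2 := h1 M hM
      calc Matrix.trace (N * (Zᵀ * M)ᵀ)
          = Matrix.trace (Z * N * Mᵀ) := by
            rw [Matrix.transpose_mul, Matrix.transpose_transpose, ← Matrix.mul_assoc,
              Matrix.trace_mul_comm, ← Matrix.mul_assoc]
      _ = Matrix.trace (M * (Z * N)ᵀ) := trace_symm _ _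
      _ = 0 := h2
    · rintro ⟨W, hW, rfl⟩
      intro N hN M hM
      have h2 := hN (W * M) (hW M hM)
      calc Matrix.trace (M * (Wᵀ * N)ᵀ)
          = Matrix.trace (W * M * Nᵀ) := by
            rw [Matrix.transpose_mul, Matrix.transpose_transpose, ← Matrix.mul_assoc,
              Matrix.trace_mul_comm, ← Matrix.mul_assoc]
      _ = 0 := h2
  · ext Y
    constructor
    · intro hY
      refine ⟨Yᵀ, ?_, by simp⟩
      intro M hM
      rw [SetLike.mem_coe, mem_double_dual]
      intro N hN
      have h1 : N * Y ∈ delsarteDual (C : Set (Matrix (Fin m) (Fin n) K)) := hY N hN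
      have h2 := h1 M hM
      calc Matrix.trace (N * (M * Yᵀ)ᵀ)
          = Matrix.trace (N * Y * Mᵀ) := by
            rw [Matrix.transpose_mul, Matrix.transpose_transpose, ← Matrix.mul_assoc]
      _ = Matrix.trace (M * (N * Y)ᵀ) := trace_symm _ _
      _ = 0 := h2
    · rintro ⟨W, hW, rfl⟩
      intro N hN M hM
      have h2 := hN (M * W) (hW M hM)
      calc Matrix.trace (M * (N * Wᵀ)ᵀ)
          = Matrix.trace (M * W * Nᵀ) := by
            rw [Matrix.transpose_mul, Matrix.transpose_transpose, ← Matrix.mul_assoc,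
              Matrix.mul_assoc]
      _ = 0 := h2
end

section
/- Let C be a K-linear rank metric code in K^{m×n}, m ≤ n, with minimum distance d ≥ ⌊m/2⌋ + 1, containing at least one matrix of full rank m. If Z ∈ N_m(C) and there exists a nonzero C0 ∈ C with Z C0 = 0, then Z = 0. In particular, if K is a finite field, every nonzero element of N_m(C) is invertible and N_m(C) is a field. -/
open Matrix

private lemma matrix_eq_zero_of_mulVec {m n : ℕ} {K : Type*} [Field K]
    {Z : Matrix (Fin m) (Fin n) K} (h : ∀ v, Z.mulVec v = 0) : Z = 0 := by
  ext i j
  have := congrFun (h (Pi.single j 1)) i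
  simpa using this

private lemma rank_nullity_mat {m : ℕ} {K : Type*} [Field K]
    (Z : Matrix (Fin m) (Fin m) K) :
    Z.rank + Module.finrank K (LinearMap.ker Z.mulVecLin) = m := by
  have := LinearMap.finrank_range_add_finrank_ker Z.mulVecLin
  simpa [Matrix.rank] using this

set_option maxHeartbeats 1000000 in
set_option synthInstance.maxHeartbeats 500000 in
/-- Let `C ⊆ K^{m×n}` (`m ≤ n`) be a `K`-linear rank metric code with
minimum distance `d ≥ ⌊m/2⌋ + 1` containing a full-rank matrix. If `Z ∈ N_m(C)` kills a
nonzero `C0 ∈ C` then `Z = 0`. In particular if `K` is finite, every nonzero element of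
`N_m(C)` is invertible and `N_m(C)` is a (finite, hence commutative) field. -/
theorem middleNucleus_field {m n d : ℕ} {K : Type*} [Field K]
    (C : Set (Matrix (Fin m) (Fin n) K))
    (hadd : ∀ X ∈ C, ∀ Y ∈ C, X + Y ∈ C)
    (hsmul : ∀ (c : K), ∀ X ∈ C, c • X ∈ C)
    (hmn : m ≤ n)
    (hdist : ∀ A ∈ C, ∀ B ∈ C, A ≠ B → d ≤ (A - B).rank)
    (hattain : ∃ A ∈ C, ∃ B ∈ C, A ≠ B ∧ (A - B).rank = d)
    (hd : m / 2 + 1 ≤ d)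
    (hfull : ∃ M ∈ C, M.rank = m) :
    (∀ Z ∈ middleNucleus C, (∃ C0 ∈ C, C0 ≠ 0 ∧ Z * C0 = 0) → Z = 0) ∧
    (Finite K →
      (∀ Z ∈ middleNucleus C, Z ≠ 0 → IsUnit Z) ∧
      (∀ Z ∈ middleNucleus C, ∀ W ∈ middleNucleus C, Z * W = W * Z)) := by
  classical
  obtain ⟨M, hM, hMrank⟩ := hfull
  have h0 : (0 : Matrix (Fin m) (Fin n) K) ∈ C := by
    simpa using hsmul 0 M hM
  -- rank of a nonzero codeword is at least d
  have hrk : ∀ A ∈ C, A ≠ 0 → d ≤ A.rank := by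
    intro A hA hAne
    have := hdist A hA 0 h0 hAne
    simpa using this
  -- M.mulVecLin is surjective
  have hMtop : LinearMap.range M.mulVecLin = ⊤ := by
    apply Submodule.eq_top_of_finrank_eq
    rw [← Matrix.rank, hMrank]
    simp [Module.finrank_pi]
  -- Key statement: a middle nucleus element killing a nonzero codeword is zero
  have key : ∀ Z ∈ middleNucleus C, (∃ C0 ∈ C, C0 ≠ 0 ∧ Z * C0 = 0) → Z = 0 := by
    intro Z hZ ⟨C0, hC0, hC0ne, hZC0⟩
    by_contra hZne
    -- range C0 ≤ ker Z
    have hle : LinearMap.range C0.mulVecLin ≤ LinearMap.ker Z.mulVecLin := by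
      rintro x ⟨v, rfl⟩
      simp only [LinearMap.mem_ker, Matrix.mulVecLin_apply]
      rw [Matrix.mulVec_mulVec, hZC0, Matrix.zero_mulVec]
    have h1 : d ≤ Module.finrank K (LinearMap.ker Z.mulVecLin) := by
      refine le_trans ?_ (Submodule.finrank_mono hle)
      exact hrk C0 hC0 hC0ne
    have h2 := rank_nullity_mat Z
    -- Z * M is a nonzero codeword
    have hZM : Z * M ∈ C := hZ M hM
    have hZMne : Z * M ≠ 0 := by
      intro hzm
      apply hZne
      apply matrix_eq_zero_of_mulVec
      intro v
      obtain ⟨w, hw⟩ := (LinearMap.range_eq_top.1 hMtop) v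
      have : Z.mulVec (M.mulVec w) = (Z * M).mulVec w := Matrix.mulVec_mulVec ..
      rw [← hw]
      simp only [Matrix.mulVecLin_apply] at *
      rw [this, hzm, Matrix.zero_mulVec]
    have h3 : d ≤ (Z * M).rank := hrk _ hZM hZMne
    have h4 : (Z * M).rank ≤ Z.rank := Matrix.rank_mul_le_left Z M
    omega
  refine ⟨key, fun hK => ?_⟩
  have hsub : ∀ X ∈ C, ∀ Y ∈ C, X - Y ∈ C := by
    intro X hX Y hY
    have := hadd X hX _ (hsmul (-1) Y hY)
    simpa [sub_eq_add_neg] using this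
  -- multiplication by a nonzero nucleus element is a bijection of C
  have hbij : ∀ Z ∈ middleNucleus C, Z ≠ 0 → Set.BijOn (fun X => Z * X) C C := by
    intro Z hZ hZne
    have hmaps : Set.MapsTo (fun X => Z * X) C C := fun X hX => hZ X hX
    have hinj : Set.InjOn (fun X => Z * X) C := by
      intro X hX Y hY hXY
      by_contra hne
      have hXY' : Z * X = Z * Y := hXY
      exact hZne (key Z hZ ⟨X - Y, hsub X hX Y hY, sub_ne_zero.2 hne, by
        rw [Matrix.mul_sub, hXY', sub_self]⟩)
    exact ((Set.toFinite C).injOn_iff_bijOn_of_mapsTo hmaps).1 hinj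
  have hunit : ∀ Z ∈ middleNucleus C, Z ≠ 0 → IsUnit Z := by
    intro Z hZ hZne
    obtain ⟨X, hX, hZX⟩ := (hbij Z hZ hZne).surjOn hM
    have hZrank : Z.rank = m := by
      have h1 : (Z * X).rank ≤ Z.rank := Matrix.rank_mul_le_left Z X
      have h2 : Z.rank ≤ m := by
        simpa using Matrix.rank_le_card_height Z
      simp only at hZX
      rw [hZX, hMrank] at h1
      omega
    -- rank m implies injective mulVec
    rw [← Matrix.mulVec_injective_iff_isUnit]
    have hker : LinearMap.ker Z.mulVecLin = ⊥ := by
      apply Submodule.finrank_eq_zero.1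
      have := rank_nullity_mat Z
      omega
    have := LinearMap.ker_eq_bot.1 hker
    simpa [← Matrix.coe_mulVecLin] using this
  refine ⟨hunit, ?_⟩
  rcases Nat.eq_zero_or_pos m with hm | hm
  · subst hm
    intro Z _ W _
    have : ∀ A B : Matrix (Fin 0) (Fin 0) K, A = B := by
      intro A B; ext i; exact i.elim0
    exact this _ _
  · -- the middle nucleus as a subring
    set N : Subring (Matrix (Fin m) (Fin m) K) :=
      { carrier := middleNucleus C
        one_mem' := by intro M hM; simpa using hM
        mul_mem' := by
          intro a b ha hb M hM
          rw [Matrix.mul_assoc]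
          exact ha _ (hb M hM)
        add_mem' := by
          intro a b ha hb M hM
          rw [Matrix.add_mul]
          exact hadd _ (ha M hM) _ (hb M hM)
        zero_mem' := by
          intro M hM
          simpa using h0
        neg_mem' := by
          intro a ha M hM
          rw [Matrix.neg_mul]
          have := hsmul (-1) _ (ha M hM)
          simpa using this } with hN
    haveI : Finite N := Subtype.finite
    haveI : Nontrivial N := by
      refine ⟨1, 0, fun h => ?_⟩
      have h' : (1 : Matrix (Fin m) (Fin m) K) = 0 := Subtype.ext_iff.1 h
      have := congrFun (congrFun h' ⟨0, hm⟩) ⟨0, hm⟩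
      simp [Matrix.one_apply_eq] at this
    haveI : NoZeroDivisors N := by
      constructor
      intro a b hab
      by_cases ha : a = 0
      · exact Or.inl ha
      · right
        have haM : (a : Matrix (Fin m) (Fin m) K) ≠ 0 := by
          intro h; exact ha (Subtype.ext h)
        have hu : IsUnit (a : Matrix (Fin m) (Fin m) K) := hunit a a.2 haM
        have hab' : (a : Matrix (Fin m) (Fin m) K) * b = 0 := by
          exact_mod_cast Subtype.ext_iff.1 hab
        exact Subtype.ext (hu.mul_right_eq_zero.1 hab')
    haveI : IsDomain N := NoZeroDivisors.to_isDomain _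
    have hfield := Finite.isDomain_to_isField N
    intro Z hZ W hW
    have := hfield.mul_comm (⟨Z, hZ⟩ : N) (⟨W, hW⟩ : N)
    simpa using Subtype.ext_iff.1 this
end

section
/- Let C be a linear MRD code in F_q^{m×n} with m ≤ n and minimum distance d > 1. Then the middle nucleus N_m(C) is a finite field. -/
open Matrix

open Module in
/-- Singleton-type bound: a subspace of `m × n` matrices all of whose columns lie in a
fixed subspace `U` and all of whose nonzero elements have rank at least `d` has
dimension at most `n * (dim U + 1 - d)`. -/
lemma mrd_aux_singleton {m n d : ℕ} {F : Type*} [Field F] (hd : 1 ≤ d)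
    (D : Submodule F (Matrix (Fin m) (Fin n) F)) (U : Submodule F (Fin m → F))
    (hcol : ∀ M ∈ D, ∀ w : Fin n → F, M *ᵥ w ∈ U)
    (hrk : ∀ M ∈ D, M ≠ 0 → d ≤ M.rank) :
    Module.finrank F D ≤ n * (Module.finrank F U + 1 - d) := by
  classical
  set u := Module.finrank F U with hu
  set k := u + 1 - d with hk
  have hku : k ≤ u := by omega
  obtain ⟨V, hV⟩ := U.exists_isCompl
  let π : (Fin m → F) →ₗ[F] U := U.linearProjOfIsCompl V hV
  let e : U ≃ₗ[F] (Fin u → F) := (Module.finBasis F U).equivFun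
  let p : (Fin u → F) →ₗ[F] (Fin k → F) := LinearMap.funLeft F F (Fin.castLE hku)
  let g : U →ₗ[F] (Fin k → F) := p ∘ₗ (e : U →ₗ[F] (Fin u → F))
  have hgsurj : Function.Surjective g := by
    have hp : Function.Surjective p :=
      LinearMap.funLeft_surjective_of_injective F F _ (Fin.castLE_injective hku)
    exact hp.comp e.surjective
  have hgker : Module.finrank F (LinearMap.ker g) ≤ d - 1 := by
    have h1 := LinearMap.finrank_range_add_finrank_ker g
    rw [LinearMap.range_eq_top.mpr hgsurj, finrank_top] at h1
    have h2 : finrank F (Fin k → F) = k := Module.finrank_fin_fun F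
    omega
  let f : (Fin m → F) →ₗ[F] (Fin k → F) := g ∘ₗ π
  let A : Matrix (Fin k) (Fin m) F := LinearMap.toMatrix' f
  have hA : ∀ v, A *ᵥ v = f v := fun v => by
    rw [← Matrix.toLin'_apply, Matrix.toLin'_toMatrix']
  let Φ : D →ₗ[F] Matrix (Fin k) (Fin n) F :=
    { toFun := fun x => A * x.val
      map_add' := fun x y => by simp [Matrix.mul_add]
      map_smul' := fun c x => by simp [Matrix.mul_smul] }
  have hinj : Function.Injective Φ := by
    rw [← LinearMap.ker_eq_bot, LinearMap.ker_eq_bot']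
    intro x hx
    have hx' : A * (x : Matrix (Fin m) (Fin n) F) = 0 := hx
    by_contra hx0
    have hxne : (x : Matrix (Fin m) (Fin n) F) ≠ 0 := by
      intro h
      exact hx0 (Subtype.ext h)
    have hd' := hrk x.val x.2 hxne
    have hsub : LinearMap.range (x.val).mulVecLin ≤
        Submodule.map U.subtype (LinearMap.ker g) := by
      rintro v ⟨w, rfl⟩
      have hvU : (x.val).mulVecLin w ∈ U := hcol x.val x.2 w
      refine ⟨⟨_, hvU⟩, ?_, rfl⟩
      have h0 : A *ᵥ ((x.val) *ᵥ w) = 0 := by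
        rw [Matrix.mulVec_mulVec, hx', Matrix.zero_mulVec]
      rw [hA] at h0
      have hπ : π ((x.val).mulVecLin w) = ⟨_, hvU⟩ :=
        Submodule.linearProjOfIsCompl_apply_left hV ⟨_, hvU⟩
      have : g (π ((x.val).mulVecLin w)) = 0 := h0
      rwa [hπ] at this
    have hle : (x.val).rank ≤ d - 1 := by
      have h1 := Submodule.finrank_mono hsub
      rw [Submodule.finrank_map_subtype_eq] at h1
      exact h1.trans hgker
    omega
  have hfin := LinearMap.finrank_le_finrank_of_injective hinj
  calc Module.finrank F D ≤ finrank F (Matrix (Fin k) (Fin n) F) := hfin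
    _ = k * n := by simp [Module.finrank_matrix]
    _ = n * k := mul_comm _ _

/-- The middle nucleus of a rank-metric code, as a subring of the square matrices. -/
def mrdMidNucleus {m n : ℕ} {F : Type*} [Field F]
    (C : Submodule F (Matrix (Fin m) (Fin n) F)) : Subring (Matrix (Fin m) (Fin m) F) where
  carrier := {X | ∀ M ∈ C, X * M ∈ C}
  zero_mem' := by intro M hM; rw [Matrix.zero_mul]; exact C.zero_mem
  one_mem' := by intro M hM; rw [Matrix.one_mul]; exact hM
  add_mem' := by
    intro a b ha hb M hM
    rw [Matrix.add_mul]; exact C.add_mem (ha M hM) (hb M hM)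
  neg_mem' := by intro a ha M hM; rw [Matrix.neg_mul]; exact C.neg_mem (ha M hM)
  mul_mem' := by intro a b ha hb M hM; rw [Matrix.mul_assoc]; exact ha _ (hb M hM)

@[simp] lemma mem_mrdMidNucleus {m n : ℕ} {F : Type*} [Field F]
    {C : Submodule F (Matrix (Fin m) (Fin n) F)} {X : Matrix (Fin m) (Fin m) F} :
    X ∈ mrdMidNucleus C ↔ ∀ M ∈ C, X * M ∈ C := Iff.rfl

set_option maxHeartbeats 1000000 in
set_option synthInstance.maxHeartbeats 200000 in
/-- Let `C` be a linear MRD code in `F_q^{m×n}` (`m ≤ n`) with minimum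
distance `d > 1`. Then the middle nucleus `N_m(C)` is a finite field: all its nonzero
elements are invertible and it is commutative. -/
theorem mrd_middleNucleus_field {m n d : ℕ} {F : Type*} [Field F] [Fintype F]
    (C : Submodule F (Matrix (Fin m) (Fin n) F))
    (hmn : m ≤ n) (hd1 : 1 < d) (hdm : d ≤ m)
    (hdist : ∀ A ∈ C, ∀ B ∈ C, A ≠ B → d ≤ (A - B).rank)
    (hattain : ∃ A ∈ C, ∃ B ∈ C, A ≠ B ∧ (A - B).rank = d)
    (hMRD : Nat.card C = Fintype.card F ^ (n * (m - d + 1))) :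
    (∀ Z : Matrix (Fin m) (Fin m) F, (∀ M ∈ C, Z * M ∈ C) → Z ≠ 0 → IsUnit Z) ∧
    (∀ Z W : Matrix (Fin m) (Fin m) F,
      (∀ M ∈ C, Z * M ∈ C) → (∀ M ∈ C, W * M ∈ C) → Z * W = W * Z) := by
  classical
  have hm0 : 0 < m := by omega
  have hn0 : 0 < n := lt_of_lt_of_le hm0 hmn
  have hrkC : ∀ M ∈ C, M ≠ 0 → d ≤ M.rank := by
    intro M hM h0
    have := hdist M hM 0 C.zero_mem h0
    simpa using this
  letI : Fintype ↥C := Fintype.ofFinite _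
  have hfr : Module.finrank F ↥C = n * (m - d + 1) := by
    have hq : 2 ≤ Fintype.card F := Fintype.one_lt_card
    have hcard : Fintype.card ↥C = Fintype.card F ^ Module.finrank F ↥C :=
      Module.card_eq_pow_finrank (K := F) (V := ↥C)
    have h2 : Fintype.card F ^ Module.finrank F ↥C
        = Fintype.card F ^ (n * (m - d + 1)) := by
      rw [← hcard, ← Nat.card_eq_fintype_card, hMRD]
    exact Nat.pow_right_injective hq h2
  have key : ∀ Z : Matrix (Fin m) (Fin m) F,
      (∀ M ∈ C, Z * M ∈ C) → Z ≠ 0 → IsUnit Z := by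
    intro Z hZ hZ0
    let ψ : ↥C →ₗ[F] Matrix (Fin m) (Fin n) F :=
      { toFun := fun x => Z * x.val
        map_add' := fun x y => by simp [Matrix.mul_add]
        map_smul' := fun c x => by simp [Matrix.mul_smul] }
    set r := Z.rank with hr
    have hrm : r ≤ m := Z.rank_le_height
    have hr1 : 1 ≤ r := by
      by_contra h
      have h0 : Z.rank = 0 := by omega
      have hbot : LinearMap.range Z.mulVecLin = ⊥ :=
        Submodule.finrank_eq_zero.mp h0
      have hZlin : Z.mulVecLin = 0 := LinearMap.range_eq_bot.mp hbot
      apply hZ0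
      ext i j
      have := congrFun (congrArg (fun (f : (Fin m → F) →ₗ[F] (Fin m → F)) => f (Pi.single j 1)) hZlin) i
      simpa [Matrix.mulVecLin_apply, Matrix.mulVec_single] using this
    have hrange : Module.finrank F (LinearMap.range Z.mulVecLin) = r := rfl
    have hkerZ : Module.finrank F (LinearMap.ker Z.mulVecLin) = m - r := by
      have h1 := LinearMap.finrank_range_add_finrank_ker Z.mulVecLin
      rw [Module.finrank_fin_fun] at h1
      omega
    rcases eq_or_lt_of_le hrm with hrm' | hrm'
    · -- full rank: Z is invertible
      have htop : LinearMap.range Z.mulVecLin = ⊤ := by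
        apply Submodule.eq_top_of_finrank_eq
        rw [hrange, Module.finrank_fin_fun, hrm']
      have hsurj : Function.Surjective Z.mulVecLin := LinearMap.range_eq_top.mp htop
      have hinj : Function.Injective Z.mulVecLin :=
        LinearMap.injective_iff_surjective.mpr hsurj
      exact Matrix.mulVec_injective_iff_isUnit.mp hinj
    · exfalso
      have him : Module.finrank F (LinearMap.range ψ) ≤ n * (r + 1 - d) := by
        have h := mrd_aux_singleton (by omega : 1 ≤ d) (LinearMap.range ψ)
          (LinearMap.range Z.mulVecLin) ?_ ?_
        · rwa [hrange] at h
        · rintro M ⟨x, rfl⟩ w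
          exact ⟨x.val *ᵥ w, Matrix.mulVec_mulVec w Z x.val⟩
        · rintro M ⟨x, rfl⟩ h0
          exact hrkC _ (hZ x.val x.2) h0
      have hker2 : Module.finrank F (LinearMap.ker ψ) ≤ n * ((m - r) + 1 - d) := by
        have h := mrd_aux_singleton (by omega : 1 ≤ d)
          (Submodule.map C.subtype (LinearMap.ker ψ))
          (LinearMap.ker Z.mulVecLin) ?_ ?_
        · rwa [Submodule.finrank_map_subtype_eq, hkerZ] at h
        · rintro M ⟨x, hx, rfl⟩ w
          have hx' : Z * x.val = 0 := hx
          show Z *ᵥ (x.val *ᵥ w) = 0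
          rw [Matrix.mulVec_mulVec, hx', Matrix.zero_mulVec]
        · rintro M ⟨x, hx, rfl⟩ h0
          exact hrkC x.val x.2 h0
      have hsum := LinearMap.finrank_range_add_finrank_ker ψ
      rw [hfr] at hsum
      have hlt : (r + 1 - d) + ((m - r) + 1 - d) < m - d + 1 := by omega
      have hmul : n * ((r + 1 - d) + ((m - r) + 1 - d))
          = n * (r + 1 - d) + n * ((m - r) + 1 - d) := Nat.mul_add n _ _
      have hstrict : n * ((r + 1 - d) + ((m - r) + 1 - d)) < n * (m - d + 1) :=
        Nat.mul_lt_mul_of_pos_left hlt hn0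
      omega
  refine ⟨key, ?_⟩
  intro Z W hZ hW
  set N : Subring (Matrix (Fin m) (Fin m) F) := mrdMidNucleus C with hN
  have hZN : Z ∈ N := hZ
  have hWN : W ∈ N := hW
  have h01 : (0 : Matrix (Fin m) (Fin m) F) ≠ 1 := by
    intro h
    have := congrFun (congrFun h ⟨0, hm0⟩) ⟨0, hm0⟩
    simp [Matrix.one_apply_eq] at this
  haveI : Nontrivial ↥N := ⟨0, 1, fun h => h01 (congrArg Subtype.val h)⟩
  haveI : NoZeroDivisors ↥N := by
    constructor
    intro a b hab
    by_cases ha : a = 0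
    · exact Or.inl ha
    · right
      have haM : IsUnit (a : Matrix (Fin m) (Fin m) F) :=
        key a a.2 (fun h => ha (Subtype.ext h))
      have hab' : (a : Matrix (Fin m) (Fin m) F) * b = 0 := congrArg Subtype.val hab
      exact Subtype.ext (haM.mul_right_eq_zero.mp hab')
  haveI : IsDomain ↥N := NoZeroDivisors.to_isDomain _
  have hfield := Finite.isDomain_to_isField ↥N
  have hcomm := hfield.mul_comm ⟨Z, hZN⟩ ⟨W, hWN⟩
  exact congrArg Subtype.val hcomm
end

section
/- Let H_{k,s}(η,h) = {a_0 x + a_1 x^{q^s} + ... + a_{k−1} x^{q^{s(k−1)}} + η a_0^{q^h} x^{q^{sk}} : a_i ∈ F_{q^n}} be a generalized twisted Gabidulin code with gcd(s,n) = 1, 2 ≤ k ≤ n−2, and η ∈ F_{q^n}* with N_{q^{sn}/q^s}(η) ≠ (−1)^{nk}. Then its middle nucleus (as a set of q-polynomials φ with f ∘ φ ∈ H for all f ∈ H) is isomorphic to F_{q^{gcd(n, sk−h)}}, and its right nucleus (φ with φ ∘ f ∈ H for all f) is isomorphic to F_{q^{gcd(n,h)}}. -/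
/-- The generalized twisted Gabidulin code `H_{k,s}(η,h)` as a set of `q`-polynomial maps
on `L = F_{q^n}`. -/
def twistedGabidulin {L : Type*} [Field L] (q n k s h : ℕ) [NeZero k] (η : L) : Set (L → L) :=
  {f | ∃ a : Fin k → L,
    f = fun x => (∑ i : Fin k, a i * x ^ q ^ (s * (i : ℕ)))
          + η * (a 0) ^ q ^ h * x ^ q ^ (s * k)}

/-- `φ` is an `F_q`-linear endomorphism of `L = F_{q^n}` (additive and commuting with
multiplication by elements of the fixed field of `x ↦ x^q`). -/
def IsQEnd {L : Type*} [Field L] (q : ℕ) (φ : L → L) : Prop :=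
  (∀ x y : L, φ (x + y) = φ x + φ y) ∧ (∀ c x : L, c ^ q = c → φ (c * x) = c * φ x)

section TGaux

variable {L : Type*} [Field L] (q n : ℕ)

lemma tg_powpow (x : L) (a b : ℕ) : (x ^ q ^ a) ^ q ^ b = x ^ q ^ (a + b) := by
  rw [← pow_mul, ← pow_add]

lemma tg_pow_n [Fintype L] (hcard : Fintype.card L = q ^ n) (x : L) : x ^ q ^ n = x := by
  rw [← hcard]; exact FiniteField.pow_card x

lemma tg_pow_mod [Fintype L] (hcard : Fintype.card L = q ^ n) (x : L) (a : ℕ) :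
    x ^ q ^ a = x ^ q ^ (a % n) := by
  have key : ∀ (y : L) (t : ℕ), y ^ q ^ (n * t) = y := by
    intro y t
    induction t with
    | zero => simp
    | succ t ih =>
      have h1 : n * (t + 1) = n * t + n := by ring
      rw [h1, ← tg_powpow, ih, tg_pow_n q n hcard]
  conv_lhs => rw [← Nat.div_add_mod a n]
  rw [Nat.add_comm, ← tg_powpow, key]

lemma tg_frob [Fintype L] (hq : ∃ e : ℕ, 0 < e ∧ q = ringChar L ^ e) (m : ℕ) :
    ∃ F : L →+* L, ∀ y : L, F y = y ^ q ^ m := by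
  obtain ⟨e, he, hqe⟩ := hq
  set p := ringChar L with hp
  haveI : CharP L p := ringChar.charP L
  have hprime : p.Prime := CharP.char_is_prime L p
  haveI : ExpChar L p := ExpChar.prime hprime
  refine ⟨iterateFrobenius L p (e * m), fun y => ?_⟩
  rw [iterateFrobenius_def, hqe, ← pow_mul]

lemma tg_q_two [Fintype L] (hq : ∃ e : ℕ, 0 < e ∧ q = ringChar L ^ e) : 2 ≤ q := by
  obtain ⟨e, he, hqe⟩ := hq
  haveI : CharP L (ringChar L) := ringChar.charP L
  have hprime : (ringChar L).Prime := CharP.char_is_prime L _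
  calc 2 ≤ ringChar L := hprime.two_le
  _ = ringChar L ^ 1 := (pow_one _).symm
  _ ≤ ringChar L ^ e := Nat.pow_le_pow_right hprime.one_lt.le he
  _ = q := hqe.symm

lemma tg_neg_one_pow [Fintype L] (hq : ∃ e : ℕ, 0 < e ∧ q = ringChar L ^ e) (m : ℕ) :
    (-1 : L) ^ q ^ m = -1 := by
  obtain ⟨e, he, hqe⟩ := hq
  haveI : CharP L (ringChar L) := ringChar.charP L
  have hprime : (ringChar L).Prime := CharP.char_is_prime L _
  rcases eq_or_ne (ringChar L) 2 with h2 | h2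
  · haveI : CharP L 2 := h2 ▸ ringChar.charP L
    have : (-1 : L) = 1 := by
      rw [neg_eq_iff_add_eq_zero, ← two_smul ℕ (1:L)]
      simp [CharTwo.two_eq_zero]
    rw [this, one_pow]
  · have hodd : Odd (q ^ m) := by
      refine Odd.pow ?_
      rw [hqe]
      exact Odd.pow (hprime.odd_of_ne_two h2)
    exact hodd.neg_one_pow

end TGaux

/-- reduced q-polynomial given by coefficient vector indexed by `ZMod n` -/
def qpoly (q : ℕ) {n : ℕ} [NeZero n] {L : Type*} [Field L] (c : ZMod n → L) : L → L :=
  fun x => ∑ i : ZMod n, c i * x ^ q ^ (ZMod.val i)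

section QP

variable {L : Type*} [Field L] [Fintype L] (q : ℕ) {n : ℕ} [NeZero n]

lemma qpoly_single (t₀ : ZMod n) (v : L) (x : L) :
    qpoly q (fun t => if t = t₀ then v else 0) x = v * x ^ q ^ t₀.val := by
  rw [qpoly]
  rw [Finset.sum_eq_single t₀]
  · simp
  · intro b _ hb; simp [hb]
  · intro hb; exact absurd (Finset.mem_univ _) hb

lemma qpoly_ext (hq : ∃ e : ℕ, 0 < e ∧ q = ringChar L ^ e)
    (hcard : Fintype.card L = q ^ n) {c d : ZMod n → L}
    (h : ∀ x, qpoly q c x = qpoly q d x) : c = d := by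
  have hq2 : 2 ≤ q := tg_q_two q hq
  set P : Polynomial L := ∑ i : ZMod n, Polynomial.C (c i - d i) * Polynomial.X ^ (q ^ i.val)
    with hP
  have heval : ∀ x : L, P.eval x = 0 := by
    intro x
    rw [hP, Polynomial.eval_finset_sum]
    simp only [Polynomial.eval_mul, Polynomial.eval_C, Polynomial.eval_pow, Polynomial.eval_X]
    have := h x
    rw [qpoly, qpoly] at this
    simp only [sub_mul]
    rw [Finset.sum_sub_distrib, this, sub_self]
  have hdeg : P.natDegree < Fintype.card L := by
    have h1 : P.natDegree ≤ q ^ (n - 1) := by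
      refine Polynomial.natDegree_sum_le_of_forall_le _ _ (fun i _ => ?_)
      refine le_trans (Polynomial.natDegree_C_mul_le _ _) ?_
      rw [Polynomial.natDegree_X_pow]
      exact Nat.pow_le_pow_right (by omega) (by have := ZMod.val_lt i; omega)
    refine lt_of_le_of_lt h1 ?_
    rw [hcard]
    have hn : 0 < n := Nat.pos_of_ne_zero (NeZero.ne n)
    exact Nat.pow_lt_pow_right (by omega) (by omega)
  have hP0 : P = 0 :=
    Polynomial.eq_zero_of_natDegree_lt_card_of_eval_eq_zero P Function.injective_id
      (fun x => heval x) hdeg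
  funext j
  have hco : P.coeff (q ^ j.val) = c j - d j := by
    rw [hP, Polynomial.finset_sum_coeff]
    rw [Finset.sum_eq_single j]
    · simp [sub_mul, Polynomial.coeff_sub, Polynomial.coeff_C_mul, Polynomial.coeff_X_pow]
    · intro b _ hb
      have hval : b.val ≠ j.val := fun hv => hb (ZMod.val_injective n hv)
      have : q ^ b.val ≠ q ^ j.val := fun hpow =>
        hval (Nat.pow_right_injective hq2 hpow)
      simp [sub_mul, Polynomial.coeff_sub, Polynomial.coeff_C_mul, Polynomial.coeff_X_pow, Ne.symm this]
    · intro hb; exact absurd (Finset.mem_univ _) hb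
  rw [hP0] at hco
  simp only [Polynomial.coeff_zero] at hco
  have := hco.symm
  rwa [sub_eq_zero] at this

end QP

section QP2

variable {L : Type*} [Field L] [Fintype L] (q : ℕ) {n : ℕ} [NeZero n]

omit [Fintype L] in
lemma tg_val_add_nat (i : ZMod n) (m : ℕ) : (i + (m : ZMod n)).val = (m + i.val) % n := by
  have h1 : i.val % n = i.val := Nat.mod_eq_of_lt (ZMod.val_lt i)
  rw [ZMod.val_add, ZMod.val_natCast]
  conv_rhs => rw [Nat.add_mod, h1]
  rw [Nat.add_comm]

lemma qpoly_frob (hq : ∃ e : ℕ, 0 < e ∧ q = ringChar L ^ e)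
    (hcard : Fintype.card L = q ^ n) (c : ZMod n → L) (m : ℕ) (x : L) :
    (qpoly q c x) ^ q ^ m = qpoly q (fun j => (c (j - (m : ZMod n))) ^ q ^ m) x := by
  obtain ⟨F, hF⟩ := tg_frob q hq m
  rw [qpoly, qpoly, ← hF, map_sum]
  refine Fintype.sum_equiv (Equiv.addRight ((m : ZMod n))) _ _ (fun i => ?_)
  simp only [Equiv.coe_addRight, add_sub_cancel_right]
  rw [map_mul, map_pow, hF, hF, tg_powpow, tg_val_add_nat, ← tg_pow_mod q n hcard]

lemma qpoly_comp_pow (hcard : Fintype.card L = q ^ n) (c : ZMod n → L) (m : ℕ) (x : L) :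
    qpoly q c (x ^ q ^ m) = qpoly q (fun j => c (j - (m : ZMod n))) x := by
  rw [qpoly, qpoly]
  refine Fintype.sum_equiv (Equiv.addRight ((m : ZMod n))) _ _ (fun i => ?_)
  simp only [Equiv.coe_addRight, add_sub_cancel_right]
  rw [tg_powpow, tg_val_add_nat, ← tg_pow_mod q n hcard]

lemma qpoly_mul_pow_arg (hcard : Fintype.card L = q ^ n) (c : ZMod n → L) (b : L) (m : ℕ)
    (x : L) :
    qpoly q c (b * x ^ q ^ m) =
      qpoly q (fun j => c (j - (m : ZMod n)) * b ^ q ^ ((j - (m : ZMod n)).val)) x := by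
  rw [qpoly, qpoly]
  refine Fintype.sum_equiv (Equiv.addRight ((m : ZMod n))) _ _ (fun i => ?_)
  simp only [Equiv.coe_addRight, add_sub_cancel_right]
  rw [mul_pow, tg_powpow, tg_val_add_nat, ← tg_pow_mod q n hcard]
  ring

lemma qpoly_add_arg (hq : ∃ e : ℕ, 0 < e ∧ q = ringChar L ^ e) (c : ZMod n → L) (x y : L) :
    qpoly q c (x + y) = qpoly q c x + qpoly q c y := by
  rw [qpoly, qpoly, qpoly, ← Finset.sum_add_distrib]
  refine Finset.sum_congr rfl (fun i _ => ?_)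
  obtain ⟨F, hF⟩ := tg_frob q hq i.val
  have hd : (x + y) ^ q ^ i.val = x ^ q ^ i.val + y ^ q ^ i.val := by
    rw [← hF, ← hF, ← hF, map_add]
  rw [hd, mul_add]

omit [Fintype L] in
lemma qpoly_smul (a : L) (c : ZMod n → L) (x : L) :
    a * qpoly q c x = qpoly q (fun j => a * c j) x := by
  rw [qpoly, qpoly, Finset.mul_sum]
  exact Finset.sum_congr rfl (fun i _ => by ring)

omit [Fintype L] in
lemma qpoly_addc (c d : ZMod n → L) (x : L) :
    qpoly q c x + qpoly q d x = qpoly q (fun j => c j + d j) x := by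
  rw [qpoly, qpoly, qpoly, ← Finset.sum_add_distrib]
  exact Finset.sum_congr rfl (fun i _ => by ring)


omit [Fintype L] in
lemma qpoly_mul_arg (c : ZMod n → L) (b : L) (x : L) :
    qpoly q c (b * x) = qpoly q (fun w => c w * b ^ q ^ w.val) x := by
  rw [qpoly, qpoly]
  refine Finset.sum_congr rfl (fun i _ => ?_)
  rw [mul_pow]
  ring

lemma tg_pair_ne (hq : ∃ e : ℕ, 0 < e ∧ q = ringChar L ^ e)
    (hcard : Fintype.card L = q ^ n) {t₀ t₁ : ZMod n} {v w : L} (hne : t₀ ≠ t₁)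
    (h : ∀ a : L, v * a ^ q ^ t₀.val + w * a ^ q ^ t₁.val = 0) : v = 0 ∧ w = 0 := by
  have hc : (fun t => (if t = t₀ then v else 0) + (if t = t₁ then w else 0)) =
      (fun _ : ZMod n => (0 : L)) := by
    refine qpoly_ext q hq hcard (fun a => ?_)
    rw [← qpoly_addc, qpoly_single, qpoly_single, h a]
    simp [qpoly]
  constructor
  · have := congrFun hc t₀
    simpa [hne, Ne.symm hne] using this
  · have := congrFun hc t₁
    simpa [hne, Ne.symm hne] using this

lemma tg_fix_mul (d : L) (a t : ℕ) (h : d ^ q ^ a = d) : d ^ q ^ (a * t) = d := by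
  induction t with
  | zero => simp
  | succ t ih =>
    have h1 : a * (t + 1) = a * t + a := by ring
    rw [h1, ← tg_powpow, ih, h]

lemma tg_fix_gcd (d : L) : ∀ a b : ℕ, d ^ q ^ a = d → d ^ q ^ b = d →
    d ^ q ^ (Nat.gcd a b) = d := by
  intro a
  induction a using Nat.strong_induction_on with
  | _ a ih =>
    intro b ha hb
    rcases Nat.eq_zero_or_pos a with h0 | h0
    · subst h0; simpa using hb
    · have hmod : d ^ q ^ (b % a) = d := by
        calc d ^ q ^ (b % a) = (d ^ q ^ (a * (b / a))) ^ q ^ (b % a) := by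
              rw [tg_fix_mul q d a _ ha]
          _ = d ^ q ^ (a * (b / a) + b % a) := tg_powpow q d _ _
          _ = d ^ q ^ b := by rw [Nat.div_add_mod]
          _ = d := hb
      rw [Nat.gcd_rec]
      exact ih (b % a) (Nat.mod_lt b h0) a hmod ha

lemma tg_fix_of_dvd (d : L) (g m : ℕ) (hdvd : g ∣ m) (h : d ^ q ^ g = d) :
    d ^ q ^ m = d := by
  obtain ⟨t, rfl⟩ := hdvd
  exact tg_fix_mul q d g t h

end QP2

section Comb

variable {n : ℕ} [NeZero n]

lemma tg_cast_inj {a b : ℕ} (ha : a < n) (hb : b < n) (h : ((a : ZMod n) = (b : ZMod n))) :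
    a = b := by
  have := congrArg ZMod.val h
  rwa [ZMod.val_cast_of_lt ha, ZMod.val_cast_of_lt hb] at this

lemma tg_val_eq_cast {t : ZMod n} {m : ℕ} (h : t.val = m) (hm : m < n) : t = (m : ZMod n) := by
  apply ZMod.val_injective
  rw [ZMod.val_cast_of_lt hm, h]

lemma tg_neg_one_cast (hn : 1 ≤ n) : ((n - 1 : ℕ) : ZMod n) = -1 := by
  have h1 : ((n : ℕ) : ZMod n) = 0 := ZMod.natCast_self n
  rw [Nat.cast_sub hn, h1, Nat.cast_one, zero_sub]

lemma tg_comb {k : ℕ} (hk2 : 2 ≤ k) (hkn : k ≤ n - 2) (hn4 : 4 ≤ n) (t : ZMod n)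
    (H : ∀ j : ℕ, 1 ≤ j → j ≤ k - 1 → (t + (j : ZMod n)).val ≤ k) :
    t = -1 ∨ t = 0 ∨ t = 1 := by
  set a := t.val with ha
  have hal : a < n := ZMod.val_lt t
  have hvj : ∀ j : ℕ, j < n → (t + (j : ZMod n)).val = (a + j) % n := by
    intro j hj
    rw [ZMod.val_add, ZMod.val_natCast, Nat.mod_eq_of_lt hj, ← ha]
  have key : a = n - 1 ∨ a = 0 ∨ a = 1 := by
    by_contra hcon
    push_neg at hcon
    rcases le_or_gt (a + k) n with hc | hc
    · -- no wrap : use j = k - 1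
      have hj := H (k - 1) (by omega) (le_refl _)
      rw [hvj (k - 1) (by omega)] at hj
      rw [Nat.mod_eq_of_lt (by omega)] at hj
      omega
    · -- wrap : use j = n - 1 - a
      have hj := H (n - 1 - a) (by omega) (by omega)
      rw [hvj (n - 1 - a) (by omega)] at hj
      have he : a + (n - 1 - a) = n - 1 := by omega
      rw [he, Nat.mod_eq_of_lt (by omega)] at hj
      omega
  rcases key with hk | hk | hk
  · left
    rw [tg_val_eq_cast hk (by omega), tg_neg_one_cast (by omega)]
  · right; left
    rw [tg_val_eq_cast hk (by omega), Nat.cast_zero]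
  · right; right
    rw [tg_val_eq_cast hk (by omega), Nat.cast_one]

end Comb
section Mem

variable {L : Type*} [Field L] [Fintype L] {q n k s h : ℕ} [NeZero k] [NeZero n] {η : L}

lemma tg_mem_structure (hcard : Fintype.card L = q ^ n) (hs : Nat.gcd s n = 1)
    (hk2 : 2 ≤ k) (hkn : k ≤ n - 2) {f : L → L}
    (hf : f ∈ twistedGabidulin (L := L) q n k s h η) :
    ∃ c : ZMod n → L,
      (∀ t : ZMod n, (∀ i : ℕ, i ≤ k → t ≠ ((s * i : ℕ) : ZMod n)) → c t = 0) ∧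
      (c ((s * k : ℕ) : ZMod n) = η * (c ((0 : ℕ) : ZMod n)) ^ q ^ h) ∧
      (∀ x, f x = qpoly q c x) := by
  have hn4 : 4 ≤ n := by omega
  have hk0 : 0 < k := by omega
  obtain ⟨a, rfl⟩ := hf
  have hinj : ∀ i i' : ℕ, i ≤ k → i' ≤ k →
      ((s * i : ℕ) : ZMod n) = ((s * i' : ℕ) : ZMod n) → i = i' := by
    intro i i' hi hi' hcast
    have hu : ((s : ZMod n)) * (i : ZMod n) = (s : ZMod n) * (i' : ZMod n) := by
      push_cast at hcast ⊢; exact hcast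
    have hcop : Nat.Coprime s n := hs
    have hueq : ((ZMod.unitOfCoprime s hcop : (ZMod n)ˣ) : ZMod n) = (s : ZMod n) :=
      ZMod.coe_unitOfCoprime s hcop
    rw [← hueq] at hu
    have : (i : ZMod n) = (i' : ZMod n) := (Units.mul_right_inj _).mp hu
    exact tg_cast_inj (by omega) (by omega) this
  set B : ℕ → L := fun i => if hi : i < k then a ⟨i, hi⟩ else η * (a 0) ^ q ^ h with hB
  set c : ZMod n → L :=
    fun t => ∑ i ∈ Finset.range (k + 1), if t = ((s * i : ℕ) : ZMod n) then B i else 0 with hc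
  have hceval : ∀ i : ℕ, i ≤ k → c ((s * i : ℕ) : ZMod n) = B i := by
    intro i hi
    simp only [hc]
    rw [Finset.sum_eq_single i]
    · simp
    · intro i' hi' hne
      rw [if_neg]
      intro hcast
      exact hne (hinj i' i (by simp at hi'; omega) hi hcast.symm)
    · intro hmem
      exact absurd (Finset.mem_range.mpr (by omega)) hmem
  have hzero : (0 : Fin k) = ⟨0, hk0⟩ := by
    ext; simp
  refine ⟨c, ?_, ?_, ?_⟩
  · intro t ht
    simp only [hc]
    refine Finset.sum_eq_zero (fun i hi => ?_)
    rw [if_neg (ht i (by simp at hi; omega))]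
  · have h1 := hceval k (le_refl k)
    have h2 : c ((0 : ℕ) : ZMod n) = B 0 := by
      have := hceval 0 (by omega)
      simpa using this
    rw [h1, h2]
    simp only [hB]
    rw [dif_neg (lt_irrefl k), dif_pos hk0, ← hzero]
  · intro x
    rw [qpoly]
    beta_reduce
    refine Eq.symm ?_
    have hterm : ∀ t : ZMod n,
        c t * x ^ q ^ t.val = ∑ i ∈ Finset.range (k + 1),
          if t = ((s * i : ℕ) : ZMod n) then B i * x ^ q ^ t.val else 0 := by
      intro t
      simp only [hc]
      rw [Finset.sum_mul]
      exact Finset.sum_congr rfl (fun i _ => by rw [ite_mul, zero_mul])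
    calc (∑ t : ZMod n, c t * x ^ q ^ t.val)
        = ∑ t : ZMod n, ∑ i ∈ Finset.range (k + 1),
            (if t = ((s * i : ℕ) : ZMod n) then B i * x ^ q ^ t.val else 0) :=
          Finset.sum_congr rfl (fun t _ => hterm t)
      _ = ∑ i ∈ Finset.range (k + 1), ∑ t : ZMod n,
            (if t = ((s * i : ℕ) : ZMod n) then B i * x ^ q ^ t.val else 0) :=
          Finset.sum_comm
      _ = ∑ i ∈ Finset.range (k + 1), B i * x ^ q ^ (s * i) := by
          refine Finset.sum_congr rfl (fun i _ => ?_)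
          rw [Finset.sum_ite_eq' Finset.univ ((s * i : ℕ) : ZMod n)
            (fun t => B i * x ^ q ^ t.val)]
          rw [if_pos (Finset.mem_univ _), ZMod.val_natCast, ← tg_pow_mod q n hcard]
      _ = (∑ i : Fin k, a i * x ^ q ^ (s * (i : ℕ))) + η * (a 0) ^ q ^ h * x ^ q ^ (s * k) := by
          rw [Finset.sum_range_succ]
          congr 1
          · rw [← Fin.sum_univ_eq_sum_range (fun i => B i * x ^ q ^ (s * i)) k]
            refine Finset.sum_congr rfl (fun i _ => ?_)
            simp only [hB, i.isLt, dif_pos]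
          · simp only [hB]
            rw [dif_neg (lt_irrefl k)]

lemma tg_monomial_mem (hq1 : 1 ≤ q) {j : ℕ} (hj1 : 1 ≤ j) (hjk : j < k) :
    (fun x : L => x ^ q ^ (s * j)) ∈ twistedGabidulin (L := L) q n k s h η := by
  refine ⟨fun i => if (i : ℕ) = j then 1 else 0, funext fun x => ?_⟩
  show x ^ q ^ (s * j) = _
  beta_reduce
  rw [if_neg (fun hcon : ((0 : Fin k) : ℕ) = j => by simp at hcon; omega)]
  rw [zero_pow (by positivity), mul_zero, zero_mul, add_zero]
  rw [Finset.sum_eq_single (⟨j, hjk⟩ : Fin k)]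
  · simp
  · intro b _ hb
    rw [if_neg, zero_mul]
    intro hv
    exact hb (Fin.ext hv)
  · intro hmem; exact absurd (Finset.mem_univ _) hmem

lemma tg_G_mem (hq1 : 1 ≤ q) (a₀ : L) :
    (fun x : L => a₀ * x + η * a₀ ^ q ^ h * x ^ q ^ (s * k)) ∈
      twistedGabidulin (L := L) q n k s h η := by
  refine ⟨fun i => if i = 0 then a₀ else 0, funext fun x => ?_⟩
  show a₀ * x + η * a₀ ^ q ^ h * x ^ q ^ (s * k) = _
  beta_reduce
  rw [if_pos rfl]
  congr 1
  rw [Finset.sum_eq_single (0 : Fin k)]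
  · simp
  · intro b _ hb
    rw [if_neg hb, zero_mul]
  · intro hmem; exact absurd (Finset.mem_univ _) hmem

end Mem
section Supp

variable {L : Type*} [Field L] [Fintype L] {q n k s h : ℕ} [NeZero n]

lemma tg_smul_cancel (hs : Nat.gcd s n = 1) {r r' : ZMod n}
    (hc : (s : ZMod n) * r = (s : ZMod n) * r') : r = r' := by
  have hcop : Nat.Coprime s n := hs
  have hueq : ((ZMod.unitOfCoprime s hcop : (ZMod n)ˣ) : ZMod n) = (s : ZMod n) :=
    ZMod.coe_unitOfCoprime s hcop
  rw [← hueq] at hc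
  exact (Units.mul_right_inj _).mp hc

lemma tg_kne (hn4 : 4 ≤ n) {m : ℕ} (h2 : 2 ≤ m) (hm : m ≤ n - 2) :
    (m : ZMod n) ≠ -1 ∧ (m : ZMod n) ≠ 0 ∧ (m : ZMod n) ≠ 1 := by
  refine ⟨?_, ?_, ?_⟩
  · rw [← tg_neg_one_cast (n := n) (by omega)]
    intro hcon
    have := tg_cast_inj (n := n) (by omega) (by omega) hcon
    omega
  · intro hcon
    rw [show (0 : ZMod n) = ((0 : ℕ) : ZMod n) by simp] at hcon
    have := tg_cast_inj (n := n) (by omega) (by omega) hcon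
    omega
  · intro hcon
    rw [show (1 : ZMod n) = ((1 : ℕ) : ZMod n) by simp] at hcon
    have := tg_cast_inj (n := n) (by omega) (by omega) hcon
    omega

lemma tg_support (hs : Nat.gcd s n = 1) (hk2 : 2 ≤ k) (hkn : k ≤ n - 2) (hn4 : 4 ≤ n)
    (c0 : ZMod n → L)
    (Hsup : ∀ j : ℕ, 1 ≤ j → j ≤ k - 1 → ∀ t : ZMod n,
      (∀ i : ℕ, i ≤ k → t ≠ ((s * i : ℕ) : ZMod n)) → c0 (t - ((s * j : ℕ) : ZMod n)) = 0) :
    ∀ r : ZMod n, r ≠ -1 → r ≠ 0 → r ≠ 1 → c0 ((s : ZMod n) * r) = 0 := by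
  intro r hm1 h0 h1
  have hcomb : ¬ (∀ j : ℕ, 1 ≤ j → j ≤ k - 1 → (r + (j : ZMod n)).val ≤ k) := by
    intro hcon
    rcases tg_comb hk2 hkn hn4 r hcon with hcc | hcc | hcc
    · exact hm1 hcc
    · exact h0 hcc
    · exact h1 hcc
  push_neg at hcomb
  obtain ⟨j, hj1, hjk, hjval⟩ := hcomb
  have hkey := Hsup j hj1 hjk ((s : ZMod n) * (r + (j : ZMod n))) ?_
  · have harg : (s : ZMod n) * (r + (j : ZMod n)) - ((s * j : ℕ) : ZMod n)
        = (s : ZMod n) * r := by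
      push_cast
      ring
    rwa [harg] at hkey
  · intro i hik hcon
    have hcon2 : (s : ZMod n) * (r + (j : ZMod n)) = (s : ZMod n) * (i : ZMod n) := by
      rw [hcon]; push_cast; ring
    have := tg_smul_cancel hs hcon2
    have hval : (r + (j : ZMod n)).val = i := by
      rw [this, ZMod.val_cast_of_lt (by omega)]
    omega

end Supp
section Norm

variable {L : Type*} [Field L] [Fintype L] {q n : ℕ}

lemma tg_pow_congr [NeZero n] (hcard : Fintype.card L = q ^ n) (x : L) (a b : ℕ)
    (hab : a % n = b % n) : x ^ q ^ a = x ^ q ^ b := by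
  rw [tg_pow_mod q n hcard x a, hab, ← tg_pow_mod q n hcard x b]

lemma tg_eta_norm (hq2 : 2 ≤ q) (hs1 : 1 ≤ s) (hn4 : n = 4) (η : L) :
    η ^ ((q ^ (s * n) - 1) / (q ^ s - 1)) =
      η * η ^ q ^ (s * 1) * η ^ q ^ (s * 2) * η ^ q ^ (s * 3) := by
  subst hn4
  have hQ2 : 2 ≤ q ^ s := by
    calc 2 = 2 ^ 1 := rfl
    _ ≤ 2 ^ s := Nat.pow_le_pow_right (by omega) hs1
    _ ≤ q ^ s := Nat.pow_le_pow_left hq2 s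
  have hdiv : (q ^ (s * 4) - 1) / (q ^ s - 1) = 1 + q ^ (s * 1) + q ^ (s * 2) + q ^ (s * 3) := by
    have hmul : q ^ (s * 4) - 1 = (1 + q ^ (s * 1) + q ^ (s * 2) + q ^ (s * 3)) * (q ^ s - 1) := by
      have h1 : q ^ (s * 1) = q ^ s := by rw [mul_one]
      have h2 : q ^ (s * 2) = q ^ s * q ^ s := by rw [← pow_add]; congr 1; ring
      have h3 : q ^ (s * 3) = q ^ s * q ^ s * q ^ s := by rw [← pow_add, ← pow_add]; congr 1; ring
      have h4 : q ^ (s * 4) = q ^ s * q ^ s * q ^ s * q ^ s := by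
        rw [← pow_add, ← pow_add, ← pow_add]; congr 1; ring
      rw [h1, h2, h3, h4]
      have : 1 ≤ q ^ s := by omega
      zify [this, show (1:ℕ) ≤ q ^ s * q ^ s * q ^ s * q ^ s from Nat.one_le_iff_ne_zero.mpr
        (by positivity)]
      ring
    rw [hmul, Nat.mul_div_cancel _ (by omega)]
  rw [hdiv, pow_add, pow_add, pow_add, pow_one]

end Norm
section MidFwd

variable {L : Type*} [Field L] [Fintype L] {q n k s h : ℕ} [NeZero k] {η : L}

lemma tg_middle_fwd (hq : ∃ e : ℕ, 0 < e ∧ q = ringChar L ^ e)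
    (hcard : Fintype.card L = q ^ n)
    (hs : Nat.gcd s n = 1) (hk2 : 2 ≤ k) (hkn : k ≤ n - 2) (hη : η ≠ 0)
    (hnorm : η ^ ((q ^ (s * n) - 1) / (q ^ s - 1)) ≠ (-1 : L) ^ (n * k))
    (φ : L → L)
    (hmid : ∀ f ∈ twistedGabidulin (L := L) q n k s h η,
        f ∘ φ ∈ twistedGabidulin (L := L) q n k s h η) :
    ∃ d : L, d ^ q ^ (s * k) = d ^ q ^ h ∧ φ = fun x => d * x := by
  have hn4 : 4 ≤ n := by omega
  haveI : NeZero n := ⟨by omega⟩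
  have hq2 : 2 ≤ q := tg_q_two q hq
  have hq1 : 1 ≤ q := by omega
  have hs1 : 1 ≤ s := by
    rcases Nat.eq_zero_or_pos s with h0 | h0
    · rw [h0, Nat.gcd_zero_left] at hs; omega
    · exact h0
  -- Step A : φ is a q-polynomial
  obtain ⟨c1, hc1sup, hc1tw, hc1x⟩ := tg_mem_structure hcard hs hk2 hkn
      (hmid _ (tg_monomial_mem (η := η) hq1 (le_refl 1) (by omega)))
  have hc1x' : ∀ x, (φ x) ^ q ^ (s * 1) = qpoly q c1 x := by
    intro x; have := hc1x x; simpa [Function.comp] using this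
  obtain ⟨c0, hc0def⟩ : ∃ c0 : ZMod n → L,
      c0 = fun j => (c1 (j - ((s * (n - 1) : ℕ) : ZMod n))) ^ q ^ (s * (n - 1)) := ⟨_, rfl⟩
  have hφ0 : ∀ x, φ x = qpoly q c0 x := by
    intro x
    have harith : (s * 1 + s * (n - 1)) % n = 0 % n := by
      have h1 : s * 1 + s * (n - 1) = s * n := by
        rw [← Nat.mul_add]; congr 1; omega
      rw [h1, Nat.mul_mod_left, Nat.zero_mod]
    have h1 : φ x = ((φ x) ^ q ^ (s * 1)) ^ q ^ (s * (n - 1)) := by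
      calc φ x = (φ x) ^ q ^ 0 := by rw [pow_zero, pow_one]
        _ = (φ x) ^ q ^ (s * 1 + s * (n - 1)) := (tg_pow_congr hcard _ _ _ harith).symm
        _ = ((φ x) ^ q ^ (s * 1)) ^ q ^ (s * (n - 1)) := (tg_powpow q _ _ _).symm
    rw [h1, hc1x' x, qpoly_frob q hq hcard, ← hc0def]
  -- Step B : support of c0
  have hsupp : ∀ r : ZMod n, r ≠ -1 → r ≠ 0 → r ≠ 1 → c0 ((s : ZMod n) * r) = 0 := by
    refine tg_support hs hk2 hkn hn4 c0 (fun j hj1 hjk t ht => ?_)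
    obtain ⟨cj, hcjsup, hcjtw, hcjx⟩ := tg_mem_structure hcard hs hk2 hkn
        (hmid _ (tg_monomial_mem (η := η) hq1 hj1 (by omega)))
    have hceq : cj = fun w => (c0 (w - ((s * j : ℕ) : ZMod n))) ^ q ^ (s * j) := by
      refine qpoly_ext q hq hcard (fun x => ?_)
      have h1 : qpoly q cj x = (φ x) ^ q ^ (s * j) := by
        rw [← hcjx x]; simp [Function.comp]
      rw [h1, hφ0 x, qpoly_frob q hq hcard]
    have hz := hcjsup t ht
    rw [hceq] at hz
    beta_reduce at hz
    exact (pow_eq_zero_iff (show q ^ (s * j) ≠ 0 by positivity)).mp hz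
  -- twist of the M_1 composition
  have htw1 : (c0 (((s * k : ℕ) : ZMod n) - ((s * 1 : ℕ) : ZMod n))) ^ q ^ (s * 1)
      = η * ((c0 (((0 : ℕ) : ZMod n) - ((s * 1 : ℕ) : ZMod n))) ^ q ^ (s * 1)) ^ q ^ h := by
    obtain ⟨cj, hcjsup, hcjtw, hcjx⟩ := tg_mem_structure hcard hs hk2 hkn
        (hmid _ (tg_monomial_mem (η := η) hq1 (le_refl 1) (by omega)))
    have hceq : cj = fun w => (c0 (w - ((s * 1 : ℕ) : ZMod n))) ^ q ^ (s * 1) := by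
      refine qpoly_ext q hq hcard (fun x => ?_)
      have h1 : qpoly q cj x = (φ x) ^ q ^ (s * 1) := by
        rw [← hcjx x]; simp [Function.comp]
      rw [h1, hφ0 x, qpoly_frob q hq hcard]
    have hz := hcjtw
    rw [hceq] at hz
    beta_reduce at hz
    exact hz
  obtain ⟨A, hA_def⟩ : ∃ A : L, A = c0 (-(s : ZMod n)) := ⟨_, rfl⟩
  obtain ⟨B, hB_def⟩ : ∃ B : L, B = c0 (0 : ZMod n) := ⟨_, rfl⟩
  obtain ⟨C, hC_def⟩ : ∃ C : L, C = c0 ((s : ZMod n)) := ⟨_, rfl⟩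
  -- the G family conditions
  obtain ⟨g, hgdef⟩ : ∃ g : L → ZMod n → L, g = fun a₀ w =>
      a₀ * c0 w + η * a₀ ^ q ^ h * (c0 (w - ((s * k : ℕ) : ZMod n))) ^ q ^ (s * k) := ⟨_, rfl⟩
  have hg : ∀ a₀ : L,
      (∀ t : ZMod n, (∀ i : ℕ, i ≤ k → t ≠ ((s * i : ℕ) : ZMod n)) → g a₀ t = 0) ∧
      g a₀ ((s * k : ℕ) : ZMod n) = η * (g a₀ ((0 : ℕ) : ZMod n)) ^ q ^ h := by
    intro a₀
    obtain ⟨cg, hcgsup, hcgtw, hcgx⟩ := tg_mem_structure hcard hs hk2 hkn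
        (hmid _ (tg_G_mem (η := η) hq1 a₀))
    have hceq : cg = g a₀ := by
      refine qpoly_ext q hq hcard (fun x => ?_)
      have h1 : qpoly q cg x = a₀ * φ x + η * a₀ ^ q ^ h * (φ x) ^ q ^ (s * k) := by
        rw [← hcgx x]; simp [Function.comp]
      rw [h1, hφ0 x, qpoly_frob q hq hcard (m := s * k), qpoly_smul, qpoly_smul, qpoly_addc,
        hgdef]
    exact ⟨fun t ht => hceq ▸ hcgsup t ht, hceq ▸ hcgtw⟩
  -- generic slot (k+1) consequence
  have hC1 : c0 (((s * (k + 1) : ℕ) : ZMod n) - ((s * k : ℕ) : ZMod n)) = C := by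
    rw [hC_def]; congr 1; push_cast; ring
  have hslot : ∀ a₀ : L,
      a₀ * c0 ((s * (k + 1) : ℕ) : ZMod n) + η * a₀ ^ q ^ h * C ^ q ^ (s * k) = 0 := by
    intro a₀
    have hne : ∀ i : ℕ, i ≤ k → ((s * (k + 1) : ℕ) : ZMod n) ≠ ((s * i : ℕ) : ZMod n) := by
      intro i hik hcon
      push_cast at hcon
      have := tg_smul_cancel hs hcon
      have hi2 : ((k + 1 : ℕ) : ZMod n) = (i : ZMod n) := by push_cast; exact this
      have := tg_cast_inj (n := n) (by omega) (by omega) hi2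
      omega
    have hz := (hg a₀).1 _ hne
    rw [hgdef] at hz
    beta_reduce at hz
    rw [hC1] at hz
    exact hz
  -- value of c0 at the twist positions with r = ±k
  have hkf := tg_kne (n := n) hn4 hk2 hkn
  have hc0_sk : c0 ((s * k : ℕ) : ZMod n) = 0 := by
    have harg : ((s * k : ℕ) : ZMod n) = (s : ZMod n) * (k : ZMod n) := by push_cast; ring
    rw [harg]; exact hsupp _ hkf.1 hkf.2.1 hkf.2.2
  have hc0_negsk : c0 (((0 : ℕ) : ZMod n) - ((s * k : ℕ) : ZMod n)) = 0 := by
    have harg : ((0 : ℕ) : ZMod n) - ((s * k : ℕ) : ZMod n) = (s : ZMod n) * (-(k : ZMod n)) := by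
      push_cast; ring
    rw [harg]
    refine hsupp _ ?_ ?_ ?_
    · intro hcon; exact hkf.2.2 (neg_inj.mp hcon)
    · intro hcon; exact hkf.2.1 (neg_eq_zero.mp hcon)
    · intro hcon
      apply hkf.1
      have h2 : -(-(k : ZMod n)) = -(1 : ZMod n) := by rw [hcon]
      rw [neg_neg] at h2
      rw [h2]
  have hA1 : c0 (((0 : ℕ) : ZMod n) - ((s * 1 : ℕ) : ZMod n)) = A := by
    rw [hA_def]; congr 1; push_cast; ring
  have hAC : A = 0 ∧ C = 0 := by
    rcases (by omega : 3 ≤ k ∨ k = 2) with hk3 | hk2'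
    · -- k ≥ 3
      have hval : c0 (((s * k : ℕ) : ZMod n) - ((s * 1 : ℕ) : ZMod n)) = 0 := by
        have harg : ((s * k : ℕ) : ZMod n) - ((s * 1 : ℕ) : ZMod n)
            = (s : ZMod n) * ((k - 1 : ℕ) : ZMod n) := by
          push_cast [Nat.cast_sub (show 1 ≤ k by omega)]
          ring
        rw [harg]
        have hf := tg_kne (n := n) hn4 (show 2 ≤ k - 1 by omega) (show k - 1 ≤ n - 2 by omega)
        exact hsupp _ hf.1 hf.2.1 hf.2.2
      have hA0 : A = 0 := by
        rw [hval, hA1, zero_pow (show q ^ (s * 1) ≠ 0 by positivity)] at htw1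
        have h2 := (mul_eq_zero.mp htw1.symm).resolve_left hη
        exact (pow_eq_zero_iff (show q ^ (s * 1) ≠ 0 by positivity)).mp
          ((pow_eq_zero_iff (show q ^ h ≠ 0 by positivity)).mp h2)
      have hval2 : c0 ((s * (k + 1) : ℕ) : ZMod n) = 0 := by
        by_cases hkn2 : k = n - 2
        · have harg : ((s * (k + 1) : ℕ) : ZMod n) = (s : ZMod n) * (-1) := by
            push_cast
            congr 1
            rw [hkn2]
            have h8 : ((n - 2 : ℕ) : ZMod n) = ((n - 1 : ℕ) : ZMod n) - 1 := by
              rw [Nat.cast_sub (by omega), Nat.cast_sub (by omega)]; push_cast; ring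
            rw [h8, tg_neg_one_cast (by omega)]
            ring
          rw [harg, mul_neg_one, ← hA_def]
          exact hA0
        · have harg : ((s * (k + 1) : ℕ) : ZMod n)
              = (s : ZMod n) * ((k + 1 : ℕ) : ZMod n) := by push_cast; ring
          rw [harg]
          have hf := tg_kne (n := n) hn4 (show 2 ≤ k + 1 by omega)
            (show k + 1 ≤ n - 2 by omega)
          exact hsupp _ hf.1 hf.2.1 hf.2.2
      have hC0 : C = 0 := by
        have hz := hslot 1
        rw [hval2, mul_zero, zero_add, one_pow, mul_one] at hz
        have h2 := (mul_eq_zero.mp hz).resolve_left hη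
        exact (pow_eq_zero_iff (show q ^ (s * k) ≠ 0 by positivity)).mp h2
      exact ⟨hA0, hC0⟩
    · -- k = 2
      subst hk2'
      have hCval : c0 (((s * 2 : ℕ) : ZMod n) - ((s * 1 : ℕ) : ZMod n)) = C := by
        rw [hC_def]; congr 1; push_cast; ring
      rw [hCval, hA1] at htw1
      -- htw1 : C ^ q^(s*1) = η * (A ^ q^(s*1)) ^ q^h
      by_cases hn5 : 5 ≤ n
      · have hval2 : c0 ((s * (2 + 1) : ℕ) : ZMod n) = 0 := by
          have harg : ((s * (2 + 1) : ℕ) : ZMod n)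
              = (s : ZMod n) * ((3 : ℕ) : ZMod n) := by push_cast; ring
          rw [harg]
          have hf := tg_kne (n := n) hn4 (show 2 ≤ 3 by omega) (show 3 ≤ n - 2 by omega)
          exact hsupp _ hf.1 hf.2.1 hf.2.2
        have hC0 : C = 0 := by
          have hz := hslot 1
          rw [hval2, mul_zero, zero_add, one_pow, mul_one] at hz
          have h2 := (mul_eq_zero.mp hz).resolve_left hη
          exact (pow_eq_zero_iff (show q ^ (s * 2) ≠ 0 by positivity)).mp h2
        have hA0 : A = 0 := by
          rw [hC0, zero_pow (show q ^ (s * 1) ≠ 0 by positivity)] at htw1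
          have h2 := (mul_eq_zero.mp htw1.symm).resolve_left hη
          exact (pow_eq_zero_iff (show q ^ (s * 1) ≠ 0 by positivity)).mp
            ((pow_eq_zero_iff (show q ^ h ≠ 0 by positivity)).mp h2)
        exact ⟨hA0, hC0⟩
      · have hn4' : n = 4 := by omega
        subst hn4'
        have hval3 : c0 ((s * (2 + 1) : ℕ) : ZMod 4) = A := by
          rw [hA_def]; congr 1
          push_cast
          rw [show ((3 : ZMod 4)) = -1 from by rfl]
          ring
        have hslot' : ∀ a₀ : L, A * a₀ ^ q ^ (0 : ZMod 4).val
            + (η * C ^ q ^ (s * 2)) * a₀ ^ q ^ (((h : ℕ) : ZMod 4)).val = 0 := by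
          intro a₀
          have hz := hslot a₀
          rw [hval3] at hz
          rw [ZMod.val_zero, pow_zero, pow_one, ZMod.val_natCast]
          rw [tg_pow_congr hcard a₀ (h % 4) h (by omega)]
          linear_combination hz
        by_cases hh : ((h : ℕ) : ZMod 4) = 0
        · -- iteration case
          have hA0' : A = -(η * C ^ q ^ (s * 2)) := by
            have hz := hslot' 1
            rw [one_pow, one_pow, mul_one, mul_one] at hz
            exact eq_neg_of_add_eq_zero_left hz
          have hhmod : h % 4 = 0 := by
            have := (ZMod.natCast_eq_zero_iff h 4).mp hh
            omega
          have hstep : C ^ q ^ (s * 1) = -(η * η ^ q ^ (s * 1) * C ^ q ^ (s * 3)) := by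
            rw [htw1, tg_powpow, tg_pow_congr hcard A (s * 1 + h) (s * 1) (by omega), hA0']
            rw [neg_pow, tg_neg_one_pow q hq, mul_pow, tg_powpow]
            rw [show s * 2 + s * 1 = s * 3 from by ring]
            ring
          have hstep2 : C ^ q ^ (s * 3)
              = -(η ^ q ^ (s * 2) * η ^ q ^ (s * 3) * C ^ q ^ (s * 1)) := by
            have h5 := congrArg (fun y : L => y ^ q ^ (s * 2)) hstep
            rw [tg_powpow, show s * 1 + s * 2 = s * 3 from by ring] at h5
            rw [neg_pow, tg_neg_one_pow q hq, mul_pow, mul_pow, tg_powpow, tg_powpow] at h5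
            rw [show s * 1 + s * 2 = s * 3 from by ring,
              show s * 3 + s * 2 = s * 5 from by ring] at h5
            rw [tg_pow_congr hcard C (s * 5) (s * 1) (by omega)] at h5
            rw [h5]; ring
          by_cases hC0 : C = 0
          · refine ⟨?_, hC0⟩
            rw [hA0', hC0, zero_pow (show q ^ (s * 2) ≠ 0 by positivity), mul_zero, neg_zero]
          · exfalso
            have hiter : C ^ q ^ (s * 1)
                = (η * η ^ q ^ (s * 1) * η ^ q ^ (s * 2) * η ^ q ^ (s * 3))
                    * C ^ q ^ (s * 1) := by
              calc C ^ q ^ (s * 1) = -(η * η ^ q ^ (s * 1) * C ^ q ^ (s * 3)) := hstep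
                _ = -(η * η ^ q ^ (s * 1)
                    * (-(η ^ q ^ (s * 2) * η ^ q ^ (s * 3) * C ^ q ^ (s * 1)))) := by
                  rw [← hstep2]
                _ = (η * η ^ q ^ (s * 1) * η ^ q ^ (s * 2) * η ^ q ^ (s * 3))
                    * C ^ q ^ (s * 1) := by ring
            have hCne : C ^ q ^ (s * 1) ≠ 0 := pow_ne_zero _ hC0
            have hone : η * η ^ q ^ (s * 1) * η ^ q ^ (s * 2) * η ^ q ^ (s * 3) = 1 := by
              have h6 : (η * η ^ q ^ (s * 1) * η ^ q ^ (s * 2) * η ^ q ^ (s * 3))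
                  * C ^ q ^ (s * 1) = 1 * C ^ q ^ (s * 1) := by rw [← hiter, one_mul]
              exact mul_right_cancel₀ hCne h6
            apply hnorm
            rw [tg_eta_norm hq2 hs1 rfl η, hone]
            norm_num
        · -- independence case
          have hpair := tg_pair_ne q hq hcard
            (show (0 : ZMod 4) ≠ ((h : ℕ) : ZMod 4) from fun hcon => hh hcon.symm) hslot'
          obtain ⟨hA0, hD⟩ := hpair
          refine ⟨hA0, ?_⟩
          have h2 := (mul_eq_zero.mp hD).resolve_left hη
          exact (pow_eq_zero_iff (show q ^ (s * 2) ≠ 0 by positivity)).mp h2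
  obtain ⟨hA0, hC0⟩ := hAC
  -- B condition from the twist of G at a₀ = 1
  have hBcond : B ^ q ^ (s * k) = B ^ q ^ h := by
    have hz := (hg 1).2
    rw [hgdef] at hz
    beta_reduce at hz
    rw [sub_self, hc0_sk, hc0_negsk, one_pow] at hz
    rw [zero_pow (show q ^ (s * k) ≠ 0 by positivity)] at hz
    have h0cast : ((0 : ℕ) : ZMod n) = (0 : ZMod n) := by push_cast; rfl
    rw [h0cast, ← hB_def] at hz
    simp only [one_mul, mul_one, mul_zero, add_zero, zero_add] at hz
    exact mul_left_cancel₀ hη hz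
  refine ⟨B, hBcond, ?_⟩
  funext x
  rw [hφ0 x]
  have hc0single : c0 = fun t => if t = 0 then B else 0 := by
    funext t
    by_cases ht : t = 0
    · rw [ht, if_pos rfl, hB_def]
    · rw [if_neg ht]
      have hcop : Nat.Coprime s n := hs
      set u : (ZMod n)ˣ := ZMod.unitOfCoprime s hcop with hu
      have hueq : (u : ZMod n) = (s : ZMod n) := ZMod.coe_unitOfCoprime s hcop
      have hform : t = (s : ZMod n) * (((u⁻¹ : (ZMod n)ˣ) : ZMod n) * t) := by
        rw [← hueq, ← mul_assoc, Units.mul_inv, one_mul]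
      set r : ZMod n := ((u⁻¹ : (ZMod n)ˣ) : ZMod n) * t with hr
      by_cases hr1 : r = -1
      · rw [hform, hr1, mul_neg_one, ← hA_def]
        exact hA0
      · by_cases hr0 : r = 0
        · exfalso
          apply ht
          rw [hform, hr0, mul_zero]
        · by_cases hr2 : r = 1
          · rw [hform, hr2, mul_one, ← hC_def]
            exact hC0
          · rw [hform]
            exact hsupp r hr1 hr0 hr2
  rw [hc0single, qpoly_single]
  rw [ZMod.val_zero, pow_zero, pow_one]
end MidFwd
section RightFwd

variable {L : Type*} [Field L] [Fintype L] {q n k s h : ℕ} [NeZero k] {η : L}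

lemma tg_right_fwd (hq : ∃ e : ℕ, 0 < e ∧ q = ringChar L ^ e)
    (hcard : Fintype.card L = q ^ n)
    (hs : Nat.gcd s n = 1) (hk2 : 2 ≤ k) (hkn : k ≤ n - 2) (hη : η ≠ 0)
    (hnorm : η ^ ((q ^ (s * n) - 1) / (q ^ s - 1)) ≠ (-1 : L) ^ (n * k))
    (φ : L → L)
    (hrt : ∀ f ∈ twistedGabidulin (L := L) q n k s h η,
        φ ∘ f ∈ twistedGabidulin (L := L) q n k s h η) :
    ∃ d : L, d ^ q ^ h = d ∧ φ = fun x => d * x := by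
  have hn4 : 4 ≤ n := by omega
  haveI : NeZero n := ⟨by omega⟩
  have hq2 : 2 ≤ q := tg_q_two q hq
  have hq1 : 1 ≤ q := by omega
  have hs1 : 1 ≤ s := by
    rcases Nat.eq_zero_or_pos s with h0 | h0
    · rw [h0, Nat.gcd_zero_left] at hs; omega
    · exact h0
  -- Step A : φ is a q-polynomial
  obtain ⟨c1, hc1sup, hc1tw, hc1x⟩ := tg_mem_structure hcard hs hk2 hkn
      (hrt _ (tg_monomial_mem (η := η) hq1 (le_refl 1) (by omega)))
  have hc1x' : ∀ x, φ (x ^ q ^ (s * 1)) = qpoly q c1 x := by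
    intro x; have := hc1x x; simpa [Function.comp] using this
  obtain ⟨c0, hc0def⟩ : ∃ c0 : ZMod n → L,
      c0 = fun j => c1 (j - ((s * (n - 1) : ℕ) : ZMod n)) := ⟨_, rfl⟩
  have hφ0 : ∀ x, φ x = qpoly q c0 x := by
    intro x
    have harith : (s * (n - 1) + s * 1) % n = 0 % n := by
      have h1 : s * (n - 1) + s * 1 = s * n := by
        rw [← Nat.mul_add]; congr 1; omega
      rw [h1, Nat.mul_mod_left, Nat.zero_mod]
    have h2 : (x ^ q ^ (s * (n - 1))) ^ q ^ (s * 1) = x := by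
      rw [tg_powpow, tg_pow_congr hcard _ _ _ harith, pow_zero, pow_one]
    calc φ x = φ ((x ^ q ^ (s * (n - 1))) ^ q ^ (s * 1)) := by rw [h2]
      _ = qpoly q c1 (x ^ q ^ (s * (n - 1))) := hc1x' _
      _ = qpoly q c0 x := by rw [qpoly_comp_pow q hcard, ← hc0def]
  -- Step B : support of c0
  have hsupp : ∀ r : ZMod n, r ≠ -1 → r ≠ 0 → r ≠ 1 → c0 ((s : ZMod n) * r) = 0 := by
    refine tg_support hs hk2 hkn hn4 c0 (fun j hj1 hjk t ht => ?_)
    obtain ⟨cj, hcjsup, hcjtw, hcjx⟩ := tg_mem_structure hcard hs hk2 hkn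
        (hrt _ (tg_monomial_mem (η := η) hq1 hj1 (by omega)))
    have hceq : cj = fun w => c0 (w - ((s * j : ℕ) : ZMod n)) := by
      refine qpoly_ext q hq hcard (fun x => ?_)
      have h1 : qpoly q cj x = φ (x ^ q ^ (s * j)) := by
        rw [← hcjx x]; simp [Function.comp]
      rw [h1, hφ0 _, qpoly_comp_pow q hcard]
    have hz := hcjsup t ht
    rw [hceq] at hz
    beta_reduce at hz
    exact hz
  -- twist of the M_1 composition
  have htw1 : c0 (((s * k : ℕ) : ZMod n) - ((s * 1 : ℕ) : ZMod n))
      = η * (c0 (((0 : ℕ) : ZMod n) - ((s * 1 : ℕ) : ZMod n))) ^ q ^ h := by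
    obtain ⟨cj, hcjsup, hcjtw, hcjx⟩ := tg_mem_structure hcard hs hk2 hkn
        (hrt _ (tg_monomial_mem (η := η) hq1 (le_refl 1) (by omega)))
    have hceq : cj = fun w => c0 (w - ((s * 1 : ℕ) : ZMod n)) := by
      refine qpoly_ext q hq hcard (fun x => ?_)
      have h1 : qpoly q cj x = φ (x ^ q ^ (s * 1)) := by
        rw [← hcjx x]; simp [Function.comp]
      rw [h1, hφ0 _, qpoly_comp_pow q hcard]
    have hz := hcjtw
    rw [hceq] at hz
    beta_reduce at hz
    exact hz
  obtain ⟨A, hA_def⟩ : ∃ A : L, A = c0 (-(s : ZMod n)) := ⟨_, rfl⟩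
  obtain ⟨B, hB_def⟩ : ∃ B : L, B = c0 (0 : ZMod n) := ⟨_, rfl⟩
  obtain ⟨C, hC_def⟩ : ∃ C : L, C = c0 ((s : ZMod n)) := ⟨_, rfl⟩
  -- the G family conditions
  obtain ⟨g, hgdef⟩ : ∃ g : L → ZMod n → L, g = fun a₀ w =>
      c0 w * a₀ ^ q ^ w.val
        + c0 (w - ((s * k : ℕ) : ZMod n))
            * (η * a₀ ^ q ^ h) ^ q ^ ((w - ((s * k : ℕ) : ZMod n)).val) := ⟨_, rfl⟩
  have hg : ∀ a₀ : L,
      (∀ t : ZMod n, (∀ i : ℕ, i ≤ k → t ≠ ((s * i : ℕ) : ZMod n)) → g a₀ t = 0) ∧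
      g a₀ ((s * k : ℕ) : ZMod n) = η * (g a₀ ((0 : ℕ) : ZMod n)) ^ q ^ h := by
    intro a₀
    obtain ⟨cg, hcgsup, hcgtw, hcgx⟩ := tg_mem_structure hcard hs hk2 hkn
        (hrt _ (tg_G_mem (η := η) hq1 a₀))
    have hceq : cg = g a₀ := by
      refine qpoly_ext q hq hcard (fun x => ?_)
      have h1 : qpoly q cg x = φ (a₀ * x + η * a₀ ^ q ^ h * x ^ q ^ (s * k)) := by
        rw [← hcgx x]; simp [Function.comp]
      rw [h1, hφ0 _, qpoly_add_arg q hq, qpoly_mul_arg, qpoly_mul_pow_arg q hcard,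
        qpoly_addc, hgdef]
    exact ⟨fun t ht => hceq ▸ hcgsup t ht, hceq ▸ hcgtw⟩
  -- generic slot (k+1) consequence
  have hsub1 : ((s * (k + 1) : ℕ) : ZMod n) - ((s * k : ℕ) : ZMod n) = ((s : ℕ) : ZMod n) := by
    push_cast; ring
  have hslot : ∀ a₀ : L,
      a₀ ^ q ^ (((s * (k + 1) : ℕ) : ZMod n)).val * c0 ((s * (k + 1) : ℕ) : ZMod n)
        + (C * η ^ q ^ (((s : ℕ) : ZMod n)).val) * a₀ ^ q ^ (h + (((s : ℕ) : ZMod n)).val)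
        = 0 := by
    intro a₀
    have hne : ∀ i : ℕ, i ≤ k → ((s * (k + 1) : ℕ) : ZMod n) ≠ ((s * i : ℕ) : ZMod n) := by
      intro i hik hcon
      push_cast at hcon
      have := tg_smul_cancel hs hcon
      have hi2 : ((k + 1 : ℕ) : ZMod n) = (i : ZMod n) := by push_cast; exact this
      have := tg_cast_inj (n := n) (by omega) (by omega) hi2
      omega
    have hz := (hg a₀).1 _ hne
    rw [hgdef] at hz
    beta_reduce at hz
    rw [hsub1, ← hC_def] at hz
    rw [mul_pow, tg_powpow] at hz
    linear_combination hz
  -- values at r = ±k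
  have hkf := tg_kne (n := n) hn4 hk2 hkn
  have hc0_sk : c0 ((s * k : ℕ) : ZMod n) = 0 := by
    have harg : ((s * k : ℕ) : ZMod n) = (s : ZMod n) * (k : ZMod n) := by push_cast; ring
    rw [harg]; exact hsupp _ hkf.1 hkf.2.1 hkf.2.2
  have hc0_negsk : c0 (((0 : ℕ) : ZMod n) - ((s * k : ℕ) : ZMod n)) = 0 := by
    have harg : ((0 : ℕ) : ZMod n) - ((s * k : ℕ) : ZMod n) = (s : ZMod n) * (-(k : ZMod n)) := by
      push_cast; ring
    rw [harg]
    refine hsupp _ ?_ ?_ ?_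
    · intro hcon; exact hkf.2.2 (neg_inj.mp hcon)
    · intro hcon; exact hkf.2.1 (neg_eq_zero.mp hcon)
    · intro hcon
      apply hkf.1
      have h2 : -(-(k : ZMod n)) = -(1 : ZMod n) := by rw [hcon]
      rw [neg_neg] at h2
      rw [h2]
  have hA1 : c0 (((0 : ℕ) : ZMod n) - ((s * 1 : ℕ) : ZMod n)) = A := by
    rw [hA_def]; congr 1; push_cast; ring
  have hAC : A = 0 ∧ C = 0 := by
    rcases (by omega : 3 ≤ k ∨ k = 2) with hk3 | hk2'
    · -- k ≥ 3
      have hval : c0 (((s * k : ℕ) : ZMod n) - ((s * 1 : ℕ) : ZMod n)) = 0 := by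
        have harg : ((s * k : ℕ) : ZMod n) - ((s * 1 : ℕ) : ZMod n)
            = (s : ZMod n) * ((k - 1 : ℕ) : ZMod n) := by
          push_cast [Nat.cast_sub (show 1 ≤ k by omega)]
          ring
        rw [harg]
        have hf := tg_kne (n := n) hn4 (show 2 ≤ k - 1 by omega) (show k - 1 ≤ n - 2 by omega)
        exact hsupp _ hf.1 hf.2.1 hf.2.2
      have hA0 : A = 0 := by
        rw [hval, hA1] at htw1
        have h2 := (mul_eq_zero.mp htw1.symm).resolve_left hη
        exact (pow_eq_zero_iff (show q ^ h ≠ 0 by positivity)).mp h2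
      have hval2 : c0 ((s * (k + 1) : ℕ) : ZMod n) = 0 := by
        by_cases hkn2 : k = n - 2
        · have harg : ((s * (k + 1) : ℕ) : ZMod n) = (s : ZMod n) * (-1) := by
            push_cast
            congr 1
            rw [hkn2]
            have h8 : ((n - 2 : ℕ) : ZMod n) = ((n - 1 : ℕ) : ZMod n) - 1 := by
              rw [Nat.cast_sub (by omega), Nat.cast_sub (by omega)]; push_cast; ring
            rw [h8, tg_neg_one_cast (by omega)]
            ring
          rw [harg, mul_neg_one, ← hA_def]
          exact hA0
        · have harg : ((s * (k + 1) : ℕ) : ZMod n)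
              = (s : ZMod n) * ((k + 1 : ℕ) : ZMod n) := by push_cast; ring
          rw [harg]
          have hf := tg_kne (n := n) hn4 (show 2 ≤ k + 1 by omega)
            (show k + 1 ≤ n - 2 by omega)
          exact hsupp _ hf.1 hf.2.1 hf.2.2
      have hC0 : C = 0 := by
        have hz := hslot 1
        rw [hval2, mul_zero, zero_add, one_pow, mul_one] at hz
        have h2 := (mul_eq_zero.mp hz).resolve_right (pow_ne_zero _ hη)
        exact h2
      exact ⟨hA0, hC0⟩
    · -- k = 2
      subst hk2'
      have hCval : c0 (((s * 2 : ℕ) : ZMod n) - ((s * 1 : ℕ) : ZMod n)) = C := by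
        rw [hC_def]; congr 1; push_cast; ring
      rw [hCval, hA1] at htw1
      -- htw1 : C = η * A ^ q ^ h
      by_cases hn5 : 5 ≤ n
      · have hval2 : c0 ((s * (2 + 1) : ℕ) : ZMod n) = 0 := by
          have harg : ((s * (2 + 1) : ℕ) : ZMod n)
              = (s : ZMod n) * ((3 : ℕ) : ZMod n) := by push_cast; ring
          rw [harg]
          have hf := tg_kne (n := n) hn4 (show 2 ≤ 3 by omega) (show 3 ≤ n - 2 by omega)
          exact hsupp _ hf.1 hf.2.1 hf.2.2
        have hC0 : C = 0 := by
          have hz := hslot 1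
          rw [hval2, mul_zero, zero_add, one_pow, mul_one] at hz
          exact (mul_eq_zero.mp hz).resolve_right (pow_ne_zero _ hη)
        have hA0 : A = 0 := by
          rw [hC0] at htw1
          have h2 := (mul_eq_zero.mp htw1.symm).resolve_left hη
          exact (pow_eq_zero_iff (show q ^ h ≠ 0 by positivity)).mp h2
        exact ⟨hA0, hC0⟩
      · have hn4' : n = 4 := by omega
        subst hn4'
        have hval3 : c0 ((s * (2 + 1) : ℕ) : ZMod 4) = A := by
          rw [hA_def]; congr 1
          push_cast
          rw [show ((3 : ZMod 4)) = -1 from by rfl]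
          ring
        have hw : ((s * (2 + 1) : ℕ) : ZMod 4) = -((s : ℕ) : ZMod 4) := by
          push_cast
          rw [show ((3 : ZMod 4)) = -1 from by rfl]
          ring
        have hval_t1 : (((h : ℕ) : ZMod 4) + ((s : ℕ) : ZMod 4)).val
            = (h % 4 + s % 4) % 4 := by
          rw [ZMod.val_add, ZMod.val_natCast, ZMod.val_natCast]
        have hslot' : ∀ a₀ : L,
            A * a₀ ^ q ^ ((-((s : ℕ) : ZMod 4)).val)
              + (C * η ^ q ^ (s % 4))
                  * a₀ ^ q ^ ((((h : ℕ) : ZMod 4) + ((s : ℕ) : ZMod 4)).val) = 0 := by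
          intro a₀
          have hz := hslot a₀
          rw [hval3, hw, ZMod.val_natCast] at hz
          rw [tg_pow_congr hcard a₀ (h + s % 4)
            ((((h : ℕ) : ZMod 4) + ((s : ℕ) : ZMod 4)).val) (by rw [hval_t1]; omega)] at hz
          linear_combination hz
        by_cases hcase : (-((s : ℕ) : ZMod 4)) = (((h : ℕ) : ZMod 4) + ((s : ℕ) : ZMod 4))
        · -- degenerate exponents : iteration argument
          have hA0' : A = -(C * η ^ q ^ (s % 4)) := by
            have hz := hslot' 1
            rw [one_pow, one_pow, mul_one, mul_one] at hz
            exact eq_neg_of_add_eq_zero_left hz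
          have hdvd : (4 : ℕ) ∣ (h + 2 * s) := by
            have hzz : ((h + 2 * s : ℕ) : ZMod 4) = 0 := by
              push_cast
              linear_combination -hcase
            exact (ZMod.natCast_eq_zero_iff _ 4).mp hzz
          have hmod : (h + 2 * s) % 4 = 0 := by omega
          have hAq : A ^ q ^ h = -(C ^ q ^ (s * 2) * η ^ q ^ (s * 3)) := by
            rw [hA0', neg_pow, tg_neg_one_pow q hq, mul_pow, tg_powpow]
            rw [tg_pow_congr hcard η (s % 4 + h) (s * 3) (by omega)]
            rw [tg_pow_congr hcard C h (s * 2) (by omega)]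
            ring
          have hstep : C = -(η * η ^ q ^ (s * 3) * C ^ q ^ (s * 2)) := by
            calc C = η * A ^ q ^ h := htw1
              _ = η * (-(C ^ q ^ (s * 2) * η ^ q ^ (s * 3))) := by rw [hAq]
              _ = -(η * η ^ q ^ (s * 3) * C ^ q ^ (s * 2)) := by ring
          have hstep2 : C ^ q ^ (s * 2) = -(η ^ q ^ (s * 2) * η ^ q ^ (s * 1) * C) := by
            have h5 := congrArg (fun y : L => y ^ q ^ (s * 2)) hstep
            rw [neg_pow, tg_neg_one_pow q hq, mul_pow, mul_pow, tg_powpow, tg_powpow] at h5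
            rw [show s * 3 + s * 2 = s * 5 from by ring,
              show s * 2 + s * 2 = s * 4 from by ring] at h5
            rw [tg_pow_congr hcard η (s * 5) (s * 1) (by omega)] at h5
            rw [tg_pow_congr hcard C (s * 4) 0 (by omega), pow_zero, pow_one] at h5
            rw [h5]; ring
          by_cases hC0 : C = 0
          · refine ⟨?_, hC0⟩
            rw [hA0', hC0, zero_mul, neg_zero]
          · exfalso
            have hiter : C = (η * η ^ q ^ (s * 1) * η ^ q ^ (s * 2) * η ^ q ^ (s * 3)) * C := by
              calc C = -(η * η ^ q ^ (s * 3) * C ^ q ^ (s * 2)) := hstep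
                _ = -(η * η ^ q ^ (s * 3) * (-(η ^ q ^ (s * 2) * η ^ q ^ (s * 1) * C))) := by
                  rw [← hstep2]
                _ = (η * η ^ q ^ (s * 1) * η ^ q ^ (s * 2) * η ^ q ^ (s * 3)) * C := by ring
            have hone : η * η ^ q ^ (s * 1) * η ^ q ^ (s * 2) * η ^ q ^ (s * 3) = 1 := by
              have h6 : (η * η ^ q ^ (s * 1) * η ^ q ^ (s * 2) * η ^ q ^ (s * 3)) * C
                  = 1 * C := by rw [← hiter, one_mul]
              exact mul_right_cancel₀ hC0 h6
            apply hnorm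
            rw [tg_eta_norm hq2 hs1 rfl η, hone]
            norm_num
        · -- independent exponents
          have hpair := tg_pair_ne q hq hcard hcase hslot'
          obtain ⟨hA0, hD⟩ := hpair
          refine ⟨hA0, ?_⟩
          exact (mul_eq_zero.mp hD).resolve_right (pow_ne_zero _ hη)
  obtain ⟨hA0, hC0⟩ := hAC
  -- B condition from the twist of G at a₀ = 1
  have hBcond : B ^ q ^ h = B := by
    have hz := (hg 1).2
    rw [hgdef] at hz
    beta_reduce at hz
    rw [sub_self, hc0_sk, hc0_negsk, one_pow, one_pow] at hz
    have h0cast : ((0 : ℕ) : ZMod n) = (0 : ZMod n) := by push_cast; rfl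
    rw [h0cast, ← hB_def, ZMod.val_zero, pow_zero, pow_one, mul_one] at hz
    simp only [zero_mul, zero_add, add_zero, mul_one] at hz
    simp only [one_pow, pow_one, mul_one] at hz
    rw [mul_comm B η] at hz
    exact (mul_left_cancel₀ hη hz).symm
  refine ⟨B, hBcond, ?_⟩
  funext x
  rw [hφ0 x]
  have hc0single : c0 = fun t => if t = 0 then B else 0 := by
    funext t
    by_cases ht : t = 0
    · rw [ht, if_pos rfl, hB_def]
    · rw [if_neg ht]
      have hcop : Nat.Coprime s n := hs
      set u : (ZMod n)ˣ := ZMod.unitOfCoprime s hcop with hu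
      have hueq : (u : ZMod n) = (s : ZMod n) := ZMod.coe_unitOfCoprime s hcop
      have hform : t = (s : ZMod n) * (((u⁻¹ : (ZMod n)ˣ) : ZMod n) * t) := by
        rw [← hueq, ← mul_assoc, Units.mul_inv, one_mul]
      set r : ZMod n := ((u⁻¹ : (ZMod n)ˣ) : ZMod n) * t with hr
      by_cases hr1 : r = -1
      · rw [hform, hr1, mul_neg_one, ← hA_def]
        exact hA0
      · by_cases hr0 : r = 0
        · exfalso
          apply ht
          rw [hform, hr0, mul_zero]
        · by_cases hr2 : r = 1
          · rw [hform, hr2, mul_one, ← hC_def]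
            exact hC0
          · rw [hform]
            exact hsupp r hr1 hr0 hr2
  rw [hc0single, qpoly_single]
  rw [ZMod.val_zero, pow_zero, pow_one]

end RightFwd
section GcdConv

variable {L : Type*} [Field L] [Fintype L] {q n k s h : ℕ}

lemma tg_gcd_eq {n m0 : ℕ} {x t : ℤ} (hx : x = (n : ℤ) * t + (m0 : ℤ)) :
    Int.gcd (n : ℤ) x = Nat.gcd n m0 := by
  refine Nat.dvd_antisymm ?_ ?_
  · refine Nat.dvd_gcd ?_ ?_
    · exact Int.natCast_dvd_natCast.mp (Int.gcd_dvd_left _ _)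
    · have h1 : ((Int.gcd (n : ℤ) x : ℕ) : ℤ) ∣ (m0 : ℤ) := by
        have ha : ((Int.gcd (n : ℤ) x : ℕ) : ℤ) ∣ (n : ℤ) := Int.gcd_dvd_left _ _
        have hb : ((Int.gcd (n : ℤ) x : ℕ) : ℤ) ∣ x := Int.gcd_dvd_right _ _
        have hm : (m0 : ℤ) = x - (n : ℤ) * t := by rw [hx]; ring
        rw [hm]
        exact dvd_sub hb (ha.mul_right t)
      exact_mod_cast h1
  · have h1 : ((Nat.gcd n m0 : ℕ) : ℤ) ∣ x := by
      rw [hx]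
      exact dvd_add ((Int.natCast_dvd_natCast.mpr (Nat.gcd_dvd_left _ _)).mul_right t)
        (Int.natCast_dvd_natCast.mpr (Nat.gcd_dvd_right _ _))
    have h2 : ((Nat.gcd n m0 : ℕ) : ℤ) ∣ (n : ℤ) :=
      Int.natCast_dvd_natCast.mpr (Nat.gcd_dvd_left _ _)
    exact Int.natCast_dvd_natCast.mp (Int.dvd_coe_gcd h2 h1)

lemma tg_mid_gcd [NeZero n] (hq : ∃ e : ℕ, 0 < e ∧ q = ringChar L ^ e)
    (hcard : Fintype.card L = q ^ n) (d : L) :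
    d ^ q ^ (s * k) = d ^ q ^ h ↔
      d ^ q ^ (Int.gcd (n : ℤ) ((s : ℤ) * (k : ℤ) - (h : ℤ))) = d := by
  have hn0 : 0 < n := Nat.pos_of_ne_zero (NeZero.ne n)
  set x : ℤ := (s : ℤ) * (k : ℤ) - (h : ℤ) with hxdef
  set m0 : ℕ := (x % (n : ℤ)).toNat with hm0def
  have hmodnn : (0 : ℤ) ≤ x % (n : ℤ) := Int.emod_nonneg x (by exact_mod_cast hn0.ne')
  have hm0 : (m0 : ℤ) = x % (n : ℤ) := Int.toNat_of_nonneg hmodnn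
  have hx : x = (n : ℤ) * (x / (n : ℤ)) + (m0 : ℤ) := by
    rw [hm0]
    exact (Int.mul_ediv_add_emod x (n : ℤ)).symm
  have hgcd : Int.gcd (n : ℤ) x = Nat.gcd n m0 := tg_gcd_eq hx
  have hskmod : (s * k) % n = (h + m0) % n := by
    have hzz : ((s * k : ℕ) : ℤ) = ((h + m0 : ℕ) : ℤ) + (n : ℤ) * (x / (n : ℤ)) := by
      push_cast
      rw [hxdef] at hx
      linarith [hx]
    have hzz2 : ((s * k : ℕ) : ℤ) % (n : ℤ) = ((h + m0 : ℕ) : ℤ) % (n : ℤ) := by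
      rw [hzz, Int.add_mul_emod_self_left]
    have hzz3 : (((s * k) % n : ℕ) : ℤ) = (((h + m0) % n : ℕ) : ℤ) := by
      push_cast
      exact_mod_cast hzz2
    exact_mod_cast hzz3
  constructor
  · intro hd
    have hfix0 : d ^ q ^ m0 = d := by
      obtain ⟨F, hF⟩ := tg_frob q hq h
      have hinj : Function.Injective F := F.injective
      apply hinj
      rw [hF, hF, tg_powpow]
      calc d ^ q ^ (m0 + h) = d ^ q ^ (h + m0) := by rw [Nat.add_comm]
        _ = d ^ q ^ (s * k) := (tg_pow_congr hcard d _ _ hskmod.symm)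
        _ = d ^ q ^ h := hd
    have hfixn : d ^ q ^ n = d := tg_pow_n q n hcard d
    have := tg_fix_gcd q d m0 n hfix0 hfixn
    rw [hgcd, Nat.gcd_comm]
    exact this
  · intro hd
    have hfix0 : d ^ q ^ m0 = d := by
      refine tg_fix_of_dvd q d _ _ ?_ hd
      rw [hgcd]
      exact Nat.gcd_dvd_right n m0
    calc d ^ q ^ (s * k) = d ^ q ^ (h + m0) := tg_pow_congr hcard d _ _ hskmod
      _ = (d ^ q ^ m0) ^ q ^ h := by rw [tg_powpow, Nat.add_comm]
      _ = d ^ q ^ h := by rw [hfix0]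

lemma tg_right_gcd [NeZero n] (hcard : Fintype.card L = q ^ n) (d : L) :
    d ^ q ^ h = d ↔ d ^ q ^ (Nat.gcd n h) = d := by
  constructor
  · intro hd
    exact tg_fix_gcd q d n h (tg_pow_n q n hcard d) hd
  · intro hd
    exact tg_fix_of_dvd q d _ _ (Nat.gcd_dvd_right n h) hd

end GcdConv

/-- For a generalized twisted Gabidulin code `H_{k,s}(η,h)` with
`gcd(s,n)=1`, `2 ≤ k ≤ n−2`, `η ≠ 0` and `N_{q^{sn}/q^s}(η) ≠ (−1)^{nk}`, the middle
nucleus is the field `F_{q^{gcd(n, sk−h)}}` (acting by `x ↦ dx`) and the right nucleus is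
`F_{q^{gcd(n,h)}}`. -/
theorem twistedGabidulin_nuclei {q n k s h : ℕ} [NeZero k] {L : Type*} [Field L] [Fintype L]
    (hq : ∃ e : ℕ, 0 < e ∧ q = ringChar L ^ e)
    (hcard : Fintype.card L = q ^ n)
    (hs : Nat.gcd s n = 1) (hk2 : 2 ≤ k) (hkn : k ≤ n - 2)
    (η : L) (hη : η ≠ 0)
    (hnorm : η ^ ((q ^ (s * n) - 1) / (q ^ s - 1)) ≠ (-1 : L) ^ (n * k)) :
    ({φ : L → L | IsQEnd q φ ∧
        ∀ f ∈ twistedGabidulin (L := L) q n k s h η,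
          f ∘ φ ∈ twistedGabidulin (L := L) q n k s h η}
      = {φ : L → L | ∃ d : L,
          d ^ q ^ (Int.gcd (n : ℤ) ((s : ℤ) * (k : ℤ) - (h : ℤ))) = d ∧
          φ = fun x => d * x}) ∧
    ({φ : L → L | IsQEnd q φ ∧
        ∀ f ∈ twistedGabidulin (L := L) q n k s h η,
          φ ∘ f ∈ twistedGabidulin (L := L) q n k s h η}
      = {φ : L → L | ∃ c : L, c ^ q ^ (Nat.gcd n h) = c ∧ φ = fun x => c * x}) := by
  have hn4 : 4 ≤ n := by omega
  haveI : NeZero n := ⟨by omega⟩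
  have hq2 : 2 ≤ q := tg_q_two q hq
  have hzerofin : ((0 : Fin k) : ℕ) = 0 := by simp
  constructor
  · -- middle nucleus
    ext φ
    simp only [Set.mem_setOf_eq]
    constructor
    · rintro ⟨hlin, hmid⟩
      obtain ⟨d, hd, hform⟩ := tg_middle_fwd hq hcard hs hk2 hkn hη hnorm φ hmid
      exact ⟨d, (tg_mid_gcd hq hcard d).mp hd, hform⟩
    · rintro ⟨d, hd, rfl⟩
      have hd' : d ^ q ^ (s * k) = d ^ q ^ h := (tg_mid_gcd hq hcard d).mpr hd
      refine ⟨⟨fun x y => by ring, fun c x _ => by ring⟩, ?_⟩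
      rintro f ⟨a, rfl⟩
      refine ⟨fun i => a i * d ^ q ^ (s * (i : ℕ)), ?_⟩
      funext x
      simp only [Function.comp_apply]
      have hstep : ((a 0) * d ^ q ^ (s * ((0 : Fin k) : ℕ))) ^ q ^ h
          = (a 0) ^ q ^ h * d ^ q ^ (s * k) := by
        rw [mul_pow, tg_powpow]
        have h00 : s * ((0 : Fin k) : ℕ) + h = h := by rw [hzerofin]; ring
        rw [h00, ← hd']
      rw [hstep]
      congr 1
      · refine Finset.sum_congr rfl fun i _ => ?_
        rw [mul_pow]; ring
      · rw [mul_pow]; ring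
  · -- right nucleus
    ext φ
    simp only [Set.mem_setOf_eq]
    constructor
    · rintro ⟨hlin, hrt⟩
      obtain ⟨d, hd, hform⟩ := tg_right_fwd hq hcard hs hk2 hkn hη hnorm φ hrt
      exact ⟨d, (tg_right_gcd hcard d).mp hd, hform⟩
    · rintro ⟨d, hd, rfl⟩
      have hd' : d ^ q ^ h = d := (tg_right_gcd hcard d).mpr hd
      refine ⟨⟨fun x y => by ring, fun c x _ => by ring⟩, ?_⟩
      rintro f ⟨a, rfl⟩
      refine ⟨fun i => d * a i, ?_⟩
      funext x
      simp only [Function.comp_apply]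
      have hstep : (d * a 0) ^ q ^ h = d * (a 0) ^ q ^ h := by
        rw [mul_pow, hd']
      rw [hstep, mul_add, Finset.mul_sum]
      congr 1
      · refine Finset.sum_congr rfl fun i _ => ?_
        ring
      · ring
end

section
/- Let G_{k,s} = {a_0 x + a_1 x^{q^s} + ... + a_{k−1} x^{q^{s(k−1)}} : a_i ∈ F_{q^n}} with gcd(s,n) = 1 and 2 ≤ k ≤ n−2. Then the middle nucleus {φ ∈ End_{F_q}(F_{q^n}) : f ∘ φ ∈ G_{k,s} for all f ∈ G_{k,s}} and the right nucleus {φ : φ ∘ f ∈ G_{k,s} for all f ∈ G_{k,s}} are both isomorphic to F_{q^n} (acting by scalar multiplication x ↦ dx). -/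
/-- The generalized Gabidulin code `G_{k,s}` as a set of `q`-polynomial maps on
`L = F_{q^n}`. -/
def genGabidulin {L : Type*} [Field L] (q k s : ℕ) : Set (L → L) :=
  {f | ∃ a : Fin k → L, f = fun x => ∑ i : Fin k, a i * x ^ q ^ (s * (i : ℕ))}

section Aux

variable {L : Type*} [Field L] [Fintype L] {q n : ℕ}

/-- On a field with `q ^ n` elements, the exponent of a `q`-power can be reduced mod `n`. -/
lemma aux_pow_mod (hcard : Fintype.card L = q ^ n) (hn : 0 < n) (x : L) :
    ∀ m : ℕ, x ^ q ^ m = x ^ q ^ (m % n) := by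
  intro m
  induction m using Nat.strong_induction_on with
  | _ m ih =>
    rcases lt_or_ge m n with hm | hm
    · rw [Nat.mod_eq_of_lt hm]
    · have hxn : x ^ q ^ n = x := by rw [← hcard]; exact FiniteField.pow_card x
      have h1 : q ^ m = q ^ n * q ^ (m - n) := by
        rw [← pow_add, Nat.add_sub_cancel' hm]
      have h2 : x ^ q ^ m = x ^ q ^ (m - n) := by
        rw [h1, pow_mul, hxn]
      rw [h2, ih (m - n) (by omega), Nat.mod_eq_sub_mod hm]

/-- Linear independence of the monomials `x ^ q ^ r`, `r < n`, as maps on a field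
with `q ^ n` elements. -/
lemma aux_indep (hq2 : 2 ≤ q) (hcard : Fintype.card L = q ^ n) (hn : 0 < n)
    (c : ℕ → L) (h : ∀ x : L, ∑ r ∈ Finset.range n, c r * x ^ q ^ r = 0) :
    ∀ r < n, c r = 0 := by
  classical
  intro r hr
  set P : Polynomial L := ∑ r ∈ Finset.range n, Polynomial.C (c r) * Polynomial.X ^ q ^ r with hP
  have hPeval : ∀ x : L, P.eval x = 0 := by
    intro x
    rw [hP, Polynomial.eval_finset_sum]
    simpa using h x
  have hdeg : P.natDegree < Fintype.card L := by
    have h1 : P.natDegree ≤ q ^ (n - 1) := by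
      refine Polynomial.natDegree_sum_le_of_forall_le _ _ fun r hr => ?_
      refine (Polynomial.natDegree_C_mul_le _ _).trans ?_
      rw [Polynomial.natDegree_X_pow]
      have hrn := Finset.mem_range.mp hr
      exact Nat.pow_le_pow_right (by omega) (by omega)
    have h2 : q ^ (n - 1) < q ^ n := Nat.pow_lt_pow_right (by omega) (by omega)
    rw [hcard]
    exact lt_of_le_of_lt h1 h2
  have hP0 : P = 0 :=
    Polynomial.eq_zero_of_natDegree_lt_card_of_eval_eq_zero P Function.injective_id
      hPeval hdeg
  have hco := congrArg (fun Q => Polynomial.coeff Q (q ^ r)) hP0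
  simp only [hP, Polynomial.finset_sum_coeff, Polynomial.coeff_C_mul,
    Polynomial.coeff_X_pow, Polynomial.coeff_zero] at hco
  rw [Finset.sum_eq_single r (fun r' _ hne => by
      have hqr : q ^ r ≠ q ^ r' := fun hc => hne (Nat.pow_right_injective hq2 hc).symm
      rw [if_neg hqr, mul_zero])
      (fun hmem => absurd (Finset.mem_range.mpr hr) hmem)] at hco
  simpa using hco

/-- Collecting a `q`-polynomial into canonical form with exponents reduced mod `n`. -/
lemma aux_collect {k : ℕ} (hcard : Fintype.card L = q ^ n) (hn : 0 < n)
    (E : Fin k → ℕ) (u : Fin k → L) (x : L) :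
    ∑ r ∈ Finset.range n, (∑ i : Fin k, if E i % n = r then u i else 0) * x ^ q ^ r
      = ∑ i : Fin k, u i * x ^ q ^ (E i) := by
  classical
  calc ∑ r ∈ Finset.range n, (∑ i : Fin k, if E i % n = r then u i else 0) * x ^ q ^ r
      = ∑ r ∈ Finset.range n, ∑ i : Fin k,
          (if E i % n = r then u i * x ^ q ^ r else 0) := by
        refine Finset.sum_congr rfl fun r _ => ?_
        rw [Finset.sum_mul]
        exact Finset.sum_congr rfl fun i _ => by rw [ite_mul, zero_mul]
    _ = ∑ i : Fin k, ∑ r ∈ Finset.range n,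
          (if E i % n = r then u i * x ^ q ^ r else 0) := Finset.sum_comm
    _ = ∑ i : Fin k, u i * x ^ q ^ (E i % n) := by
        refine Finset.sum_congr rfl fun i _ => ?_
        rw [Finset.sum_ite_eq (Finset.range n) (E i % n) (fun r => u i * x ^ q ^ r),
          if_pos (Finset.mem_range.mpr (Nat.mod_lt _ hn))]
    _ = ∑ i : Fin k, u i * x ^ q ^ (E i) := by
        refine Finset.sum_congr rfl fun i _ => ?_
        rw [← aux_pow_mod hcard hn x (E i)]

/-- The key extraction lemma: if `∑ A i x^{q^{s(i+j)}} = ∑ b m x^{q^{sm}}` with `i0 + j = k`,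
then `A i0 = 0`. -/
lemma aux_extract (hq2 : 2 ≤ q) (hcard : Fintype.card L = q ^ n)
    {k s : ℕ} (hs : Nat.gcd s n = 1) (hkn : k + 2 ≤ n)
    (A b : Fin k → L) (i0 : Fin k) (j : ℕ) (hj : (i0 : ℕ) + j = k)
    (h : ∀ x : L, ∑ i : Fin k, A i * x ^ q ^ (s * ((i : ℕ) + j))
        = ∑ m : Fin k, b m * x ^ q ^ (s * (m : ℕ))) :
    A i0 = 0 := by
  classical
  have hn : 0 < n := by omega
  set c : ℕ → L := fun r =>
    (∑ i : Fin k, if (s * ((i : ℕ) + j)) % n = r then A i else 0)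
      - (∑ m : Fin k, if (s * (m : ℕ)) % n = r then b m else 0) with hc
  have h0 : ∀ x : L, ∑ r ∈ Finset.range n, c r * x ^ q ^ r = 0 := by
    intro x
    have : ∑ r ∈ Finset.range n, c r * x ^ q ^ r
        = ∑ r ∈ Finset.range n,
            ((∑ i : Fin k, if (s * ((i : ℕ) + j)) % n = r then A i else 0) * x ^ q ^ r)
          - ∑ r ∈ Finset.range n,
            ((∑ m : Fin k, if (s * (m : ℕ)) % n = r then b m else 0) * x ^ q ^ r) := by
      rw [← Finset.sum_sub_distrib]
      exact Finset.sum_congr rfl fun r _ => by rw [hc, sub_mul]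
    rw [this, aux_collect hcard hn (fun i => s * ((i : ℕ) + j)) A x,
      aux_collect hcard hn (fun m => s * (m : ℕ)) b x, h x, sub_self]
  have hkey := aux_indep hq2 hcard hn c h0 ((s * k) % n) (Nat.mod_lt _ hn)
  -- first sum is `A i0`
  have hmod : ∀ t : ℕ, (s * t) % n = (s * k) % n → t < 2 * k → t = k := by
    intro t hts htk
    have h1 : s * t ≡ s * k [MOD n] := hts
    have h2 : t ≡ k [MOD n] :=
      Nat.ModEq.cancel_left_of_coprime (by rwa [Nat.gcd_comm]) h1
    have h3 : (n : ℤ) ∣ (k : ℤ) - (t : ℤ) := Nat.ModEq.dvd h2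
    have h4 : (k : ℤ) - (t : ℤ) = 0 := by
      refine Int.eq_zero_of_abs_lt_dvd h3 ?_
      rw [abs_lt]
      constructor <;> [skip; skip] <;> push_cast <;> omega
    omega
  have hs1 : (∑ i : Fin k, if (s * ((i : ℕ) + j)) % n = (s * k) % n then A i else 0)
      = A i0 := by
    rw [Finset.sum_eq_single i0]
    · rw [if_pos (by rw [hj])]
    · intro i _ hne
      refine if_neg fun hcon => hne ?_
      have hi := i.isLt
      have hi0 := i0.isLt
      have heq : (i : ℕ) + j = k := hmod _ hcon (by omega)
      exact Fin.ext (by omega)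
    · intro hmem; exact absurd (Finset.mem_univ i0) hmem
  have hs2 : (∑ m : Fin k, if (s * (m : ℕ)) % n = (s * k) % n then b m else 0) = 0 := by
    refine Finset.sum_eq_zero fun m _ => ?_
    refine if_neg fun hcon => ?_
    have hm := m.isLt
    have heq : (m : ℕ) = k := hmod _ hcon (by omega)
    omega
  rw [hc] at hkey
  simp only [hs1, hs2, sub_zero] at hkey
  exact hkey

/-- Monomial membership in the Gabidulin code. -/
lemma aux_mono_mem {k s : ℕ} (j : Fin k) :
    (fun x : L => x ^ q ^ (s * (j : ℕ))) ∈ genGabidulin (L := L) q k s := by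
  classical
  refine ⟨fun i => if i = j then 1 else 0, ?_⟩
  funext x
  rw [Finset.sum_congr rfl (fun i _ => by rw [ite_mul, zero_mul, one_mul]),
    Finset.sum_ite_eq' Finset.univ j (fun i => x ^ q ^ (s * (i : ℕ))),
    if_pos (Finset.mem_univ j)]

end Aux

/-- For the generalized Gabidulin code `G_{k,s}` with `gcd(s,n)=1` and
`2 ≤ k ≤ n−2`, both the middle nucleus and the right nucleus consist exactly of the scalar
multiplications `x ↦ dx`, `d ∈ F_{q^n}`; i.e. both are isomorphic to `F_{q^n}`. -/
theorem genGabidulin_nuclei {q n k s : ℕ} {L : Type*} [Field L] [Fintype L]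
    (hq : ∃ e : ℕ, 0 < e ∧ q = ringChar L ^ e)
    (hcard : Fintype.card L = q ^ n)
    (hs : Nat.gcd s n = 1) (hk2 : 2 ≤ k) (hkn : k ≤ n - 2) :
    ({φ : L → L | IsQEnd q φ ∧
        ∀ f ∈ genGabidulin (L := L) q k s, f ∘ φ ∈ genGabidulin (L := L) q k s}
      = {φ : L → L | ∃ d : L, φ = fun x => d * x}) ∧
    ({φ : L → L | IsQEnd q φ ∧
        ∀ f ∈ genGabidulin (L := L) q k s, φ ∘ f ∈ genGabidulin (L := L) q k s}
      = {φ : L → L | ∃ d : L, φ = fun x => d * x}) := by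
  classical
  obtain ⟨e, he, hqe⟩ := hq
  set p := ringChar L with hpdef
  haveI hcp : CharP L p := ringChar.charP L
  have hp : p.Prime := CharP.char_is_prime L p
  haveI : ExpChar L p := ExpChar.prime hp
  have hq2 : 2 ≤ q := by
    calc 2 ≤ p := hp.two_le
      _ = p ^ 1 := (pow_one p).symm
      _ ≤ p ^ e := Nat.pow_le_pow_right hp.pos he
      _ = q := hqe.symm
  have hkn' : k + 2 ≤ n := by
    rcases Nat.lt_or_ge n 2 with h2 | h2
    · omega
    · omega
  have hn : 0 < n := by omega
  have hq0 : ∀ m : ℕ, q ^ m ≠ 0 := fun m => pow_ne_zero m (by omega)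
  -- the zero index of `Fin k`
  have hk0 : 0 < k := by omega
  set z : Fin k := ⟨0, hk0⟩ with hz
  -- Frobenius: raising a sum to a `q`-power distributes
  have hfrob : ∀ (u : Fin k → L) (m : ℕ),
      (∑ i : Fin k, u i) ^ q ^ m = ∑ i : Fin k, u i ^ q ^ m := by
    intro u m
    rw [hqe, ← pow_mul]
    exact sum_pow_char_pow p (e * m) Finset.univ u
  -- scalar multiplications are in both nuclei
  have hscalar : ∀ d : L, IsQEnd q (fun x : L => d * x) := by
    intro d
    exact ⟨fun x y => by ring, fun c x _ => by ring⟩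
  -- the identity monomial recovers φ
  have hid : ∀ φ : L → L, (fun x : L => x ^ q ^ (s * ((z : Fin k) : ℕ))) ∘ φ = φ := by
    intro φ
    funext x
    simp [hz, Function.comp]
  -- Main step: if `φ = ∑ a i x^{q^{si}}` and each nonzero-index coefficient vanishes,
  -- then φ is scalar multiplication
  have hcollapse : ∀ a : Fin k → L, (∀ i : Fin k, i ≠ z → a i = 0) →
      (fun x : L => ∑ i : Fin k, a i * x ^ q ^ (s * (i : ℕ))) = fun x => a z * x := by
    intro a ha
    funext x
    rw [Finset.sum_eq_single z (fun i _ hne => by rw [ha i hne, zero_mul])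
      (fun hmem => absurd (Finset.mem_univ z) hmem)]
    simp [hz]
  constructor
  · -- middle nucleus
    ext φ
    simp only [Set.mem_setOf_eq]
    constructor
    · rintro ⟨hE, hM⟩
      have hφG : φ ∈ genGabidulin (L := L) q k s := by
        have := hM _ (aux_mono_mem (L := L) (q := q) z)
        rwa [hid φ] at this
      obtain ⟨a, hφa⟩ := hφG
      refine ⟨a z, ?_⟩
      rw [hφa]
      refine hcollapse a fun i0 hne => ?_
      have hi0 : 0 < (i0 : ℕ) := by
        rcases Nat.eq_zero_or_pos (i0 : ℕ) with h | h
        · exact absurd (Fin.ext (by simp [hz, h])) hne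
        · exact h
      have hjk : k - (i0 : ℕ) < k := by omega
      set jf : Fin k := ⟨k - (i0 : ℕ), hjk⟩ with hjf
      obtain ⟨b, hb⟩ := hM _ (aux_mono_mem (L := L) (q := q) jf)
      have hbx : ∀ x : L, ∑ i : Fin k,
          (a i ^ q ^ (s * (k - (i0 : ℕ)))) * x ^ q ^ (s * ((i : ℕ) + (k - (i0 : ℕ))))
            = ∑ m : Fin k, b m * x ^ q ^ (s * (m : ℕ)) := by
        intro x
        have h1 := congrFun hb x
        simp only [Function.comp_apply, hφa, hjf] at h1
        rw [hfrob (fun i => a i * x ^ q ^ (s * (i : ℕ))) (s * (k - (i0 : ℕ)))] at h1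
        rw [← h1]
        refine Finset.sum_congr rfl fun i _ => ?_
        rw [mul_pow, ← pow_mul, ← pow_add, ← Nat.mul_add]
      have := aux_extract hq2 hcard hs hkn'
        (fun i => a i ^ q ^ (s * (k - (i0 : ℕ)))) b i0 (k - (i0 : ℕ))
        (by omega) hbx
      exact pow_eq_zero_iff (hq0 _) |>.mp this
    · rintro ⟨d, rfl⟩
      refine ⟨hscalar d, ?_⟩
      rintro f ⟨a, rfl⟩
      refine ⟨fun i => a i * d ^ q ^ (s * (i : ℕ)), ?_⟩
      funext x
      simp only [Function.comp_apply]
      refine Finset.sum_congr rfl fun i _ => ?_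
      rw [mul_pow]; ring
  · -- right nucleus
    ext φ
    simp only [Set.mem_setOf_eq]
    constructor
    · rintro ⟨hE, hM⟩
      have hφG : φ ∈ genGabidulin (L := L) q k s := by
        have := hM _ (aux_mono_mem (L := L) (q := q) z)
        have h1 : φ ∘ (fun x : L => x ^ q ^ (s * ((z : Fin k) : ℕ))) = φ := by
          funext x; simp [hz, Function.comp]
        rwa [h1] at this
      obtain ⟨a, hφa⟩ := hφG
      refine ⟨a z, ?_⟩
      rw [hφa]
      refine hcollapse a fun i0 hne => ?_
      have hi0 : 0 < (i0 : ℕ) := by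
        rcases Nat.eq_zero_or_pos (i0 : ℕ) with h | h
        · exact absurd (Fin.ext (by simp [hz, h])) hne
        · exact h
      have hjk : k - (i0 : ℕ) < k := by omega
      set jf : Fin k := ⟨k - (i0 : ℕ), hjk⟩ with hjf
      obtain ⟨b, hb⟩ := hM _ (aux_mono_mem (L := L) (q := q) jf)
      have hbx : ∀ x : L, ∑ i : Fin k,
          a i * x ^ q ^ (s * ((i : ℕ) + (k - (i0 : ℕ))))
            = ∑ m : Fin k, b m * x ^ q ^ (s * (m : ℕ)) := by
        intro x
        have h1 := congrFun hb x
        simp only [Function.comp_apply, hφa, hjf] at h1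
        rw [← h1]
        refine Finset.sum_congr rfl fun i _ => ?_
        rw [← pow_mul, ← pow_add, ← Nat.mul_add, Nat.add_comm (k - (i0 : ℕ)) (i : ℕ)]
      have := aux_extract hq2 hcard hs hkn' a b i0 (k - (i0 : ℕ)) (by omega) hbx
      exact this
    · rintro ⟨d, rfl⟩
      refine ⟨hscalar d, ?_⟩
      rintro f ⟨a, rfl⟩
      refine ⟨fun i => d * a i, ?_⟩
      funext x
      simp only [Function.comp_apply]
      rw [Finset.mul_sum]
      exact Finset.sum_congr rfl fun i _ => by ring
end

section
/- Let D be a dimensional dual hyperoval of rank n over F_q with ambient space V = ⟨D⟩. Then the kernel of the associated translation structure, i.e., the set of additive endomorphisms μ of V with X^μ ⊆ X for all X ∈ D, is isomorphic to F_q (it consists exactly of the scalar maps λ·1_V, λ ∈ F_q). -/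
private lemma dho_geom_aux (q : ℕ) (hq : 1 ≤ q) :
    ∀ n : ℕ, (∑ i ∈ Finset.range n, q ^ i) * (q - 1) + 1 = q ^ n := by
  intro n
  induction n with
  | zero => simp
  | succ m ih =>
    rw [Finset.sum_range_succ, add_mul, pow_succ]
    have h1 : q ^ m * (q - 1) = q ^ m * q - q ^ m := by rw [Nat.mul_sub, Nat.mul_one]
    have h2 : q ^ m ≤ q ^ m * q := Nat.le_mul_of_pos_right _ hq
    omega

/-- Let `D` be a dimensional dual hyperoval of rank `n` over `F_q` whose
ambient space is `V`. Then the kernel of the associated translation structure (the additive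
endomorphisms of `V` stabilizing each member of `D`) consists exactly of the scalar maps
`λ • 1_V`, i.e. it is isomorphic to `F_q`. -/
theorem dho_kernel {n : ℕ} {F V : Type*} [Field F] [Fintype F]
    [AddCommGroup V] [Module F V]
    (hn : 2 ≤ n) (D : Set (Submodule F V))
    (hrank : ∀ X ∈ D, Module.finrank F X = n)
    (hD1 : ∀ X ∈ D, ∀ Y ∈ D, X ≠ Y → Module.finrank F ↥(X ⊓ Y) = 1)
    (hD2 : ∀ X ∈ D, ∀ Y ∈ D, ∀ Z ∈ D, X ≠ Y → Y ≠ Z → X ≠ Z → X ⊓ Y ⊓ Z = ⊥)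
    (hD3 : D.ncard = (∑ i ∈ Finset.range n, Fintype.card F ^ i) + 1)
    (hambient : (⨆ X ∈ D, X) = (⊤ : Submodule F V)) :
    ∀ μ : V →+ V, (∀ X ∈ D, ∀ v ∈ X, μ v ∈ X) ↔ ∃ lam : F, ∀ v, μ v = lam • v := by
  classical
  intro μ
  constructor
  · intro hμ
    set q := Fintype.card F with hqdef
    have hq2 : 2 ≤ q := Fintype.one_lt_card
    have hDne : D.ncard ≠ 0 := by rw [hD3]; omega
    have hDfin : D.Finite := Set.finite_of_ncard_ne_zero hDne
    -- cardinality of a submodule of known positive finrank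
    have hcard : ∀ (W : Submodule F V) (m : ℕ), 0 < m → Module.finrank F W = m →
        (W : Set V).Finite ∧ (W : Set V).ncard = q ^ m := by
      intro W m hm hWm
      have hfd : FiniteDimensional F W :=
        FiniteDimensional.of_finrank_pos (by rw [hWm]; exact hm)
      have hfin : Finite W := Module.finite_of_finite F
      have hfty : Fintype W := Fintype.ofFinite _
      have hfinset : (W : Set V).Finite := W.carrier.toFinite
      refine ⟨hfinset, ?_⟩
      rw [← Nat.card_coe_set_eq]
      have he : Nat.card ↥(W : Set V) = Nat.card W := rfl
      rw [he, Nat.card_eq_fintype_card, Module.card_eq_pow_finrank (K := F), hWm]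
    -- covering lemma: every nonzero point of X lies on another member
    have hcov : ∀ X ∈ D, ∀ v ∈ X, v ≠ 0 → ∃ Y ∈ D, Y ≠ X ∧ v ∈ Y := by
      intro X hX v hv hv0
      by_contra hcon
      push_neg at hcon
      obtain ⟨hfinX, hcardX⟩ := hcard X n (by omega) (hrank X hX)
      set E : Finset (Submodule F V) := hDfin.toFinset.erase X with hEdef
      have hEmem : ∀ Y, Y ∈ E → Y ∈ D ∧ Y ≠ X := by
        intro Y hY
        rw [hEdef, Finset.mem_erase, Set.Finite.mem_toFinset] at hY
        exact ⟨hY.2, hY.1⟩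
      have hEcard : E.card = ∑ i ∈ Finset.range n, q ^ i := by
        rw [hEdef, Finset.card_erase_of_mem (hDfin.mem_toFinset.mpr hX),
          ← Set.ncard_eq_toFinset_card D hDfin, hD3]
        omega
      -- the finset of nonzero points of X ⊓ Y
      have hlinefin : ∀ Y : Submodule F V, ((X ⊓ Y : Submodule F V) : Set V).Finite :=
        fun Y => hfinX.subset (fun x hx => hx.1)
      set f : Submodule F V → Finset V :=
        fun Y => ((hlinefin Y).toFinset).erase 0 with hfdef
      have hfmem : ∀ Y w, w ∈ f Y ↔ (w ≠ 0 ∧ w ∈ X ⊓ Y) := by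
        intro Y w
        rw [hfdef]
        simp [Set.Finite.mem_toFinset]
      have hfcard : ∀ Y ∈ E, (f Y).card = q - 1 := by
        intro Y hY
        obtain ⟨hY1, hY2⟩ := hEmem Y hY
        obtain ⟨hfinL, hcardL⟩ := hcard (X ⊓ Y) 1 (by omega) (hD1 X hX Y hY1 (Ne.symm hY2))
        rw [hfdef]
        rw [Finset.card_erase_of_mem (by simp [Set.Finite.mem_toFinset])]
        rw [Set.ncard_eq_toFinset_card _ hfinL] at hcardL
        rw [hcardL, pow_one]
      -- pairwise disjoint
      have hdisj : ∀ Y ∈ E, ∀ Z ∈ E, Y ≠ Z → Disjoint (f Y) (f Z) := by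
        intro Y hY Z hZ hYZ
        obtain ⟨hY1, hY2⟩ := hEmem Y hY
        obtain ⟨hZ1, hZ2⟩ := hEmem Z hZ
        rw [Finset.disjoint_left]
        intro w hwY hwZ
        rw [hfmem] at hwY hwZ
        have : w ∈ X ⊓ Y ⊓ Z := ⟨hwY.2, hwZ.2.2⟩
        rw [hD2 X hX Y hY1 Z hZ1 (Ne.symm hY2) hYZ (Ne.symm hZ2)] at this
        exact hwY.1 this
      have hbig : (E.biUnion f).card = q ^ n - 1 := by
        rw [Finset.card_biUnion hdisj]
        rw [Finset.sum_congr rfl hfcard, Finset.sum_const, hEcard, smul_eq_mul]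
        have := dho_geom_aux q (by omega) n
        omega
      -- the big union avoids 0 and v
      set T : Finset V := (hfinX.toFinset.erase 0).erase v with hTdef
      have hsub : E.biUnion f ⊆ T := by
        intro w hw
        rw [Finset.mem_biUnion] at hw
        obtain ⟨Y, hY, hwY⟩ := hw
        rw [hfmem] at hwY
        obtain ⟨hY1, hY2⟩ := hEmem Y hY
        rw [hTdef, Finset.mem_erase, Finset.mem_erase, Set.Finite.mem_toFinset]
        refine ⟨?_, hwY.1, hwY.2.1⟩
        intro hwv
        exact hcon Y hY1 hY2 (hwv ▸ hwY.2.2)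
      have hTcard : T.card = q ^ n - 2 := by
        rw [hTdef, Finset.card_erase_of_mem (by
          rw [Finset.mem_erase, Set.Finite.mem_toFinset]; exact ⟨hv0, hv⟩),
          Finset.card_erase_of_mem (by rw [Set.Finite.mem_toFinset]; exact X.zero_mem),
          ← Set.ncard_eq_toFinset_card _ hfinX, hcardX]
        omega
      have hle := Finset.card_le_card hsub
      have hqn : 2 ≤ q ^ n := le_trans hq2 (Nat.le_self_pow (by omega) q)
      omega
    -- every nonzero point of every member is scaled by μ
    have hscal : ∀ X ∈ D, ∀ v ∈ X, v ≠ 0 → ∃ c : F, μ v = c • v := by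
      intro X hX v hv hv0
      obtain ⟨Y, hY, hYX, hvY⟩ := hcov X hX v hv hv0
      have hfin : FiniteDimensional F ↥(X ⊓ Y) :=
        FiniteDimensional.of_finrank_eq_succ (hD1 X hX Y hY (Ne.symm hYX))
      have hspan : Submodule.span F {v} = X ⊓ Y := by
        apply Submodule.eq_of_le_of_finrank_eq
        · rw [Submodule.span_le, Set.singleton_subset_iff]
          exact ⟨hv, hvY⟩
        · rw [finrank_span_singleton hv0, hD1 X hX Y hY (Ne.symm hYX)]
      have hμv : μ v ∈ Submodule.span F {v} := by
        rw [hspan]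
        exact ⟨hμ X hX v hv, hμ Y hY v hvY⟩
      obtain ⟨c, hc⟩ := Submodule.mem_span_singleton.mp hμv
      exact ⟨c, hc.symm⟩
    -- if w is not in the span of v, the scalars agree
    have hstep : ∀ X ∈ D, ∀ v ∈ X, v ≠ 0 → ∀ w ∈ X, w ∉ Submodule.span F {v} →
        ∀ a b : F, μ v = a • v → μ w = b • w → a = b := by
      intro X hX v hv hv0 w hw hwspan a b ha hb
      have hvw0 : v + w ≠ 0 := by
        intro h
        apply hwspan
        have : w = (-1 : F) • v := by
          rw [neg_one_smul]
          linear_combination (norm := abel) h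
        rw [this]
        exact Submodule.smul_mem _ _ (Submodule.mem_span_singleton_self v)
      obtain ⟨c, hc⟩ := hscal X hX (v + w) (add_mem hv hw) hvw0
      rw [map_add, ha, hb, smul_add] at hc
      have h2 : (a - c) • v + (b - c) • w = 0 := by
        rw [sub_smul, sub_smul]
        linear_combination (norm := abel) hc
      have hbc : b = c := by
        by_contra hne
        apply hwspan
        have hbc0 : b - c ≠ 0 := sub_ne_zero.mpr hne
        refine Submodule.mem_span_singleton.mpr ⟨-(b - c)⁻¹ * (a - c), ?_⟩
        have : w = (b - c)⁻¹ • (-((a - c) • v)) := by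
          rw [eq_comm, inv_smul_eq_iff₀ hbc0]
          linear_combination (norm := abel) h2.symm
        rw [this, smul_neg, smul_smul]
        rw [neg_mul, neg_smul]
      have hac : a - c = 0 := by
        rw [hbc, sub_self, zero_smul, add_zero, smul_eq_zero] at h2
        exact h2.resolve_right hv0
      rw [sub_eq_zero] at hac
      exact hac.trans hbc.symm
    -- scalars agree for any two nonzero points of the same member
    have hsame : ∀ X ∈ D, ∀ v ∈ X, v ≠ 0 → ∀ w ∈ X, w ≠ 0 →
        ∀ a b : F, μ v = a • v → μ w = b • w → a = b := by
      intro X hX v hv hv0 w hw hw0 a b ha hb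
      by_cases hsp : w ∈ Submodule.span F {v}
      · -- find u ∈ X outside span of v
        have hXne : X ≠ Submodule.span F {v} := by
          intro h
          have h1 := hrank X hX
          rw [h, finrank_span_singleton hv0] at h1
          omega
        have hnle : ¬(X ≤ Submodule.span F {v}) := by
          intro hle
          exact hXne (le_antisymm hle (by
            rw [Submodule.span_le, Set.singleton_subset_iff]; exact hv))
        obtain ⟨u, hu, huns⟩ := SetLike.not_le_iff_exists.mp hnle
        have hu0 : u ≠ 0 := fun h => huns (h ▸ Submodule.zero_mem _)
        obtain ⟨cu, hcu⟩ := hscal X hX u hu hu0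
        have h1 : a = cu := hstep X hX v hv hv0 u hu huns a cu ha hcu
        have hspaneq : Submodule.span F {w} = Submodule.span F {v} := by
          obtain ⟨t, ht⟩ := Submodule.mem_span_singleton.mp hsp
          have ht0 : t ≠ 0 := by
            intro h; rw [h, zero_smul] at ht; exact hw0 ht.symm
          rw [← ht, Submodule.span_singleton_smul_eq (IsUnit.mk0 t ht0)]
        have h2 : b = cu := hstep X hX w hw hw0 u hu (hspaneq ▸ huns) b cu hb hcu
        rw [h1, h2]
      · exact (hstep X hX w hw hw0 v hv (by
          intro h
          exact hsp (by
            obtain ⟨t, ht⟩ := Submodule.mem_span_singleton.mp h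
            have ht0 : t ≠ 0 := by
              intro h'; rw [h', zero_smul] at ht; exact hv0 ht.symm
            exact Submodule.mem_span_singleton.mpr ⟨t⁻¹, by
              rw [← ht, smul_smul, inv_mul_cancel₀ ht0, one_smul]⟩)) b a hb ha).symm
    -- choose a base point and the global scalar
    have hDnon : D.Nonempty := Set.nonempty_of_ncard_ne_zero hDne
    obtain ⟨X0, hX0⟩ := hDnon
    have hX0bot : X0 ≠ ⊥ := by
      intro h
      have h1 := hrank X0 hX0
      rw [h, finrank_bot] at h1
      omega
    obtain ⟨v0, hv0, hv00⟩ := Submodule.exists_mem_ne_zero_of_ne_bot hX0bot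
    obtain ⟨lam, hlam0⟩ := hscal X0 hX0 v0 hv0 hv00
    refine ⟨lam, ?_⟩
    have hglob : ∀ X ∈ D, ∀ v ∈ X, μ v = lam • v := by
      intro X hX v hv
      rcases eq_or_ne v 0 with rfl | hv0'
      · simp
      obtain ⟨a, ha⟩ := hscal X hX v hv hv0'
      rcases eq_or_ne X X0 with rfl | hne
      · rw [ha, hsame X hX v hv hv0' v0 hv0 hv00 a lam ha hlam0]
      · have hbot : X ⊓ X0 ≠ ⊥ := by
          intro h
          have h1 := hD1 X hX X0 hX0 hne
          rw [h, finrank_bot] at h1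
          omega
        obtain ⟨z, hz, hz0⟩ := Submodule.exists_mem_ne_zero_of_ne_bot hbot
        obtain ⟨c, hc⟩ := hscal X hX z hz.1 hz0
        have h1 := hsame X hX v hv hv0' z hz.1 hz0 a c ha hc
        have h2 := hsame X0 hX0 z hz.2 hz0 v0 hv0 hv00 c lam hc hlam0
        rw [ha, h1, h2]
    intro v
    have hvtop : v ∈ ⨆ X : D, (X : Submodule F V) := by
      have : (⨆ X : D, (X : Submodule F V)) = ⨆ X ∈ D, X := by
        rw [iSup_subtype]
      rw [this, hambient]
      exact Submodule.mem_top
    obtain ⟨g, hg, hsum⟩ := (Submodule.mem_iSup_iff_exists_finsupp _ _).mp hvtop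
    rw [← hsum, Finsupp.sum, map_sum, Finset.smul_sum]
    exact Finset.sum_congr rfl fun i _ => hglob i i.2 (g i) (hg i)
  · rintro ⟨lam, hlam⟩
    intro X hX v hv
    rw [hlam]
    exact X.smul_mem lam hv
end
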